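/- arXiv:2412.01143 — 3 statements merged into one kernel-verified Lean document; each statement's English description precedes it below -/
import Mathlib

section
/- For every real α ≥ 1 there exists a constant C = C(α), depending only on α, such that for every n ≥ 2 and every undirected graph G = (V, E, w) on n vertices with positive edge weights whose minimum cut value λ = min_{∅⊂S⊂V} w_G(S, V∖S) is strictly positive, the number of unordered cuts {S, V∖S} (with ∅ ⊂ S ⊂ V) satisfying w_G(S, V∖S) ≤ α·λ is at most C·n^⌊2α⌋. -/
open Finset

section Components

variable {n : ℕ}

private def erel (F : Finset (Fin n × Fin n)) (u v : Fin n) : Prop :=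
  (u, v) ∈ F ∨ (v, u) ∈ F

private def conn (F : Finset (Fin n × Fin n)) (u v : Fin n) : Prop :=
  Relation.EqvGen (erel F) u v

private lemma conn_refl (F : Finset (Fin n × Fin n)) (u : Fin n) : conn F u u :=
  Relation.EqvGen.refl u

private lemma conn_symm {F : Finset (Fin n × Fin n)} {u v : Fin n} (h : conn F u v) :
    conn F v u := Relation.EqvGen.symm _ _ h

private lemma conn_trans {F : Finset (Fin n × Fin n)} {u v x : Fin n} (h : conn F u v)
    (h' : conn F v x) : conn F u x := Relation.EqvGen.trans _ _ _ h h'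

private lemma conn_of_mem {F : Finset (Fin n × Fin n)} {e : Fin n × Fin n} (he : e ∈ F) :
    conn F e.1 e.2 := Relation.EqvGen.rel _ _ (Or.inl he)

private lemma conn_mono {F F' : Finset (Fin n × Fin n)} (h : F ⊆ F') {u v : Fin n}
    (hc : conn F u v) : conn F' u v :=
  (Relation.EqvGen.mono (fun a b (hab : erel F a b) => (hab.imp (@h _) (@h _) : erel F' a b)) :
    Relation.EqvGen (erel F) ≤ Relation.EqvGen (erel F')) u v hc

private def cSetoid (F : Finset (Fin n × Fin n)) : Setoid (Fin n) :=
  ⟨conn F, Relation.EqvGen.is_equivalence _⟩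

private noncomputable def comp (F : Finset (Fin n × Fin n)) : ℕ :=
  Nat.card (Quotient (cSetoid F))

private lemma comp_pos (hn : 0 < n) (F : Finset (Fin n × Fin n)) : 0 < comp F := by
  haveI : Nonempty (Quotient (cSetoid (n := n) F)) := ⟨Quotient.mk _ ⟨0, hn⟩⟩
  haveI : Finite (Quotient (cSetoid (n := n) F)) := Quotient.finite _
  exact Nat.card_pos

private lemma comp_le_of_subset {F F' : Finset (Fin n × Fin n)} (h : F ⊆ F') :
    comp F' ≤ comp F := by
  apply Nat.card_le_card_of_surjective
    (Quotient.map (fun x => x) (fun a b hab => conn_mono h hab))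
  intro q
  obtain ⟨a, rfl⟩ := Quotient.exists_rep q
  exact ⟨Quotient.mk _ a, rfl⟩

/-- characterization of connectivity after inserting one edge -/
private lemma conn_insert_iff {F : Finset (Fin n × Fin n)} {e : Fin n × Fin n}
    {a b : Fin n} :
    conn (insert e F) a b ↔ conn F a b ∨ (conn F a e.1 ∧ conn F e.2 b) ∨
      (conn F a e.2 ∧ conn F e.1 b) := by
  constructor
  · intro h
    induction h with
    | rel x y hxy =>
      rcases hxy with hxy | hxy
      · rcases Finset.mem_insert.1 hxy with rfl | hxy
        · exact Or.inr (Or.inl ⟨conn_refl _ _, conn_refl _ _⟩)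
        · exact Or.inl (Relation.EqvGen.rel _ _ (Or.inl hxy))
      · rcases Finset.mem_insert.1 hxy with h' | hxy
        · subst h'
          exact Or.inr (Or.inr ⟨conn_refl _ _, conn_refl _ _⟩)
        · exact Or.inl (Relation.EqvGen.rel _ _ (Or.inr hxy))
    | refl x => exact Or.inl (conn_refl _ _)
    | symm x y _ ih =>
      rcases ih with h | ⟨h1, h2⟩ | ⟨h1, h2⟩
      · exact Or.inl (conn_symm h)
      · exact Or.inr (Or.inr ⟨conn_symm h2, conn_symm h1⟩)
      · exact Or.inr (Or.inl ⟨conn_symm h2, conn_symm h1⟩)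
    | trans x y z _ _ ih1 ih2 =>
      rcases ih1 with h | ⟨h1, h2⟩ | ⟨h1, h2⟩ <;>
        rcases ih2 with h' | ⟨h1', h2'⟩ | ⟨h1', h2'⟩
      · exact Or.inl (conn_trans h h')
      · exact Or.inr (Or.inl ⟨conn_trans h h1', h2'⟩)
      · exact Or.inr (Or.inr ⟨conn_trans h h1', h2'⟩)
      · exact Or.inr (Or.inl ⟨h1, conn_trans h2 h'⟩)
      · exact Or.inr (Or.inl ⟨h1, h2'⟩)
      · exact Or.inl (conn_trans h1 h2')
      · exact Or.inr (Or.inr ⟨h1, conn_trans h2 h'⟩)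
      · exact Or.inl (conn_trans h1 h2')
      · exact Or.inr (Or.inr ⟨h1, h2'⟩)
  · intro h
    have he1 : conn (insert e F) e.1 e.2 :=
      Relation.EqvGen.rel _ _ (Or.inl (Finset.mem_insert_self _ _))
    have hsub : F ⊆ insert e F := Finset.subset_insert _ _
    rcases h with h | ⟨h1, h2⟩ | ⟨h1, h2⟩
    · exact conn_mono hsub h
    · exact conn_trans (conn_mono hsub h1) (conn_trans he1 (conn_mono hsub h2))
    · exact conn_trans (conn_mono hsub h1) (conn_trans (conn_symm he1) (conn_mono hsub h2))

private lemma comp_insert_lt {F : Finset (Fin n × Fin n)} {e : Fin n × Fin n}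
    (h : ¬ conn F e.1 e.2) : comp (insert e F) < comp F := by
  classical
  have hfin1 : Finite (Quotient (cSetoid (n := n) F)) := Quotient.finite _
  have hfin2 : Finite (Quotient (cSetoid (n := n) (insert e F))) := Quotient.finite _
  let fq : Quotient (cSetoid F) → Quotient (cSetoid (insert e F)) :=
    Quotient.map (fun x => x) (fun a b hab => conn_mono (Finset.subset_insert _ _) hab)
  have hsurj : Function.Surjective fq := by
    intro q; obtain ⟨a, rfl⟩ := Quotient.exists_rep q; exact ⟨Quotient.mk _ a, rfl⟩
  have hninj : ¬ Function.Injective fq := by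
    intro hinj
    have : (Quotient.mk (cSetoid F) e.1) = Quotient.mk (cSetoid F) e.2 := by
      apply hinj
      exact Quotient.sound (Relation.EqvGen.rel _ _ (Or.inl (Finset.mem_insert_self _ _)))
    exact h (Quotient.exact this)
  have := Fintype.ofFinite (Quotient (cSetoid (n := n) F))
  have := Fintype.ofFinite (Quotient (cSetoid (n := n) (insert e F)))
  rw [comp, comp, Nat.card_eq_fintype_card, Nat.card_eq_fintype_card]
  exact Fintype.card_lt_of_surjective_not_injective fq hsurj hninj

private lemma comp_le_insert (F : Finset (Fin n × Fin n)) (e : Fin n × Fin n) :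
    comp F ≤ comp (insert e F) + 1 := by
  classical
  by_cases h : conn F e.1 e.2
  · -- same comp
    have : ∀ a b : Fin n, conn (insert e F) a b ↔ conn F a b := by
      intro a b
      rw [conn_insert_iff]
      constructor
      · rintro (h' | ⟨h1, h2⟩ | ⟨h1, h2⟩)
        · exact h'
        · exact conn_trans h1 (conn_trans h h2)
        · exact conn_trans h1 (conn_trans (conn_symm h) h2)
      · exact Or.inl
    have hcard : comp (insert e F) = comp F := by
      unfold comp
      exact Nat.card_congr (Quotient.congrRight this)
    omega
  · -- injection from Quotient F into Option (Quotient (insert e F))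
    have key : comp F ≤ comp (insert e F) + 1 := by
      have hfin2 : Finite (Quotient (cSetoid (n := n) (insert e F))) := Quotient.finite _
      have hinj : ∃ g : Quotient (cSetoid (n := n) F) →
          Option (Quotient (cSetoid (n := n) (insert e F))), Function.Injective g := by
        refine ⟨fun q => Quotient.liftOn q
          (fun a => if conn F a e.2 then none else some (Quotient.mk _ a)) ?_, ?_⟩
        · intro a b hab
          by_cases ha : conn F a e.2
          · have hb : conn F b e.2 := conn_trans (conn_symm hab) ha
            simp [ha, hb]
          · have hb : ¬ conn F b e.2 := fun hb => ha (conn_trans hab hb)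
            simp only [ha, hb, if_false]
            exact congrArg some (Quotient.sound (conn_mono (Finset.subset_insert _ _) hab))
        · intro q1 q2
          obtain ⟨a, rfl⟩ := Quotient.exists_rep q1
          obtain ⟨b, rfl⟩ := Quotient.exists_rep q2
          by_cases ha : conn F a e.2 <;> by_cases hb : conn F b e.2 <;>
            simp only [Quotient.liftOn_mk, ha, hb, if_true, if_false]
          · intro _; exact Quotient.sound (conn_trans ha (conn_symm hb))
          · intro hcon; exact absurd hcon (by simp)
          · intro hcon; exact absurd hcon (by simp)
          · intro hsome
            have h12 : conn (insert e F) a b := Quotient.exact (Option.some_injective _ hsome)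
            rcases conn_insert_iff.1 h12 with h' | ⟨h1, h2⟩ | ⟨h1, h2⟩
            · exact Quotient.sound h'
            · exact absurd (conn_symm h2) hb
            · exact absurd h1 ha
      obtain ⟨g, hg⟩ := hinj
      calc comp F ≤ Nat.card (Option (Quotient (cSetoid (n := n) (insert e F)))) :=
            Nat.card_le_card_of_injective g hg
        _ = comp (insert e F) + 1 := by
            have := Fintype.ofFinite (Quotient (cSetoid (n := n) (insert e F)))
            simp [Nat.card_eq_fintype_card, comp]
    exact key


private lemma comp_union_eq {F X : Finset (Fin n × Fin n)}
    (h : ∀ e ∈ X, conn F e.1 e.2) : comp (F ∪ X) = comp F := by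
  have hiff : ∀ a b : Fin n, conn (F ∪ X) a b ↔ conn F a b := by
    intro a b
    constructor
    · intro hc
      induction hc with
      | rel x y hxy =>
        rcases hxy with hxy | hxy <;> rcases Finset.mem_union.1 hxy with h' | h'
        · exact conn_of_mem h'
        · exact h _ h'
        · exact conn_symm (conn_of_mem h')
        · exact conn_symm (h _ h')
      | refl x => exact conn_refl _ _
      | symm x y _ ih => exact conn_symm ih
      | trans x y z _ _ ih1 ih2 => exact conn_trans ih1 ih2
    · exact fun hc => conn_mono Finset.subset_union_left hc
  exact Nat.card_congr (Quotient.congrRight hiff)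

private lemma comp_empty : comp (∅ : Finset (Fin n × Fin n)) = n := by
  have hiff : ∀ a b : Fin n, conn (∅ : Finset (Fin n × Fin n)) a b ↔ a = b := by
    intro a b
    constructor
    · intro hc
      induction hc with
      | rel x y hxy => simp [erel] at hxy
      | refl x => rfl
      | symm x y _ ih => exact ih.symm
      | trans x y z _ _ ih1 ih2 => exact ih1.trans ih2
    · rintro rfl; exact conn_refl _ _
  have : Nat.card (Quotient (cSetoid (∅ : Finset (Fin n × Fin n)))) = Nat.card (Fin n) := by
    apply Nat.card_congr
    refine ⟨fun q => Quotient.liftOn q id ?_, fun a => Quotient.mk _ a, ?_, ?_⟩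
    · intro a b hab; exact (hiff a b).1 hab
    · intro q; obtain ⟨a, rfl⟩ := Quotient.exists_rep q; rfl
    · intro a; rfl
  simpa [comp] using this

private lemma comp_le_union_add_card (X Y : Finset (Fin n × Fin n)) :
    comp X ≤ comp (X ∪ Y) + Y.card := by
  classical
  induction Y using Finset.induction_on generalizing X with
  | empty => simp
  | @insert e Y he ih =>
    calc comp X ≤ comp (X ∪ Y) + Y.card := ih X
      _ ≤ (comp (insert e (X ∪ Y)) + 1) + Y.card := by
          have := comp_le_insert (X ∪ Y) e
          omega
      _ = comp (X ∪ insert e Y) + (insert e Y).card := by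
          rw [Finset.union_insert, Finset.card_insert_of_notMem he]
          omega

private noncomputable def classOf (F : Finset (Fin n × Fin n)) (v : Fin n) : Finset (Fin n) :=
  @Finset.filter _ (fun u => conn F v u) (Classical.decPred _) Finset.univ

private lemma mem_classOf_self (F : Finset (Fin n × Fin n)) (v : Fin n) : v ∈ classOf F v := by
  classical
  simp [classOf, conn_refl]

private lemma mem_classOf_iff {F : Finset (Fin n × Fin n)} {v u : Fin n} :
    u ∈ classOf F v ↔ conn F v u := by
  classical
  simp [classOf]

private lemma classOf_eq_iff {F : Finset (Fin n × Fin n)} {v u : Fin n} :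
    classOf F v = classOf F u ↔ conn F v u := by
  classical
  constructor
  · intro h
    have := mem_classOf_self F u
    rw [← h] at this
    exact mem_classOf_iff.1 this
  · intro h
    ext x
    simp only [mem_classOf_iff]
    exact ⟨fun h' => conn_trans (conn_symm h) h', fun h' => conn_trans h h'⟩

private lemma comp_eq_card_image (F : Finset (Fin n × Fin n)) :
    comp F = (Finset.univ.image (fun v => classOf F v)).card := by
  classical
  let g : Quotient (cSetoid (n := n) F) → Finset (Fin n) :=
    Quotient.lift (classOf F) (fun a b hab => classOf_eq_iff.2 hab)
  have hginj : Function.Injective g := by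
    intro q1 q2
    obtain ⟨a, rfl⟩ := Quotient.exists_rep q1
    obtain ⟨b, rfl⟩ := Quotient.exists_rep q2
    intro h
    exact Quotient.sound (classOf_eq_iff.1 h)
  have h1 : comp F = Nat.card (Set.range g) := by
    rw [comp, Nat.card_range_of_injective hginj]
  have h2 : Set.range g = ↑(Finset.univ.image (fun v => classOf F v)) := by
    ext b
    simp only [Set.mem_range, Finset.coe_image, Set.mem_image, Finset.mem_coe]
    constructor
    · rintro ⟨q, rfl⟩
      obtain ⟨a, rfl⟩ := Quotient.exists_rep q
      exact ⟨a, by simp, rfl⟩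
    · rintro ⟨a, -, rfl⟩
      exact ⟨Quotient.mk _ a, rfl⟩
  rw [h1, h2, Nat.card_coe_set_eq, Set.ncard_coe_finset]

private lemma comp_eq_one_of_all_conn {F : Finset (Fin n × Fin n)} (hn : 0 < n)
    (h : ∀ u v : Fin n, conn F u v) : comp F = 1 := by
  haveI : Nonempty (Quotient (cSetoid (n := n) F)) := ⟨Quotient.mk _ ⟨0, hn⟩⟩
  haveI : Finite (Quotient (cSetoid (n := n) F)) := Quotient.finite _
  haveI : Subsingleton (Quotient (cSetoid (n := n) F)) := by
    constructor
    intro q1 q2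
    obtain ⟨a, rfl⟩ := Quotient.exists_rep q1
    obtain ⟨b, rfl⟩ := Quotient.exists_rep q2
    exact Quotient.sound (h a b)
  exact Nat.card_eq_one_iff_unique.2 ⟨inferInstance, inferInstance⟩

private lemma exists_not_conn_of_two_le_comp {F : Finset (Fin n × Fin n)} (hn : 0 < n)
    (h : 2 ≤ comp F) : ∃ u v : Fin n, ¬ conn F u v := by
  by_contra hcon
  push_neg at hcon
  have := comp_eq_one_of_all_conn hn hcon
  omega

private lemma classOf_ne_univ {F : Finset (Fin n × Fin n)} (hn : 0 < n)
    (h : 2 ≤ comp F) (v : Fin n) : classOf F v ≠ Finset.univ := by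
  intro hcl
  obtain ⟨a, b, hab⟩ := exists_not_conn_of_two_le_comp hn h
  have ha : conn F v a := mem_classOf_iff.1 (hcl ▸ Finset.mem_univ a)
  have hb : conn F v b := mem_classOf_iff.1 (hcl ▸ Finset.mem_univ b)
  exact hab (conn_trans (conn_symm ha) hb)
end Components
attribute [local instance] Classical.propDecidable

section LayerCake

variable {ι : Type*}

private lemma layercake_aux (N : ℕ) :
    ∀ (A B : Finset ι) (b c : ι → ℝ), (∀ i ∈ B, 0 ≤ b i) → (∀ i, 0 ≤ c i) →
    (∀ t : ℝ, 0 ≤ t → (((A.filter (fun i => t < c i)).card : ℝ) ≤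
      ∑ i ∈ B.filter (fun i => t < c i), b i)) →
    (((A ∪ B).filter (fun i => 0 < c i)).image c).card ≤ N →
    ∑ i ∈ A, c i ≤ ∑ i ∈ B, b i * c i := by
  induction N with
  | zero =>
    intro A B b c hb hc h hN
    have hempty : ((A ∪ B).filter (fun i => 0 < c i)) = ∅ := by
      by_contra hne
      obtain ⟨i, hi⟩ := Finset.nonempty_iff_ne_empty.2 hne
      have : c i ∈ ((A ∪ B).filter (fun i => 0 < c i)).image c :=
        Finset.mem_image_of_mem _ hi
      rw [Finset.card_eq_zero.1 (Nat.le_zero.1 hN)] at this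
      simp at this
    have hzero : ∀ i ∈ A ∪ B, c i = 0 := by
      intro i hi
      by_contra hne
      have : 0 < c i := lt_of_le_of_ne (hc i) (Ne.symm hne)
      have : i ∈ (A ∪ B).filter (fun i => 0 < c i) := Finset.mem_filter.2 ⟨hi, this⟩
      rw [hempty] at this; simp at this
    have h1 : ∑ i ∈ A, c i = 0 :=
      Finset.sum_eq_zero (fun i hi => hzero i (Finset.mem_union_left _ hi))
    have h2 : ∑ i ∈ B, b i * c i = 0 :=
      Finset.sum_eq_zero (fun i hi => by rw [hzero i (Finset.mem_union_right _ hi), mul_zero])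
    rw [h1, h2]
  | succ N ih =>
    intro A B b c hb hc h hN
    set s := (A ∪ B).filter (fun i => 0 < c i) with hs
    by_cases hse : s = ∅
    · -- same as base case
      have hzero : ∀ i ∈ A ∪ B, c i = 0 := by
        intro i hi
        by_contra hne
        have h0 : 0 < c i := lt_of_le_of_ne (hc i) (Ne.symm hne)
        have : i ∈ s := Finset.mem_filter.2 ⟨hi, h0⟩
        rw [hse] at this; simp at this
      have h1 : ∑ i ∈ A, c i = 0 :=
        Finset.sum_eq_zero (fun i hi => hzero i (Finset.mem_union_left _ hi))
      have h2 : ∑ i ∈ B, b i * c i = 0 :=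
        Finset.sum_eq_zero (fun i hi => by rw [hzero i (Finset.mem_union_right _ hi), mul_zero])
      rw [h1, h2]
    · have hsne : s.Nonempty := Finset.nonempty_iff_ne_empty.2 hse
      have himgne : (s.image c).Nonempty := hsne.image c
      set δ := (s.image c).min' himgne with hδ
      have hδmem : δ ∈ s.image c := Finset.min'_mem _ _
      have hδpos : 0 < δ := by
        obtain ⟨i, hi, hci⟩ := Finset.mem_image.1 hδmem
        rw [← hci]
        exact (Finset.mem_filter.1 hi).2
      have hδle : ∀ i ∈ s, δ ≤ c i := by
        intro i hi
        exact Finset.min'_le _ _ (Finset.mem_image_of_mem _ hi)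
      set c' := fun i => c i - min (c i) δ with hc'
      have hc'nonneg : ∀ i, 0 ≤ c' i := fun i => by
        simp only [hc', sub_nonneg]; exact min_le_left _ _
      -- membership iff for filters over subsets of A ∪ B
      have hfilt : ∀ (X : Finset ι), X ⊆ A ∪ B → ∀ t : ℝ, 0 ≤ t →
          X.filter (fun i => t < c' i) = X.filter (fun i => t + δ < c i) := by
        intro X hX t ht
        apply Finset.filter_congr
        intro i hi
        by_cases hpos : 0 < c i
        · have : δ ≤ c i := hδle i (Finset.mem_filter.2 ⟨hX hi, hpos⟩)
          have : c' i = c i - δ := by simp [hc', min_eq_right this]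
          rw [this]
          constructor
          · intro hh; linarith
          · intro hh; linarith
        · have h0 : c i = 0 := le_antisymm (not_lt.1 hpos) (hc i)
          have : c' i = 0 := by simp [hc', h0, le_of_lt hδpos]
          rw [this, h0]
          constructor
          · intro hh; linarith
          · intro hh; linarith
      -- hypothesis for c'
      have h' : ∀ t : ℝ, 0 ≤ t → (((A.filter (fun i => t < c' i)).card : ℝ) ≤
          ∑ i ∈ B.filter (fun i => t < c' i), b i) := by
        intro t ht
        rw [hfilt A Finset.subset_union_left t ht, hfilt B Finset.subset_union_right t ht]
        exact h (t + δ) (by linarith)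
      -- image card decrease
      have hN' : (((A ∪ B).filter (fun i => 0 < c' i)).image c').card ≤ N := by
        have hsub : ((A ∪ B).filter (fun i => 0 < c' i)).image c' ⊆
            ((s.image c).erase δ).image (fun x => x - δ) := by
          intro x hx
          obtain ⟨i, hi, rfl⟩ := Finset.mem_image.1 hx
          have hi' := Finset.mem_filter.1 hi
          have hpos : 0 < c i := by
            by_contra hpos
            have h0 : c i = 0 := le_antisymm (not_lt.1 hpos) (hc i)
            have : c' i = 0 := by simp [hc', h0, le_of_lt hδpos]
            rw [this] at hi'
            exact lt_irrefl 0 hi'.2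
          have his : i ∈ s := Finset.mem_filter.2 ⟨hi'.1, hpos⟩
          have hge : δ ≤ c i := hδle i his
          have hc'i : c' i = c i - δ := by simp [hc', min_eq_right hge]
          have hgt : δ < c i := by
            rcases lt_or_eq_of_le hge with h1 | h1
            · exact h1
            · exfalso; rw [hc'i, ← h1] at hi'; simp at hi'
          apply Finset.mem_image.2
          refine ⟨c i, Finset.mem_erase.2 ⟨ne_of_gt hgt, Finset.mem_image_of_mem _ his⟩, ?_⟩
          rw [hc'i]
        calc (((A ∪ B).filter (fun i => 0 < c' i)).image c').card
            ≤ (((s.image c).erase δ).image (fun x => x - δ)).card := Finset.card_le_card hsub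
          _ ≤ ((s.image c).erase δ).card := Finset.card_image_le
          _ = (s.image c).card - 1 := Finset.card_erase_of_mem hδmem
          _ ≤ N := by omega
      have IH := ih A B b c' hb hc'nonneg h' hN'
      -- final assembly
      have hsplitA : ∑ i ∈ A, c i = ∑ i ∈ A, c' i + δ * ((A.filter (fun i => 0 < c i)).card : ℝ) := by
        have : ∀ i ∈ A, c i = c' i + min (c i) δ := by intro i _; simp [hc']
        rw [Finset.sum_congr rfl this, Finset.sum_add_distrib]
        congr 1
        have : ∑ i ∈ A, min (c i) δ = ∑ i ∈ A.filter (fun i => 0 < c i), min (c i) δ := by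
          symm
          apply Finset.sum_filter_of_ne
          intro i _ hne
          by_contra hpos
          have h0 : c i = 0 := le_antisymm (not_lt.1 hpos) (hc i)
          exact hne (by simp [h0, le_of_lt hδpos])
        rw [this]
        have : ∀ i ∈ A.filter (fun i => 0 < c i), min (c i) δ = δ := by
          intro i hi
          have hi' := Finset.mem_filter.1 hi
          exact min_eq_right (hδle i (Finset.mem_filter.2
            ⟨Finset.mem_union_left _ hi'.1, hi'.2⟩))
        rw [Finset.sum_congr rfl this, Finset.sum_const, nsmul_eq_mul, mul_comm]
      have hsplitB : ∑ i ∈ B, b i * c i =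
          ∑ i ∈ B, b i * c' i + δ * ∑ i ∈ B.filter (fun i => 0 < c i), b i := by
        have : ∀ i ∈ B, b i * c i = b i * c' i + b i * min (c i) δ := by
          intro i _; simp [hc']; ring
        rw [Finset.sum_congr rfl this, Finset.sum_add_distrib]
        congr 1
        have h1 : ∑ i ∈ B, b i * min (c i) δ =
            ∑ i ∈ B.filter (fun i => 0 < c i), b i * min (c i) δ := by
          symm
          apply Finset.sum_filter_of_ne
          intro i _ hne
          by_contra hpos
          have h0 : c i = 0 := le_antisymm (not_lt.1 hpos) (hc i)
          exact hne (by simp [h0, le_of_lt hδpos])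
        rw [h1]
        have : ∀ i ∈ B.filter (fun i => 0 < c i), b i * min (c i) δ = δ * b i := by
          intro i hi
          have hi' := Finset.mem_filter.1 hi
          rw [min_eq_right (hδle i (Finset.mem_filter.2
            ⟨Finset.mem_union_right _ hi'.1, hi'.2⟩))]
          ring
        rw [Finset.sum_congr rfl this, ← Finset.mul_sum]
      have hmark : ((A.filter (fun i => 0 < c i)).card : ℝ) ≤
          ∑ i ∈ B.filter (fun i => 0 < c i), b i := h 0 le_rfl
      rw [hsplitA, hsplitB]
      have : δ * ((A.filter (fun i => 0 < c i)).card : ℝ) ≤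
          δ * ∑ i ∈ B.filter (fun i => 0 < c i), b i :=
        mul_le_mul_of_nonneg_left hmark (le_of_lt hδpos)
      linarith

private lemma layercake (A B : Finset ι) (b c : ι → ℝ) (hb : ∀ i ∈ B, 0 ≤ b i)
    (hc : ∀ i, 0 ≤ c i)
    (h : ∀ t : ℝ, 0 ≤ t → (((A.filter (fun i => t < c i)).card : ℝ) ≤
      ∑ i ∈ B.filter (fun i => t < c i), b i)) :
    ∑ i ∈ A, c i ≤ ∑ i ∈ B, b i * c i :=
  layercake_aux (((A ∪ B).filter (fun i => 0 < c i)).image c).card A B b c hb hc h le_rfl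

end LayerCake

section Weighted

open Finset

variable {n : ℕ} (w : Fin n → Fin n → ℝ)

private noncomputable def E0 : Finset (Fin n × Fin n) :=
  Finset.univ.filter (fun e => e.1 < e.2 ∧ 0 < w e.1 e.2)

private lemma mem_E0 {e : Fin n × Fin n} : e ∈ E0 w ↔ e.1 < e.2 ∧ 0 < w e.1 e.2 := by
  simp [E0]

variable {lam : ℝ} (hw : ∀ u v, w u v = w v u) (h0 : ∀ u v, 0 ≤ w u v)
  (hlam : 0 < lam)
  (hlb : ∀ S : Finset (Fin n), S.Nonempty → S ≠ Finset.univ →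
    lam ≤ ∑ u ∈ S, ∑ v ∈ Sᶜ, w u v)

include hw h0

/-- symmetrization: the double sum over non-connected ordered pairs equals twice the
sum over non-connected positive edges -/
private lemma double_sum_eq (X : Finset (Fin n × Fin n)) :
    ∑ u : Fin n, ∑ v ∈ Finset.univ.filter (fun v => ¬ conn X u v), w u v =
      2 * ∑ e ∈ (E0 w).filter (fun e => ¬ conn X e.1 e.2), w e.1 e.2 := by
  classical
  have hdrop : ∀ u : Fin n,
      ∑ v ∈ Finset.univ.filter (fun v => ¬ conn X u v), w u v =
      ∑ v ∈ Finset.univ.filter (fun v => ¬ conn X u v ∧ 0 < w u v), w u v := by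
    intro u
    rw [← Finset.filter_filter]
    symm
    apply Finset.sum_filter_of_ne
    intro v _ hne
    exact lt_of_le_of_ne (h0 u v) (Ne.symm hne)
  rw [Finset.sum_congr rfl (fun u _ => hdrop u)]
  have hsplit : ∀ u : Fin n,
      Finset.univ.filter (fun v => ¬ conn X u v ∧ 0 < w u v) =
        (Finset.univ.filter (fun v => (¬ conn X u v ∧ 0 < w u v) ∧ u < v)) ∪
        (Finset.univ.filter (fun v => (¬ conn X u v ∧ 0 < w u v) ∧ v < u)) := by
    intro u
    rw [← Finset.filter_or]
    apply Finset.filter_congr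
    intro v _
    constructor
    · intro hv
      rcases lt_trichotomy u v with h | h | h
      · exact Or.inl ⟨hv, h⟩
      · exact absurd (h ▸ conn_refl X u) hv.1
      · exact Or.inr ⟨hv, h⟩
    · rintro (⟨hv, -⟩ | ⟨hv, -⟩) <;> exact hv
  have hdisj : ∀ u : Fin n,
      Disjoint (Finset.univ.filter (fun v => (¬ conn X u v ∧ 0 < w u v) ∧ u < v))
        (Finset.univ.filter (fun v => (¬ conn X u v ∧ 0 < w u v) ∧ v < u)) := by
    intro u
    rw [Finset.disjoint_filter]
    rintro v - ⟨-, h1⟩ ⟨-, h2⟩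
    exact absurd (h1.trans h2) (lt_irrefl _)
  rw [Finset.sum_congr rfl (fun u _ => by rw [hsplit u, Finset.sum_union (hdisj u)])]
  rw [Finset.sum_add_distrib]
  have key1 : ∑ u : Fin n, ∑ v ∈ Finset.univ.filter
        (fun v => (¬ conn X u v ∧ 0 < w u v) ∧ u < v), w u v =
      ∑ e ∈ (E0 w).filter (fun e => ¬ conn X e.1 e.2), w e.1 e.2 := by
    rw [Finset.sum_sigma']
    apply Finset.sum_bij (fun (p : Σ _ : Fin n, Fin n) _ => (p.1, p.2))
    · rintro ⟨u, v⟩ hp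
      simp only [Finset.mem_sigma, Finset.mem_filter, Finset.mem_univ, true_and] at hp
      exact Finset.mem_filter.2 ⟨mem_E0 w |>.2 ⟨hp.2, hp.1.2⟩, hp.1.1⟩
    · rintro ⟨u, v⟩ hp ⟨u', v'⟩ hp' h
      simp only [Prod.mk.injEq] at h
      simp [Sigma.ext_iff, h.1, h.2]
    · intro e he
      have he' := Finset.mem_filter.1 he
      have he'' := (mem_E0 w).1 he'.1
      refine ⟨⟨e.1, e.2⟩, ?_, rfl⟩
      simp only [Finset.mem_sigma, Finset.mem_filter, Finset.mem_univ, true_and]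
      exact ⟨⟨he'.2, he''.2⟩, he''.1⟩
    · intros; rfl
  have key2 : ∑ u : Fin n, ∑ v ∈ Finset.univ.filter
        (fun v => (¬ conn X u v ∧ 0 < w u v) ∧ v < u), w u v =
      ∑ e ∈ (E0 w).filter (fun e => ¬ conn X e.1 e.2), w e.1 e.2 := by
    rw [Finset.sum_sigma']
    apply Finset.sum_bij (fun (p : Σ _ : Fin n, Fin n) _ => (p.2, p.1))
    · rintro ⟨u, v⟩ hp
      simp only [Finset.mem_sigma, Finset.mem_filter, Finset.mem_univ, true_and] at hp
      refine Finset.mem_filter.2 ⟨mem_E0 w |>.2 ⟨hp.2, ?_⟩, ?_⟩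
      · rw [hw v u]; exact hp.1.2
      · intro hcon; exact hp.1.1 (conn_symm hcon)
    · rintro ⟨u, v⟩ hp ⟨u', v'⟩ hp' h
      simp only [Prod.mk.injEq] at h
      simp [Sigma.ext_iff, h.1, h.2]
    · intro e he
      have he' := Finset.mem_filter.1 he
      have he'' := (mem_E0 w).1 he'.1
      refine ⟨⟨e.2, e.1⟩, ?_, rfl⟩
      simp only [Finset.mem_sigma, Finset.mem_filter, Finset.mem_univ, true_and]
      refine ⟨⟨fun hcon => he'.2 (conn_symm hcon), ?_⟩, he''.1⟩
      rw [hw e.2 e.1]; exact he''.2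
    · rintro ⟨u, v⟩ hp
      exact hw u v
  rw [key1, key2]
  ring

include hlb

/-- the class-cut lower bound: `comp X * lam ≤ 2 * (weight of edges between classes)` -/
private lemma classes_bound (hn : 2 ≤ n) (X : Finset (Fin n × Fin n)) (h2 : 2 ≤ comp X) :
    (comp X : ℝ) * lam ≤ 2 * ∑ e ∈ (E0 w).filter (fun e => ¬ conn X e.1 e.2), w e.1 e.2 := by
  classical
  have hn' : 0 < n := by omega
  set P := Finset.univ.image (fun v => classOf X v) with hP
  have hcardP : P.card = comp X := (comp_eq_card_image X).symm
  have step1 : (comp X : ℝ) * lam ≤ ∑ A ∈ P, ∑ u ∈ A, ∑ v ∈ Aᶜ, w u v := by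
    rw [← hcardP]
    have hub : ∀ A ∈ P, lam ≤ ∑ u ∈ A, ∑ v ∈ Aᶜ, w u v := by
      intro A hA
      obtain ⟨v, -, rfl⟩ := Finset.mem_image.1 hA
      exact hlb _ ⟨v, mem_classOf_self _ _⟩ (classOf_ne_univ hn' h2 v)
    calc (P.card : ℝ) * lam = ∑ _A ∈ P, lam := by rw [Finset.sum_const, nsmul_eq_mul]
      _ ≤ _ := Finset.sum_le_sum hub
  have step2 : ∑ A ∈ P, ∑ u ∈ A, ∑ v ∈ Aᶜ, w u v =
      ∑ u : Fin n, ∑ v ∈ (classOf X u)ᶜ, w u v := by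
    rw [← Finset.sum_fiberwise_of_maps_to (s := Finset.univ) (t := P)
      (g := fun v => classOf X v)
      (fun u (_ : u ∈ Finset.univ) => Finset.mem_image_of_mem _ (Finset.mem_univ u))
      (fun u => ∑ v ∈ (classOf X u)ᶜ, w u v)]
    apply Finset.sum_congr rfl
    intro A hA
    obtain ⟨v0, -, rfl⟩ := Finset.mem_image.1 hA
    have hset : Finset.univ.filter (fun u => classOf X u = classOf X v0) = classOf X v0 := by
      ext u
      simp only [Finset.mem_filter, Finset.mem_univ, true_and, mem_classOf_iff]
      constructor
      · intro h; exact classOf_eq_iff.1 h.symm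
      · intro h; exact (classOf_eq_iff.2 (conn_symm h))
    rw [hset]
    apply Finset.sum_congr rfl
    intro u hu
    have : classOf X u = classOf X v0 := classOf_eq_iff.2 (conn_symm (mem_classOf_iff.1 hu))
    rw [this]
  have step3 : ∑ u : Fin n, ∑ v ∈ (classOf X u)ᶜ, w u v =
      ∑ u : Fin n, ∑ v ∈ Finset.univ.filter (fun v => ¬ conn X u v), w u v := by
    apply Finset.sum_congr rfl
    intro u _
    congr 1
    ext v
    simp [Finset.mem_compl, mem_classOf_iff]
  calc (comp X : ℝ) * lam ≤ _ := step1
    _ = _ := by rw [step2, step3, double_sum_eq w hw h0 X]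

include hlam in
private lemma exists_crossing (hn : 2 ≤ n) (F : Finset (Fin n × Fin n))
    (h2 : 2 ≤ comp F) :
    ((E0 w).filter (fun e => ¬ conn F e.1 e.2)).Nonempty := by
  classical
  have hn' : 0 < n := by omega
  set A := classOf F ⟨0, hn'⟩ with hA
  have hlamA : lam ≤ ∑ u ∈ A, ∑ v ∈ Aᶜ, w u v :=
    hlb _ ⟨_, mem_classOf_self _ _⟩ (classOf_ne_univ hn' h2 _)
  have hsumne : ∑ u ∈ A, ∑ v ∈ Aᶜ, w u v ≠ 0 := by linarith
  obtain ⟨u, huA, hune⟩ := Finset.exists_ne_zero_of_sum_ne_zero hsumne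
  obtain ⟨v, hvA, hvne⟩ := Finset.exists_ne_zero_of_sum_ne_zero hune
  have hwpos : 0 < w u v := lt_of_le_of_ne (h0 u v) (Ne.symm hvne)
  have hnconn : ¬ conn F u v := by
    intro hcon
    have h1 : conn F (⟨0, hn'⟩ : Fin n) u := mem_classOf_iff.1 huA
    have h2' : ¬ conn F (⟨0, hn'⟩ : Fin n) v := by
      intro hc; exact (Finset.mem_compl.1 hvA) (mem_classOf_iff.2 hc)
    exact h2' (conn_trans h1 hcon)
  have hne : u ≠ v := fun h => hnconn (h ▸ conn_refl F u)
  rcases lt_or_gt_of_ne hne with hlt | hgt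
  · exact ⟨(u, v), Finset.mem_filter.2 ⟨(mem_E0 w).2 ⟨hlt, hwpos⟩, hnconn⟩⟩
  · refine ⟨(v, u), Finset.mem_filter.2 ⟨(mem_E0 w).2 ⟨hgt, ?_⟩, ?_⟩⟩
    · rw [hw v u]; exact hwpos
    · intro hcon; exact hnconn (conn_symm hcon)

include hlam in
private lemma greedy (hn : 2 ≤ n) (c : Fin n × Fin n → ℝ) :
    ∀ (m : ℕ) (F : Finset (Fin n × Fin n)), comp F ≤ m → F ⊆ E0 w →
    ∃ T : Finset (Fin n × Fin n), F ⊆ T ∧ T ⊆ E0 w ∧ comp T = 1 ∧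
      T.card + 1 ≤ F.card + comp F ∧
      ∀ t : ℝ, 0 ≤ t → ((T \ F).filter (fun e => t < c e)).card + 1 ≤
        min (comp F) (comp (F ∪ (E0 w).filter (fun e => c e ≤ t))) := by
  classical
  intro m
  induction m with
  | zero =>
    intro F hF _
    exact absurd (lt_of_lt_of_le (comp_pos (by omega) F) hF) (lt_irrefl 0)
  | succ m ih =>
    intro F hcF hFE
    by_cases h1 : comp F ≤ 1
    · have hc1 : comp F = 1 := le_antisymm h1 (comp_pos (by omega) F)
      refine ⟨F, Finset.Subset.refl F, hFE, hc1, by omega, ?_⟩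
      intro t ht
      rw [Finset.sdiff_self]
      simp only [Finset.filter_empty, Finset.card_empty]
      have hcp := comp_pos (show 0 < n by omega) (F ∪ (E0 w).filter (fun e => c e ≤ t))
      rw [hc1]
      exact Nat.le_min.2 ⟨le_rfl, hcp⟩
    · push_neg at h1
      have h2 : 2 ≤ comp F := h1
      obtain ⟨e₀, he₀mem, he₀min⟩ := Finset.exists_min_image _ c
        (exists_crossing w hw h0 hlam hlb hn F h2)
      have he₀E : e₀ ∈ E0 w := (Finset.mem_filter.1 he₀mem).1
      have he₀cross : ¬ conn F e₀.1 e₀.2 := (Finset.mem_filter.1 he₀mem).2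
      have hdec : comp (insert e₀ F) < comp F := comp_insert_lt he₀cross
      have hsubE : insert e₀ F ⊆ E0 w := Finset.insert_subset he₀E hFE
      have hnotmem : e₀ ∉ F := fun hmem => he₀cross (conn_of_mem hmem)
      obtain ⟨T, hT1, hT2, hT3, hT4, hT5⟩ := ih (insert e₀ F) (by omega) hsubE
      refine ⟨T, (Finset.subset_insert _ _).trans hT1, hT2, hT3, ?_, ?_⟩
      · have : (insert e₀ F).card = F.card + 1 := Finset.card_insert_of_notMem hnotmem
        omega
      · intro t ht
        have hsd : T \ F = insert e₀ (T \ insert e₀ F) := by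
          ext x
          simp only [Finset.mem_sdiff, Finset.mem_insert]
          constructor
          · rintro ⟨hxT, hxF⟩
            by_cases hx : x = e₀
            · exact Or.inl hx
            · exact Or.inr ⟨hxT, fun h => h.elim hx hxF⟩
          · rintro (rfl | ⟨hxT, hx⟩)
            · exact ⟨hT1 (Finset.mem_insert_self _ _), hnotmem⟩
            · exact ⟨hxT, fun hxF => hx (Or.inr hxF)⟩
        have he₀notin : e₀ ∉ T \ insert e₀ F := by
          simp [Finset.mem_sdiff]
        rw [hsd, Finset.filter_insert]
        set G := (E0 w).filter (fun e => c e ≤ t) with hG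
        by_cases hce : c e₀ ≤ t
        · rw [if_neg (not_lt.2 hce)]
          have hunion : insert e₀ F ∪ G = F ∪ G := by
            have he₀G : e₀ ∈ G := Finset.mem_filter.2 ⟨he₀E, hce⟩
            rw [Finset.insert_union]
            exact Finset.insert_eq_self.2 (Finset.mem_union_right _ he₀G)
          have hh := hT5 t ht
          rw [hunion] at hh
          have hmono : comp (insert e₀ F) ≤ comp F :=
            comp_le_of_subset (Finset.subset_insert _ _)
          exact le_trans hh (min_le_min hmono le_rfl)
        · push_neg at hce
          rw [if_pos hce]
          have hintra : ∀ g ∈ G, conn F g.1 g.2 := by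
            intro g hg
            by_contra hgc
            have hg1 : g ∈ (E0 w).filter (fun e => ¬ conn F e.1 e.2) :=
              Finset.mem_filter.2 ⟨(Finset.mem_filter.1 hg).1, hgc⟩
            have hmin := he₀min g hg1
            have hle : c g ≤ t := (Finset.mem_filter.1 hg).2
            linarith
          have hFG : comp (F ∪ G) = comp F := comp_union_eq hintra
          have hTle := le_trans (hT5 t ht) (min_le_left _ _)
          have hfnotin : e₀ ∉ (T \ insert e₀ F).filter (fun e => t < c e) :=
            fun hmem => he₀notin (Finset.mem_filter.1 hmem).1
          rw [Finset.card_insert_of_notMem hfnotin, hFG, min_self]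
          omega

private noncomputable def trees : Finset (Finset (Fin n × Fin n)) :=
  (E0 w).powerset.filter (fun T => comp T = 1 ∧ T.card + 1 ≤ n)

include hlam in
private lemma exists_good_tree (hn : 2 ≤ n) (c : Fin n × Fin n → ℝ) (hc : ∀ e, 0 ≤ c e) :
    ∃ T ∈ trees w, ∑ e ∈ T, c e ≤ ∑ e ∈ E0 w, (2 * w e.1 e.2 / lam) * c e := by
  classical
  obtain ⟨T, -, hTE, hTconn, hTcard, hTthr⟩ :=
    greedy w hw h0 hlam hlb hn c n ∅ (le_of_eq comp_empty) (Finset.empty_subset _)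
  rw [comp_empty, Finset.card_empty, Nat.zero_add] at hTcard
  refine ⟨T, Finset.mem_filter.2 ⟨Finset.mem_powerset.2 hTE, hTconn, hTcard⟩, ?_⟩
  apply layercake T (E0 w) (fun e => 2 * w e.1 e.2 / lam) c
  · intro e _
    have := h0 e.1 e.2
    positivity
  · exact hc
  · intro t ht
    set G := (E0 w).filter (fun e => c e ≤ t) with hGdef
    have hthr := hTthr t ht
    rw [Finset.sdiff_empty, Finset.empty_union, comp_empty] at hthr
    have hcard1 : (T.filter (fun e => t < c e)).card + 1 ≤ comp G :=
      le_trans hthr (min_le_right _ _)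
    by_cases hm : 2 ≤ comp G
    · have hcb := classes_bound w hw h0 hlb hn G hm
      have hsub : (E0 w).filter (fun e => ¬ conn G e.1 e.2) ⊆
          (E0 w).filter (fun e => t < c e) := by
        intro e he
        have he' := Finset.mem_filter.1 he
        refine Finset.mem_filter.2 ⟨he'.1, ?_⟩
        by_contra hlt
        push_neg at hlt
        exact he'.2 (conn_of_mem (Finset.mem_filter.2 ⟨he'.1, hlt⟩))
      have hmon : ∑ e ∈ (E0 w).filter (fun e => ¬ conn G e.1 e.2), w e.1 e.2 ≤
          ∑ e ∈ (E0 w).filter (fun e => t < c e), w e.1 e.2 :=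
        Finset.sum_le_sum_of_subset_of_nonneg hsub (fun e _ _ => h0 e.1 e.2)
      have hsumb : ∑ e ∈ (E0 w).filter (fun e => t < c e), 2 * w e.1 e.2 / lam =
          (2 * ∑ e ∈ (E0 w).filter (fun e => t < c e), w e.1 e.2) / lam := by
        rw [Finset.mul_sum, Finset.sum_div]
      rw [hsumb]
      have h1 : ((T.filter (fun e => t < c e)).card : ℝ) + 1 ≤ (comp G : ℝ) := by
        exact_mod_cast hcard1
      have h2 : (comp G : ℝ) ≤
          (2 * ∑ e ∈ (E0 w).filter (fun e => t < c e), w e.1 e.2) / lam := by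
        rw [le_div_iff₀ hlam]
        linarith
      linarith
    · push_neg at hm
      have hz : (T.filter (fun e => t < c e)).card = 0 := by omega
      rw [hz]
      simp only [Nat.cast_zero]
      apply Finset.sum_nonneg
      intro e _
      have := h0 e.1 e.2
      positivity

include hlam in
private lemma exists_distribution (hn : 2 ≤ n) :
    ∃ μ : Finset (Fin n × Fin n) → ℝ,
      (∀ T, 0 ≤ μ T) ∧ (∑ T ∈ trees w, μ T = 1) ∧
      ∀ e ∈ E0 w, ∑ T ∈ trees w, μ T * (if e ∈ T then (1:ℝ) else 0) ≤
        2 * w e.1 e.2 / lam := by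
  classical
  set ι := {e // e ∈ E0 w} with hι
  set τ := {T // T ∈ trees w} with hτ
  set xvec : τ → (ι → ℝ) := fun T e =>
    (if (e : Fin n × Fin n) ∈ (T : Finset (Fin n × Fin n)) then (1:ℝ) else 0) -
      2 * w (e : Fin n × Fin n).1 (e : Fin n × Fin n).2 / lam with hxvec
  set L : (τ → ℝ) → (ι → ℝ) := fun μ => ∑ T : τ, μ T • xvec T with hL
  have hLlin : IsLinearMap ℝ L := by
    constructor
    · intro a b
      simp only [hL, Pi.add_apply, add_smul, Finset.sum_add_distrib]
    · intro r a
      simp only [hL, Pi.smul_apply, smul_eq_mul, mul_smul, ← Finset.smul_sum]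
  set K : Set (ι → ℝ) := L '' stdSimplex ℝ τ with hK
  have hKconv : Convex ℝ K := (convex_stdSimplex ℝ τ).is_linear_image hLlin
  have hKcomp : IsCompact K := by
    apply (isCompact_stdSimplex ℝ τ).image
    apply continuous_finset_sum
    intro T _
    exact (continuous_apply T).smul continuous_const
  set O : Set (ι → ℝ) := Set.pi Set.univ (fun _ => Set.Iic (0:ℝ)) with hO
  have hOconv : Convex ℝ O := convex_pi (fun _ _ => convex_Iic 0)
  have hOclosed : IsClosed O := isClosed_set_pi (fun _ _ => isClosed_Iic)
  set bvec : ι → (ι → ℝ) := fun e j => if e = j then (1:ℝ) else 0 with hbvec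
  have hnotdisj : ¬ Disjoint K O := by
    intro hdisj
    obtain ⟨f, u, v, hKu, huv, hOv⟩ :=
      geometric_hahn_banach_compact_closed hKconv hKcomp hOconv hOclosed hdisj
    have hv0 : v < 0 := by
      have h00 : (0 : ι → ℝ) ∈ O := by
        intro e _; simp
      have := hOv 0 h00
      simpa using this
    have hfs : ∀ e : ι, f (bvec e) ≤ 0 := by
      intro e
      by_contra hpos
      push_neg at hpos
      set r := (-v + 1) / f (bvec e) with hr
      have hrpos : 0 < r := div_pos (by linarith) hpos
      have hmem : (-r) • bvec e ∈ O := by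
        intro j _
        simp only [Pi.smul_apply, smul_eq_mul, hbvec, Set.mem_Iic]
        by_cases h : e = j <;> simp [h] <;> linarith
      have hval := hOv _ hmem
      rw [map_smul] at hval
      simp only [smul_eq_mul] at hval
      rw [hr] at hval
      have : -((-v + 1) / f (bvec e)) * f (bvec e) = v - 1 := by
        field_simp
        ring
      rw [this] at hval
      linarith
    set c : Fin n × Fin n → ℝ :=
      fun a => if h : a ∈ E0 w then -f (bvec ⟨a, h⟩) else 0 with hc
    have hcnn : ∀ a, 0 ≤ c a := by
      intro a
      by_cases h : a ∈ E0 w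
      · simp only [hc, dif_pos h]
        linarith [hfs ⟨a, h⟩]
      · simp [hc, dif_neg h]
    obtain ⟨T₀, hT₀, hT₀le⟩ := exists_good_tree w hw h0 hlam hlb hn c hcnn
    -- xvec ⟨T₀, _⟩ ∈ K
    have hmemK : xvec ⟨T₀, hT₀⟩ ∈ K := by
      refine ⟨fun T => if T = ⟨T₀, hT₀⟩ then (1:ℝ) else 0, ?_, ?_⟩
      · constructor
        · intro T; dsimp only; split <;> norm_num
        · rw [Finset.sum_eq_single (⟨T₀, hT₀⟩ : τ)] <;> simp
      · simp only [hL, ite_smul, one_smul, zero_smul]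
        rw [Finset.sum_ite_eq' Finset.univ (⟨T₀, hT₀⟩ : τ) xvec]
        simp
    have hflt : f (xvec ⟨T₀, hT₀⟩) < u := hKu _ hmemK
    -- expand f via coordinates
    have hfx : ∀ x : ι → ℝ, f x = ∑ e : ι, x e * f (bvec e) := by
      intro x
      have hxe : x = ∑ e : ι, x e • bvec e := pi_eq_sum_univ x
      conv_lhs => rw [hxe]
      rw [map_sum]
      apply Finset.sum_congr rfl
      intro e _
      rw [map_smul, smul_eq_mul]
    have hT₀sub : T₀ ⊆ E0 w := Finset.mem_powerset.1 (Finset.mem_filter.1 hT₀).1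
    have hfval : f (xvec ⟨T₀, hT₀⟩) =
        (∑ e ∈ E0 w, (2 * w e.1 e.2 / lam) * c e) - ∑ e ∈ T₀, c e := by
      rw [hfx]
      have hterm : ∀ e : ι, xvec ⟨T₀, hT₀⟩ e * f (bvec e) =
          (2 * w (e : Fin n × Fin n).1 (e : Fin n × Fin n).2 / lam) * c (e : Fin n × Fin n) -
            (if (e : Fin n × Fin n) ∈ T₀ then (1:ℝ) else 0) * c (e : Fin n × Fin n) := by
        rintro ⟨a, ha⟩
        have hce : c a = -f (bvec ⟨a, ha⟩) := dif_pos ha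
        have hxv : xvec ⟨T₀, hT₀⟩ ⟨a, ha⟩ =
            (if a ∈ T₀ then (1:ℝ) else 0) - 2 * w a.1 a.2 / lam := rfl
        rw [hxv]
        have hfb : f (bvec ⟨a, ha⟩) = -c a := by rw [hce]; ring
        rw [hfb]
        ring
      rw [Finset.sum_congr rfl (fun e _ => hterm e), Finset.sum_sub_distrib]
      congr 1
      · exact Finset.sum_coe_sort (E0 w) (fun e => (2 * w e.1 e.2 / lam) * c e)
      · rw [Finset.sum_coe_sort (E0 w)
          (fun e => (if e ∈ T₀ then (1:ℝ) else 0) * c e)]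
        have : ∀ e ∈ E0 w, (if e ∈ T₀ then (1:ℝ) else 0) * c e =
            (if e ∈ T₀ then c e else 0) := by
          intro e _; split <;> ring
        rw [Finset.sum_congr rfl this, Finset.sum_ite_mem,
          Finset.inter_eq_right.2 hT₀sub]
    have : 0 ≤ f (xvec ⟨T₀, hT₀⟩) := by
      rw [hfval]
      linarith
    linarith
  obtain ⟨y, hyK, hyO⟩ := Set.not_disjoint_iff.1 hnotdisj
  obtain ⟨μ, hμsimp, hμy⟩ := hyK
  refine ⟨fun T => if h : T ∈ trees w then μ ⟨T, h⟩ else 0, ?_, ?_, ?_⟩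
  · intro T
    by_cases h : T ∈ trees w
    · simp only [dif_pos h]; exact hμsimp.1 _
    · simp [dif_neg h]
  · rw [← Finset.sum_coe_sort (trees w)]
    have : ∀ T : τ, (if h : (T : Finset (Fin n × Fin n)) ∈ trees w then μ ⟨(T : Finset (Fin n × Fin n)), h⟩ else 0) = μ T := by
      intro T; rw [dif_pos T.2]
    rw [Finset.sum_congr rfl (fun T _ => this T)]
    exact hμsimp.2
  · intro e he
    have hy := hyO ⟨e, he⟩ (Set.mem_univ _)
    rw [← hμy] at hy
    simp only [hL, Set.mem_Iic] at hy
    have hexp : (∑ T : τ, μ T • xvec T) ⟨e, he⟩ =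
        ∑ T : τ, μ T * ((if e ∈ (T : Finset (Fin n × Fin n)) then (1:ℝ) else 0) -
          2 * w e.1 e.2 / lam) := by
      rw [Finset.sum_apply]
      rfl
    rw [hexp] at hy
    have hsplit : ∑ T : τ, μ T * ((if e ∈ (T : Finset (Fin n × Fin n)) then (1:ℝ) else 0) -
          2 * w e.1 e.2 / lam) =
        (∑ T : τ, μ T * (if e ∈ (T : Finset (Fin n × Fin n)) then (1:ℝ) else 0)) -
          (2 * w e.1 e.2 / lam) * ∑ T : τ, μ T := by
      rw [Finset.mul_sum, ← Finset.sum_sub_distrib]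
      apply Finset.sum_congr rfl
      intro T _
      ring
    rw [hsplit, hμsimp.2, mul_one] at hy
    have hfinal : ∑ T ∈ trees w, (if h : T ∈ trees w then μ ⟨T, h⟩ else 0) *
        (if e ∈ T then (1:ℝ) else 0) =
        ∑ T : τ, μ T * (if e ∈ (T : Finset (Fin n × Fin n)) then (1:ℝ) else 0) := by
      rw [← Finset.sum_coe_sort (trees w)]
      apply Finset.sum_congr rfl
      intro T _
      rw [dif_pos T.2]
    rw [hfinal]
    linarith

omit hlb in
private lemma crossing_weight_le (S : Finset (Fin n)) :
    ∑ e ∈ (E0 w).filter (fun e => ¬ (e.1 ∈ S ↔ e.2 ∈ S)), w e.1 e.2 ≤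
      ∑ u ∈ S, ∑ v ∈ Sᶜ, w u v := by
  classical
  set i : Fin n × Fin n → Fin n × Fin n := fun e => if e.1 ∈ S then e else (e.2, e.1) with hi
  set Cr := (E0 w).filter (fun e => ¬ (e.1 ∈ S ↔ e.2 ∈ S)) with hCr
  have hiS : ∀ e ∈ Cr, i e ∈ S ×ˢ Sᶜ := by
    intro e he
    have hcross := (Finset.mem_filter.1 he).2
    by_cases h1 : e.1 ∈ S
    · have h2 : e.2 ∉ S := fun h2 => hcross ⟨fun _ => h2, fun _ => h1⟩
      simp only [hi, if_pos h1]
      exact Finset.mem_product.2 ⟨h1, Finset.mem_compl.2 h2⟩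
    · have h2 : e.2 ∈ S := by
        by_contra h2
        exact hcross ⟨fun h => absurd h h1, fun h => absurd h h2⟩
      simp only [hi, if_neg h1]
      exact Finset.mem_product.2 ⟨h2, Finset.mem_compl.2 h1⟩
  have hinj : Set.InjOn i Cr := by
    intro e he e' he' heq
    have hlt : e.1 < e.2 := ((mem_E0 w).1 (Finset.mem_filter.1 (Finset.mem_coe.1 he)).1).1
    have hlt' : e'.1 < e'.2 := ((mem_E0 w).1 (Finset.mem_filter.1 (Finset.mem_coe.1 he')).1).1
    simp only [hi] at heq
    split_ifs at heq with h1 h2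
    · exact heq
    · exfalso
      have ha : e.1 = e'.2 := congrArg Prod.fst heq
      have hb : e.2 = e'.1 := congrArg Prod.snd heq
      rw [ha, hb] at hlt
      exact absurd (hlt.trans hlt') (lt_irrefl _)
    · exfalso
      have ha : e.2 = e'.1 := congrArg Prod.fst heq
      have hb : e.1 = e'.2 := congrArg Prod.snd heq
      rw [← ha, ← hb] at hlt'
      exact absurd (hlt.trans hlt') (lt_irrefl _)
    · have ha : e.2 = e'.2 := congrArg Prod.fst heq
      have hb : e.1 = e'.1 := congrArg Prod.snd heq
      exact Prod.ext hb ha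
  have hval : ∀ e ∈ Cr, w e.1 e.2 = w (i e).1 (i e).2 := by
    intro e _
    by_cases h1 : e.1 ∈ S
    · simp [hi, if_pos h1]
    · simp only [hi, if_neg h1]
      exact hw e.1 e.2
  calc ∑ e ∈ Cr, w e.1 e.2 = ∑ e ∈ Cr, w (i e).1 (i e).2 :=
        Finset.sum_congr rfl hval
    _ = ∑ p ∈ Cr.image i, w p.1 p.2 := (Finset.sum_image (f := fun p => w p.1 p.2)
        (fun x hx y hy h => hinj (Finset.mem_coe.2 hx) (Finset.mem_coe.2 hy) h)).symm
    _ ≤ ∑ p ∈ S ×ˢ Sᶜ, w p.1 p.2 := by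
        apply Finset.sum_le_sum_of_subset_of_nonneg
        · intro p hp
          obtain ⟨e, he, rfl⟩ := Finset.mem_image.1 hp
          exact hiS e he
        · intro p _ _
          exact h0 p.1 p.2
    _ = ∑ u ∈ S, ∑ v ∈ Sᶜ, w u v := by rw [Finset.sum_product]

end Weighted

section Counting

variable {n : ℕ}

private lemma conn_stable {S : Finset (Fin n)} {R : Finset (Fin n × Fin n)}
    (hR : ∀ e ∈ R, (e.1 ∈ S ↔ e.2 ∈ S)) {u v : Fin n} (h : conn R u v) :
    (u ∈ S ↔ v ∈ S) := by
  induction h with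
  | rel x y hxy =>
    rcases hxy with hxy | hxy
    · exact hR _ hxy
    · exact (hR _ hxy).symm
  | refl x => exact Iff.rfl
  | symm x y _ ih => exact ih.symm
  | trans x y z _ _ ih1 ih2 => exact ih1.trans ih2

private lemma count_cuts_per_tree (hn : 2 ≤ n) (T : Finset (Fin n × Fin n))
    (hconn : comp T = 1) (hcard : T.card + 1 ≤ n) (k : ℕ) (z : Fin n) :
    (Finset.univ.filter (fun S : Finset (Fin n) => z ∈ S ∧ S ≠ Finset.univ ∧
      (T.filter (fun e => ¬ (e.1 ∈ S ↔ e.2 ∈ S))).card ≤ k)).card ≤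
      2 ^ (k + 1) * ((k + 1) * n ^ k) := by
  classical
  set φ : Finset (Fin n) → Finset (Fin n × Fin n) :=
    fun S => T.filter (fun e => ¬ (e.1 ∈ S ↔ e.2 ∈ S)) with hφ
  set D := Finset.univ.filter (fun S : Finset (Fin n) => z ∈ S ∧ S ≠ Finset.univ ∧
      (φ S).card ≤ k) with hD
  set PP := T.powerset.filter (fun F => F.card ≤ k) with hPPdef
  have hmaps : ∀ S ∈ D, φ S ∈ PP := by
    intro S hS
    have hS' := (Finset.mem_filter.1 hS).2
    exact Finset.mem_filter.2 ⟨Finset.mem_powerset.2 (Finset.filter_subset _ _), hS'.2.2⟩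
  rw [Finset.card_eq_sum_card_fiberwise hmaps]
  have hfiber : ∀ F ∈ PP, (D.filter (fun S => φ S = F)).card ≤ 2 ^ (k + 1) := by
    intro F hF
    have hFsub : F ⊆ T := Finset.mem_powerset.1 (Finset.mem_filter.1 hF).1
    have hFk : F.card ≤ k := (Finset.mem_filter.1 hF).2
    set R := T \ F with hR
    have hcompR : comp R ≤ k + 1 := by
      have h1 : comp R ≤ comp (R ∪ F) + F.card := comp_le_union_add_card R F
      have h2 : R ∪ F = T := by
        rw [hR, Finset.sdiff_union_self_eq_union, Finset.union_eq_left.2 hFsub]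
      rw [h2, hconn] at h1
      omega
    set P := Finset.univ.image (fun v => classOf R v) with hP
    have hcardP : P.card = comp R := (comp_eq_card_image R).symm
    set ψ : Finset (Fin n) → Finset (Finset (Fin n)) :=
      fun S => P.filter (fun A => A ⊆ S) with hψ
    have hclosed : ∀ S ∈ D.filter (fun S => φ S = F), ∀ v ∈ S, classOf R v ⊆ S := by
      intro S hS v hv u hu
      have hSfib := (Finset.mem_filter.1 hS).2
      have hedges : ∀ e ∈ R, (e.1 ∈ S ↔ e.2 ∈ S) := by
        intro e he
        have heT : e ∈ T := (Finset.mem_sdiff.1 he).1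
        have heF : e ∉ F := (Finset.mem_sdiff.1 he).2
        by_contra hcross
        exact heF (hSfib ▸ Finset.mem_filter.2 ⟨heT, hcross⟩)
      have := conn_stable hedges (mem_classOf_iff.1 hu)
      exact this.1 hv
    have hinj : Set.InjOn ψ (D.filter (fun S => φ S = F)) := by
      intro S hS S' hS' hψeq
      have hSmem := Finset.mem_coe.1 hS
      have hS'mem := Finset.mem_coe.1 hS'
      ext x
      constructor
      · intro hx
        have hcl : classOf R x ⊆ S := hclosed S hSmem x hx
        have : classOf R x ∈ ψ S :=
          Finset.mem_filter.2 ⟨Finset.mem_image_of_mem _ (Finset.mem_univ x), hcl⟩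
        rw [hψeq] at this
        exact (Finset.mem_filter.1 this).2 (mem_classOf_self R x)
      · intro hx
        have hcl : classOf R x ⊆ S' := hclosed S' hS'mem x hx
        have : classOf R x ∈ ψ S' :=
          Finset.mem_filter.2 ⟨Finset.mem_image_of_mem _ (Finset.mem_univ x), hcl⟩
        rw [← hψeq] at this
        exact (Finset.mem_filter.1 this).2 (mem_classOf_self R x)
    have hψmaps : ∀ S ∈ D.filter (fun S => φ S = F), ψ S ∈ P.powerset := by
      intro S _
      exact Finset.mem_powerset.2 (Finset.filter_subset _ _)
    calc (D.filter (fun S => φ S = F)).card ≤ P.powerset.card :=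
          Finset.card_le_card_of_injOn ψ hψmaps hinj
      _ = 2 ^ P.card := Finset.card_powerset P
      _ ≤ 2 ^ (k + 1) := Nat.pow_le_pow_right (by norm_num) (hcardP ▸ hcompR)
  calc ∑ F ∈ PP, (D.filter (fun S => φ S = F)).card ≤ ∑ _F ∈ PP, 2 ^ (k + 1) :=
        Finset.sum_le_sum hfiber
    _ = PP.card * 2 ^ (k + 1) := by rw [Finset.sum_const, smul_eq_mul]
    _ ≤ ((k + 1) * n ^ k) * 2 ^ (k + 1) := by
        have hPPdefcard : PP.card ≤ (k + 1) * n ^ k := by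
          have hsub : PP ⊆ (Finset.range (k + 1)).biUnion (fun j => T.powersetCard j) := by
            intro F hF
            have hF' := Finset.mem_filter.1 hF
            apply Finset.mem_biUnion.2
            refine ⟨F.card, Finset.mem_range.2 (by omega), ?_⟩
            exact Finset.mem_powersetCard.2 ⟨Finset.mem_powerset.1 hF'.1, rfl⟩
          calc PP.card ≤ ((Finset.range (k + 1)).biUnion (fun j => T.powersetCard j)).card :=
                Finset.card_le_card hsub
            _ ≤ ∑ j ∈ Finset.range (k + 1), (T.powersetCard j).card :=
                Finset.card_biUnion_le
            _ ≤ ∑ _j ∈ Finset.range (k + 1), n ^ k := by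
                apply Finset.sum_le_sum
                intro j hj
                rw [Finset.card_powersetCard]
                calc T.card.choose j ≤ T.card ^ j := Nat.choose_le_pow _ _
                  _ ≤ n ^ j := Nat.pow_le_pow_left (by omega) j
                  _ ≤ n ^ k := Nat.pow_le_pow_right (by omega)
                      (by have := Finset.mem_range.1 hj; omega)
            _ = (k + 1) * n ^ k := by rw [Finset.sum_const, Finset.card_range, smul_eq_mul]
        exact Nat.mul_le_mul_right _ hPPdefcard
    _ = 2 ^ (k + 1) * ((k + 1) * n ^ k) := by ring

end Counting

set_option maxHeartbeats 2000000 in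
/-- For every real `α ≥ 1` there exists a constant `C = C(α)` such that for
every `n ≥ 2` and every undirected weighted graph on `n` vertices (given by a symmetric,
nonnegative, loopless weight function `w`) whose minimum cut value `lam` is strictly
positive, the number of unordered cuts `{S, V \ S}` of value at most `α·lam` is at most
`C · n ^ ⌊2α⌋`.  Unordered cuts are counted via their unique side containing vertex `0`. -/
theorem stmt0 :
    ∀ α : ℝ, 1 ≤ α → ∃ C : ℝ, 0 < C ∧
      ∀ (n : ℕ) (hn : 2 ≤ n),
      ∀ w : Fin n → Fin n → ℝ,
        (∀ u v, w u v = w v u) →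
        (∀ u v, 0 ≤ w u v) →
        (∀ v, w v v = 0) →
      ∀ lam : ℝ,
        IsLeast {c : ℝ | ∃ S : Finset (Fin n), S.Nonempty ∧ S ≠ Finset.univ ∧
          c = ∑ u ∈ S, ∑ v ∈ Sᶜ, w u v} lam →
        0 < lam →
        (({S : Finset (Fin n) | (⟨0, by omega⟩ : Fin n) ∈ S ∧ S ≠ Finset.univ ∧
            (∑ u ∈ S, ∑ v ∈ Sᶜ, w u v) ≤ α * lam}.ncard : ℝ))
          ≤ C * (n : ℝ) ^ (⌊2 * α⌋₊) := by
  intro α hα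
  set k := ⌊2 * α⌋₊ with hk
  have hk2 : 2 ≤ k := Nat.le_floor (by push_cast; linarith)
  have hkgt : 2 * α < (k : ℝ) + 1 := by
    have := Nat.lt_floor_add_one (2 * α)
    push_cast at this ⊢
    convert this using 2
  have hαpos : 0 < α := by linarith
  set εnum : ℝ := (k : ℝ) + 1 - 2 * α with hεnum
  have hεpos : 0 < εnum := by rw [hεnum]; linarith
  refine ⟨2 ^ (k + 1) * ((k : ℝ) + 1) ^ 2 / εnum, by positivity, ?_⟩
  intro n hn w hsymm hnn hloop lam hleast hlam
  classical
  have hlb : ∀ S : Finset (Fin n), S.Nonempty → S ≠ Finset.univ →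
      lam ≤ ∑ u ∈ S, ∑ v ∈ Sᶜ, w u v := fun S h1 h2 => hleast.2 ⟨S, h1, h2, rfl⟩
  set z : Fin n := ⟨0, by omega⟩ with hz
  -- convert ncard to a Finset card
  have hconv : {S : Finset (Fin n) | z ∈ S ∧ S ≠ Finset.univ ∧
      (∑ u ∈ S, ∑ v ∈ Sᶜ, w u v) ≤ α * lam}.ncard =
      (Finset.univ.filter (fun S : Finset (Fin n) => z ∈ S ∧ S ≠ Finset.univ ∧
        (∑ u ∈ S, ∑ v ∈ Sᶜ, w u v) ≤ α * lam)).card := by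
    rw [← Set.ncard_coe_finset]
    congr 1
    ext S
    simp
  rw [hconv]
  set CC := Finset.univ.filter (fun S : Finset (Fin n) => z ∈ S ∧ S ≠ Finset.univ ∧
      (∑ u ∈ S, ∑ v ∈ Sᶜ, w u v) ≤ α * lam) with hCC
  obtain ⟨μ, hμ0, hμ1, hμmarg⟩ := exists_distribution w hsymm hnn hlam hlb hn
  set TT := trees w with hTT
  set cross : Finset (Fin n) → Finset (Fin n × Fin n) → Finset (Fin n × Fin n) :=
    fun S T => T.filter (fun e => ¬ (e.1 ∈ S ↔ e.2 ∈ S)) with hcross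
  -- Step 1: expected number of crossing tree edges is at most 2α
  have step1 : ∀ S ∈ CC, ∑ T ∈ TT, μ T * ((cross S T).card : ℝ) ≤ 2 * α := by
    intro S hS
    have hcut : (∑ u ∈ S, ∑ v ∈ Sᶜ, w u v) ≤ α * lam :=
      ((Finset.mem_filter.1 hS).2).2.2
    have hcardeq : ∀ T ∈ TT, ((cross S T).card : ℝ) =
        ∑ e ∈ E0 w, (if e ∈ T ∧ ¬ (e.1 ∈ S ↔ e.2 ∈ S) then (1:ℝ) else 0) := by
      intro T hT
      have hTsub : T ⊆ E0 w := Finset.mem_powerset.1 (Finset.mem_filter.1 hT).1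
      rw [Finset.sum_boole]
      norm_num
      congr 1
      ext e
      simp only [hcross, Finset.mem_filter]
      constructor
      · rintro ⟨h1, h2⟩; exact ⟨hTsub h1, h1, h2⟩
      · rintro ⟨-, h1, h2⟩; exact ⟨h1, h2⟩
    calc ∑ T ∈ TT, μ T * ((cross S T).card : ℝ)
        = ∑ T ∈ TT, ∑ e ∈ E0 w, μ T *
            (if e ∈ T ∧ ¬ (e.1 ∈ S ↔ e.2 ∈ S) then (1:ℝ) else 0) := by
          apply Finset.sum_congr rfl
          intro T hT
          rw [hcardeq T hT, Finset.mul_sum]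
      _ = ∑ e ∈ E0 w, ∑ T ∈ TT, μ T *
            (if e ∈ T ∧ ¬ (e.1 ∈ S ↔ e.2 ∈ S) then (1:ℝ) else 0) := Finset.sum_comm
      _ ≤ ∑ e ∈ E0 w, (if ¬ (e.1 ∈ S ↔ e.2 ∈ S) then 2 * w e.1 e.2 / lam else 0) := by
          apply Finset.sum_le_sum
          intro e he
          by_cases hcr : ¬ (e.1 ∈ S ↔ e.2 ∈ S)
          · rw [if_pos hcr]
            have : ∀ T ∈ TT, μ T * (if e ∈ T ∧ ¬ (e.1 ∈ S ↔ e.2 ∈ S) then (1:ℝ) else 0)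
                = μ T * (if e ∈ T then (1:ℝ) else 0) := by
              intro T _
              congr 1
              by_cases heT : e ∈ T
              · rw [if_pos ⟨heT, hcr⟩, if_pos heT]
              · rw [if_neg (fun hh => heT hh.1), if_neg heT]
            rw [Finset.sum_congr rfl this]
            exact hμmarg e he
          · rw [if_neg hcr]
            apply le_of_eq
            apply Finset.sum_eq_zero
            intro T _
            rw [if_neg (fun hh => hcr hh.2), mul_zero]
      _ = ∑ e ∈ (E0 w).filter (fun e => ¬ (e.1 ∈ S ↔ e.2 ∈ S)), 2 * w e.1 e.2 / lam := by
          rw [Finset.sum_filter]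
      _ = (2 / lam) * ∑ e ∈ (E0 w).filter (fun e => ¬ (e.1 ∈ S ↔ e.2 ∈ S)), w e.1 e.2 := by
          rw [Finset.mul_sum]
          apply Finset.sum_congr rfl
          intro e _
          ring
      _ ≤ (2 / lam) * (∑ u ∈ S, ∑ v ∈ Sᶜ, w u v) := by
          apply mul_le_mul_of_nonneg_left (crossing_weight_le w hsymm hnn S)
          positivity
      _ ≤ (2 / lam) * (α * lam) := by
          apply mul_le_mul_of_nonneg_left hcut
          positivity
      _ = 2 * α := by field_simp
  -- Step 2: Markov
  have step2 : ∀ S ∈ CC, εnum / ((k : ℝ) + 1) ≤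
      ∑ T ∈ TT, μ T * (if (cross S T).card ≤ k then (1:ℝ) else 0) := by
    intro S hS
    have hgoodsum : ∑ T ∈ TT, μ T * (if (cross S T).card ≤ k then (1:ℝ) else 0) =
        ∑ T ∈ TT.filter (fun T => (cross S T).card ≤ k), μ T := by
      rw [Finset.sum_filter]
      apply Finset.sum_congr rfl
      intro T _
      by_cases h : (cross S T).card ≤ k
      · rw [if_pos h, if_pos h, mul_one]
      · rw [if_neg h, if_neg h, mul_zero]
    rw [hgoodsum]
    have hsplit : ∑ T ∈ TT.filter (fun T => (cross S T).card ≤ k), μ T +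
        ∑ T ∈ TT.filter (fun T => ¬ (cross S T).card ≤ k), μ T = 1 := by
      rw [Finset.sum_filter_add_sum_filter_not, hμ1]
    have hbad : ∑ T ∈ TT.filter (fun T => ¬ (cross S T).card ≤ k), μ T ≤
        2 * α / ((k : ℝ) + 1) := by
      rw [le_div_iff₀ (by positivity : (0:ℝ) < (k:ℝ)+1)]
      calc (∑ T ∈ TT.filter (fun T => ¬ (cross S T).card ≤ k), μ T) * ((k : ℝ) + 1)
          = ∑ T ∈ TT.filter (fun T => ¬ (cross S T).card ≤ k), μ T * ((k : ℝ) + 1) := by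
            rw [Finset.sum_mul]
        _ ≤ ∑ T ∈ TT.filter (fun T => ¬ (cross S T).card ≤ k), μ T * ((cross S T).card : ℝ) := by
            apply Finset.sum_le_sum
            intro T hT
            have hTk : k + 1 ≤ (cross S T).card := by
              have := (Finset.mem_filter.1 hT).2
              omega
            apply mul_le_mul_of_nonneg_left _ (hμ0 T)
            exact_mod_cast hTk
        _ ≤ ∑ T ∈ TT, μ T * ((cross S T).card : ℝ) := by
            apply Finset.sum_le_sum_of_subset_of_nonneg (Finset.filter_subset _ _)
            intro T _ _
            exact mul_nonneg (hμ0 T) (by positivity)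
        _ ≤ 2 * α := step1 S hS
    have : εnum / ((k : ℝ) + 1) = 1 - 2 * α / ((k : ℝ) + 1) := by
      rw [hεnum]
      field_simp
    rw [this]
    linarith
  -- Step 3: double counting
  set B : ℕ := 2 ^ (k + 1) * ((k + 1) * n ^ k) with hB
  have step3 : (CC.card : ℝ) * (εnum / ((k : ℝ) + 1)) ≤ (B : ℕ) := by
    calc (CC.card : ℝ) * (εnum / ((k : ℝ) + 1))
        = ∑ _S ∈ CC, εnum / ((k : ℝ) + 1) := by
          rw [Finset.sum_const, nsmul_eq_mul]
      _ ≤ ∑ S ∈ CC, ∑ T ∈ TT, μ T * (if (cross S T).card ≤ k then (1:ℝ) else 0) :=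
          Finset.sum_le_sum step2
      _ = ∑ T ∈ TT, ∑ S ∈ CC, μ T * (if (cross S T).card ≤ k then (1:ℝ) else 0) :=
          Finset.sum_comm
      _ ≤ ∑ T ∈ TT, μ T * (B : ℝ) := by
          apply Finset.sum_le_sum
          intro T hT
          rw [← Finset.mul_sum]
          apply mul_le_mul_of_nonneg_left _ (hμ0 T)
          have hTmem := Finset.mem_filter.1 hT
          have hTconn : comp T = 1 := hTmem.2.1
          have hTcard : T.card + 1 ≤ n := hTmem.2.2
          calc ∑ S ∈ CC, (if (cross S T).card ≤ k then (1:ℝ) else 0)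
              = ((CC.filter (fun S => (cross S T).card ≤ k)).card : ℝ) := by
                rw [Finset.sum_boole]
            _ ≤ (((Finset.univ.filter (fun S : Finset (Fin n) => z ∈ S ∧ S ≠ Finset.univ ∧
                  (T.filter (fun e => ¬ (e.1 ∈ S ↔ e.2 ∈ S))).card ≤ k)).card : ℕ) : ℝ) := by
                apply Nat.cast_le.2
                apply Finset.card_le_card
                intro S hS
                have h1 := Finset.mem_filter.1 hS
                have h2 := Finset.mem_filter.1 h1.1
                exact Finset.mem_filter.2 ⟨Finset.mem_univ _, h2.2.1, h2.2.2.1, h1.2⟩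
            _ ≤ (B : ℝ) := by
                apply Nat.cast_le.2
                exact count_cuts_per_tree hn T hTconn hTcard k z
      _ = (B : ℝ) := by
          rw [← Finset.sum_mul, hμ1, one_mul]
  -- finish
  have hfinal : (CC.card : ℝ) ≤ (B : ℝ) * ((k : ℝ) + 1) / εnum := by
    have hε2 : 0 < εnum / ((k : ℝ) + 1) := by positivity
    have h1 : (CC.card : ℝ) ≤ (B : ℝ) / (εnum / ((k : ℝ) + 1)) := (le_div_iff₀ hε2).2 step3
    rwa [div_div_eq_mul_div] at h1
  have hBval : (B : ℝ) = 2 ^ (k + 1) * (((k : ℝ) + 1) * (n : ℝ) ^ k) := by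
    rw [hB]
    push_cast
    ring
  calc (CC.card : ℝ) ≤ (B : ℝ) * ((k : ℝ) + 1) / εnum := hfinal
    _ = 2 ^ (k + 1) * ((k : ℝ) + 1) ^ 2 / εnum * (n : ℝ) ^ k := by
        rw [hBval]
        field_simp
end

section
/- There exist absolute constants c > 0 and C > 0 such that the following holds. Let G = (V, E) be a connected simple unweighted graph on n ≥ 2 vertices with m = |E| edges whose minimum cut value s satisfies s ≥ c·log n. Let h = ⌈C·m·(log n)/s⌉ and suppose h ≤ m. If H is a uniformly random h-element subset of E, then with probability at least 9/10 the following holds simultaneously for every S with ∅ ⊂ S ⊂ V: the rescaled sampled cut value (m/h)·|H ∩ E(S, V∖S)| lies in the interval [|E(S, V∖S)|/1.1, 1.1·|E(S, V∖S)|]. -/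
open Finset
open scoped Classical



/-- The set of edges of `G` crossing the cut `(S, V \ S)`. -/
def cutEdges {V : Type*} (G : SimpleGraph V) (S : Set V) : Set (Sym2 V) :=
  {e | e ∈ G.edgeSet ∧ ∃ u v, u ∈ S ∧ v ∉ S ∧ e = s(u, v)}


noncomputable section Aux

variable {n : ℕ} (G : SimpleGraph (Fin n))

/-- crossing predicate mirroring cutEdges -/
def crossP (T : Finset (Fin n)) (e : Sym2 (Fin n)) : Prop :=
  ∃ u v, u ∈ T ∧ v ∉ T ∧ e = s(u, v)

def cutF (T : Finset (Fin n)) : Finset (Sym2 (Fin n)) :=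
  G.edgeFinset.filter (crossP T)

lemma cutEdges_coe (T : Finset (Fin n)) : cutEdges G (↑T) = ↑(cutF G T) := by
  ext e
  simp [cutEdges, cutF, crossP]

lemma crossP_iff (T : Finset (Fin n)) (u v : Fin n) :
    crossP T s(u, v) ↔ (u ∈ T ∧ v ∉ T) ∨ (v ∈ T ∧ u ∉ T) := by
  constructor
  · rintro ⟨a, b, ha, hb, hab⟩
    rw [Sym2.eq_iff] at hab
    rcases hab with ⟨rfl, rfl⟩ | ⟨rfl, rfl⟩
    · exact Or.inl ⟨ha, hb⟩
    · exact Or.inr ⟨ha, hb⟩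
  · rintro (⟨h1, h2⟩ | ⟨h1, h2⟩)
    · exact ⟨u, v, h1, h2, rfl⟩
    · exact ⟨v, u, h1, h2, by rw [Sym2.eq_swap]⟩

lemma card_orient (T : Finset (Fin n)) :
    #(univ.filter (fun p : Fin n × Fin n => G.Adj p.1 p.2 ∧ p.1 ∈ T ∧ p.2 ∉ T))
      = #(cutF G T) := by
  apply Finset.card_bij (fun p _ => s(p.1, p.2))
  · rintro ⟨u, v⟩ hp
    simp only [mem_filter, mem_univ, true_and] at hp
    obtain ⟨hadj, h1, h2⟩ := hp
    simp only [cutF, mem_filter, SimpleGraph.mem_edgeFinset, SimpleGraph.mem_edgeSet]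
    exact ⟨hadj, u, v, h1, h2, rfl⟩
  · rintro ⟨u, v⟩ hp ⟨u', v'⟩ hp' he
    simp only [mem_filter, mem_univ, true_and] at hp hp'
    rw [Sym2.eq_iff] at he
    rcases he with ⟨rfl, rfl⟩ | ⟨rfl, rfl⟩
    · rfl
    · exact absurd hp'.2.1 hp.2.2
  · intro e he
    simp only [cutF, mem_filter, SimpleGraph.mem_edgeFinset, SimpleGraph.mem_edgeSet] at he
    obtain ⟨hE, u, v, h1, h2, rfl⟩ := he
    refine ⟨⟨u, v⟩, ?_, rfl⟩
    simp only [mem_filter, mem_univ, true_and]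
    exact ⟨hE, h1, h2⟩

end Aux


section MGF
variable {α : Type*} [DecidableEq α]

lemma swap_eq (E : Finset α) (h : ℕ) (x : α) (hxE : x ∈ E) (F : Finset α) (φ : ℕ → ℝ) :
    ∑ a ∈ ((E.powersetCard h).filter (fun H => x ∈ H)).sigma (fun H => E \ H),
        φ ((insert a.2 (a.1.erase x) ∩ F).card)
      = ∑ a ∈ ((E.powersetCard h).filter (fun H => x ∉ H)).sigma (fun H => H),
        φ ((a.1 ∩ F).card) := by
  apply Finset.sum_nbij' (i := fun a => ⟨insert a.2 (a.1.erase x), a.2⟩)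
    (j := fun a => ⟨insert x (a.1.erase a.2), a.2⟩)
  · rintro ⟨H, y⟩ ha
    simp only [mem_sigma, mem_filter, mem_powersetCard, mem_sdiff] at ha
    obtain ⟨⟨⟨hHE, hcard⟩, hxH⟩, hyE, hyH⟩ := ha
    have hxy : y ≠ x := fun hyx => hyH (hyx ▸ hxH)
    have hynotin : y ∉ H.erase x := fun hy => hyH (Finset.mem_of_mem_erase hy)
    simp only [mem_sigma, mem_filter, mem_powersetCard]
    refine ⟨⟨⟨?_, ?_⟩, ?_⟩, ?_⟩
    · intro z hz
      rcases Finset.mem_insert.1 hz with rfl | hz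
      · exact hyE
      · exact hHE (Finset.mem_of_mem_erase hz)
    · have h1 : 0 < H.card := Finset.card_pos.2 ⟨x, hxH⟩
      rw [Finset.card_insert_of_notMem hynotin, Finset.card_erase_of_mem hxH, hcard]
      omega
    · intro hx'
      rcases Finset.mem_insert.1 hx' with h' | h'
      · exact hxy h'.symm
      · exact (Finset.notMem_erase x H) h'
    · exact Finset.mem_insert_self _ _
  · rintro ⟨H, y⟩ ha
    simp only [mem_sigma, mem_filter, mem_powersetCard] at ha
    obtain ⟨⟨⟨hHE, hcard⟩, hxH⟩, hyH⟩ := ha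
    have hxy : x ≠ y := fun hxy => hxH (hxy ▸ hyH)
    have hxnotin : x ∉ H.erase y := fun hx' => hxH (Finset.mem_of_mem_erase hx')
    simp only [mem_sigma, mem_filter, mem_powersetCard, mem_sdiff]
    refine ⟨⟨⟨?_, ?_⟩, Finset.mem_insert_self _ _⟩, hHE hyH, ?_⟩
    · intro z hz
      rcases Finset.mem_insert.1 hz with rfl | hz
      · exact hxE
      · exact hHE (Finset.mem_of_mem_erase hz)
    · have h1 : 0 < H.card := Finset.card_pos.2 ⟨y, hyH⟩
      rw [Finset.card_insert_of_notMem hxnotin, Finset.card_erase_of_mem hyH, hcard]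
      omega
    · intro hy'
      rcases Finset.mem_insert.1 hy' with h' | h'
      · exact hxy h'.symm
      · exact (Finset.notMem_erase y H) h'
  · rintro ⟨H, y⟩ ha
    simp only [mem_sigma, mem_filter, mem_powersetCard, mem_sdiff] at ha
    obtain ⟨⟨⟨hHE, hcard⟩, hxH⟩, hyE, hyH⟩ := ha
    have hynotin : y ∉ H.erase x := fun hy => hyH (Finset.mem_of_mem_erase hy)
    have : insert x ((insert y (H.erase x)).erase y) = H := by
      rw [Finset.erase_insert hynotin, Finset.insert_erase hxH]
    simp only [this]
  · rintro ⟨H, y⟩ ha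
    simp only [mem_sigma, mem_filter, mem_powersetCard] at ha
    obtain ⟨⟨⟨hHE, hcard⟩, hxH⟩, hyH⟩ := ha
    have hxnotin : x ∉ H.erase y := fun hx' => hxH (Finset.mem_of_mem_erase hx')
    have : insert y ((insert x (H.erase y)).erase x) = H := by
      rw [Finset.erase_insert hxnotin, Finset.insert_erase hyH]
    simp only [this]
  · rintro ⟨H, y⟩ _
    rfl

lemma swap_card (E : Finset α) (h : ℕ) (x : α) (hxE : x ∈ E) (F : Finset α) (hxF : x ∉ F)
    (a : (_ : Finset α) × α)
    (ha : a ∈ ((E.powersetCard h).filter (fun H => x ∈ H)).sigma (fun H => E \ H)) :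
    (a.1 ∩ F).card ≤ (insert a.2 (a.1.erase x) ∩ F).card := by
  obtain ⟨H, y⟩ := a
  apply Finset.card_le_card
  intro z hz
  obtain ⟨hzH, hzF⟩ := Finset.mem_inter.1 hz
  refine Finset.mem_inter.2 ⟨Finset.mem_insert_of_mem ?_, hzF⟩
  exact Finset.mem_erase.2 ⟨fun hzx => hxF (hzx ▸ hzF), hzH⟩

end MGF


section MGF2
variable {α : Type*} [DecidableEq α]

lemma sumB_eq (E : Finset α) (h : ℕ) (x : α) (F : Finset α) (t : ℝ) :
    ((#E - h : ℕ) : ℝ) * ∑ H ∈ (E.powersetCard h).filter (fun H => x ∈ H), t ^ (H ∩ F).card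
      = ∑ a ∈ ((E.powersetCard h).filter (fun H => x ∈ H)).sigma (fun H => E \ H),
          t ^ (a.1 ∩ F).card := by
  rw [Finset.sum_sigma, Finset.mul_sum]
  apply Finset.sum_congr rfl
  intro H hH
  simp only [mem_filter, mem_powersetCard] at hH
  have : ∀ y ∈ E \ H, t ^ #((⟨H, y⟩ : (_ : Finset α) × α).fst ∩ F) = t ^ #(H ∩ F) :=
    fun _ _ => rfl
  rw [Finset.sum_congr rfl this, Finset.sum_const, Finset.card_sdiff_of_subset hH.1.1, hH.1.2,
    nsmul_eq_mul]

lemma sumA_eq (E : Finset α) (h : ℕ) (x : α) (F : Finset α) (t : ℝ) :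
    (h : ℝ) * ∑ H ∈ (E.powersetCard h).filter (fun H => x ∉ H), t ^ (H ∩ F).card
      = ∑ a ∈ ((E.powersetCard h).filter (fun H => x ∉ H)).sigma (fun H => H),
          t ^ (a.1 ∩ F).card := by
  rw [Finset.sum_sigma, Finset.mul_sum]
  apply Finset.sum_congr rfl
  intro H hH
  simp only [mem_filter, mem_powersetCard] at hH
  have : ∀ y ∈ H, t ^ #((⟨H, y⟩ : (_ : Finset α) × α).fst ∩ F) = t ^ #(H ∩ F) :=
    fun _ _ => rfl
  rw [Finset.sum_congr rfl this, Finset.sum_const, hH.1.2, nsmul_eq_mul]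

lemma AB_ge (E : Finset α) (h : ℕ) (x : α) (hxE : x ∈ E) (F : Finset α) (hxF : x ∉ F)
    (t : ℝ) (ht : 0 < t) (ht1 : 1 ≤ t) :
    ((#E - h : ℕ) : ℝ) * ∑ H ∈ (E.powersetCard h).filter (fun H => x ∈ H), t ^ (H ∩ F).card
      ≤ (h : ℝ) * ∑ H ∈ (E.powersetCard h).filter (fun H => x ∉ H), t ^ (H ∩ F).card := by
  rw [sumB_eq, sumA_eq, ← swap_eq E h x hxE F (fun k => t ^ k)]
  apply Finset.sum_le_sum
  intro a ha
  exact pow_le_pow_right₀ ht1 (swap_card E h x hxE F hxF a ha)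

lemma AB_le (E : Finset α) (h : ℕ) (x : α) (hxE : x ∈ E) (F : Finset α) (hxF : x ∉ F)
    (t : ℝ) (ht : 0 < t) (ht1 : t ≤ 1) :
    (h : ℝ) * ∑ H ∈ (E.powersetCard h).filter (fun H => x ∉ H), t ^ (H ∩ F).card
      ≤ ((#E - h : ℕ) : ℝ) * ∑ H ∈ (E.powersetCard h).filter (fun H => x ∈ H), t ^ (H ∩ F).card := by
  rw [sumB_eq, sumA_eq, ← swap_eq E h x hxE F (fun k => t ^ k)]
  apply Finset.sum_le_sum
  intro a ha
  exact pow_le_pow_of_le_one ht.le ht1 (swap_card E h x hxE F hxF a ha)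

lemma mgf_bound (E : Finset α) (h : ℕ) (hh : h ≤ #E) (t : ℝ) (ht : 0 < t) :
    ∀ F : Finset α, F ⊆ E →
      ∑ H ∈ E.powersetCard h, t ^ (H ∩ F).card
        ≤ (1 + (t - 1) * h / #E) ^ F.card * ((#E).choose h) := by
  intro F
  induction F using Finset.cons_induction with
  | empty =>
    intro _
    simp [Finset.card_powersetCard]
  | cons x F hx ih =>
    intro hsub
    have hxE : x ∈ E := hsub (Finset.mem_cons_self x F)
    have hFE : F ⊆ E := fun z hz => hsub (Finset.mem_cons.2 (Or.inr hz))
    have hm : 0 < #E := Finset.card_pos.2 ⟨x, hxE⟩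
    have hM : (0:ℝ) < (#E : ℝ) := by exact_mod_cast hm
    have hhM : (h : ℝ) ≤ (#E : ℝ) := by exact_mod_cast hh
    have hfaceq : 1 + (t - 1) * h / #E = ((#E : ℝ) + (t - 1) * h) / #E := by
      field_simp
    have hfac : (0:ℝ) ≤ 1 + (t - 1) * h / #E := by
      rw [hfaceq]
      apply div_nonneg _ hM.le
      nlinarith [Nat.cast_nonneg (α := ℝ) h]
    set A := ∑ H ∈ (E.powersetCard h).filter (fun H => x ∉ H), t ^ (H ∩ F).card with hA_def
    set B := ∑ H ∈ (E.powersetCard h).filter (fun H => x ∈ H), t ^ (H ∩ F).card with hB_def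
    have hA : 0 ≤ A := Finset.sum_nonneg fun _ _ => (pow_pos ht _).le
    have hB : 0 ≤ B := Finset.sum_nonneg fun _ _ => (pow_pos ht _).le
    have hsplit : ∑ H ∈ E.powersetCard h, t ^ (H ∩ (Finset.cons x F hx)).card
        = t * B + A := by
      rw [← Finset.sum_filter_add_sum_filter_not (E.powersetCard h) (fun H => x ∈ H)]
      congr 1
      · rw [hB_def, Finset.mul_sum]
        apply Finset.sum_congr rfl
        intro H hH
        have hxH : x ∈ H := (Finset.mem_filter.1 hH).2
        have hinter : H ∩ (Finset.cons x F hx) = insert x (H ∩ F) := by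
          rw [Finset.cons_eq_insert, Finset.inter_comm, Finset.insert_inter_of_mem hxH,
            Finset.inter_comm F H]
        rw [hinter, Finset.card_insert_of_notMem (fun hmem => hx (Finset.mem_inter.1 hmem).2),
          pow_succ, mul_comm]
      · rw [hA_def]
        apply Finset.sum_congr rfl
        intro H hH
        have hxH : x ∉ H := (Finset.mem_filter.1 hH).2
        have hinter : H ∩ (Finset.cons x F hx) = H ∩ F := by
          rw [Finset.cons_eq_insert, Finset.inter_comm, Finset.insert_inter_of_notMem hxH,
            Finset.inter_comm F H]
        rw [hinter]
    have hcast : ((#E - h : ℕ) : ℝ) = (#E : ℝ) - h := by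
      rw [Nat.cast_sub hh]
    have key : (#E : ℝ) * (t * B + A) ≤ ((#E : ℝ) + (t - 1) * h) * (B + A) := by
      rcases le_total 1 t with ht1 | ht1
      · have hAB := AB_ge E h x hxE F hx t ht ht1
        rw [hcast] at hAB
        nlinarith [mul_le_mul_of_nonneg_left hAB (sub_nonneg.2 ht1)]
      · have hAB := AB_le E h x hxE F hx t ht ht1
        rw [hcast] at hAB
        nlinarith [mul_le_mul_of_nonneg_left hAB (sub_nonneg.2 ht1)]
    have step : ∑ H ∈ E.powersetCard h, t ^ (H ∩ (Finset.cons x F hx)).card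
        ≤ (1 + (t - 1) * h / #E) * (B + A) := by
      rw [hsplit, hfaceq, div_mul_eq_mul_div, le_div_iff₀ hM, mul_comm (t * B + A)]
      exact key
    have hZ : B + A = ∑ H ∈ E.powersetCard h, t ^ (H ∩ F).card := by
      rw [hA_def, hB_def]
      exact Finset.sum_filter_add_sum_filter_not _ _ _
    calc ∑ H ∈ E.powersetCard h, t ^ (H ∩ (Finset.cons x F hx)).card
        ≤ (1 + (t - 1) * h / #E) * (B + A) := step
      _ ≤ (1 + (t - 1) * h / #E) * ((1 + (t - 1) * h / #E) ^ F.card * ((#E).choose h)) := by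
          rw [hZ]
          exact mul_le_mul_of_nonneg_left (ih hFE) hfac
      _ = (1 + (t - 1) * h / #E) ^ (Finset.cons x F hx).card * ((#E).choose h) := by
          rw [Finset.card_cons, pow_succ]
          ring
end MGF2


lemma log11_lb : (0.093:ℝ) ≤ Real.log 1.1 := by
  rw [Real.le_log_iff_exp_le (by norm_num : (0:ℝ) < 1.1)]
  have h1 : (0.9535:ℝ) ≤ Real.exp (-0.0465) := by
    have := Real.add_one_le_exp (-0.0465)
    linarith
  have h2 : Real.exp 0.0465 ≤ 1/0.9535 := by
    rw [show (0.0465:ℝ) = -(-0.0465) by norm_num, Real.exp_neg]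
    rw [inv_le_comm₀ (Real.exp_pos _) (by norm_num)]
    calc (1/0.9535:ℝ)⁻¹ = 0.9535 := by norm_num
      _ ≤ _ := h1
  have h3 : Real.exp 0.093 = (Real.exp 0.0465) ^ 2 := by
    rw [← Real.exp_nat_mul]
    norm_num
  rw [h3]
  calc (Real.exp 0.0465) ^ 2 ≤ (1/0.9535) ^ 2 := by
        apply pow_le_pow_left₀ (Real.exp_pos _).le h2
    _ ≤ 1.1 := by norm_num

lemma log11_ub : Real.log 1.1 ≤ (0.0969:ℝ) := by
  rw [Real.log_le_iff_le_exp (by norm_num : (0:ℝ) < 1.1)]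
  have h1 : (1.0323:ℝ) ≤ Real.exp 0.0323 := by
    have := Real.add_one_le_exp (0.0323:ℝ)
    linarith
  have h3 : Real.exp 0.0969 = (Real.exp 0.0323) ^ 3 := by
    rw [← Real.exp_nat_mul]
    norm_num
  rw [h3]
  calc (1.1:ℝ) ≤ 1.0323 ^ 3 := by norm_num
    _ ≤ (Real.exp 0.0323) ^ 3 := by
        apply pow_le_pow_left₀ (by norm_num) h1


section CH
variable {α : Type*} [DecidableEq α]

lemma markov_count (E : Finset α) (h : ℕ) (t b : ℝ) (ht : 0 < t) (F : Finset α)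
    (p : Finset α → Prop)
    (hp : ∀ H ∈ E.powersetCard h, p H → t ^ b ≤ t ^ ((H ∩ F).card : ℝ)) :
    (#((E.powersetCard h).filter p) : ℝ) * t ^ b
      ≤ ∑ H ∈ E.powersetCard h, t ^ (H ∩ F).card := by
  have step1 : (#((E.powersetCard h).filter p) : ℝ) * t ^ b
      = ∑ _H ∈ (E.powersetCard h).filter p, t ^ b := by
    rw [Finset.sum_const, nsmul_eq_mul]
  rw [step1]
  calc ∑ _H ∈ (E.powersetCard h).filter p, t ^ b
      ≤ ∑ H ∈ (E.powersetCard h).filter p, t ^ ((H ∩ F).card : ℝ) := by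
        apply Finset.sum_le_sum
        intro H hH
        exact hp H (Finset.mem_of_mem_filter H hH) (Finset.mem_filter.1 hH).2
    _ = ∑ H ∈ (E.powersetCard h).filter p, t ^ (H ∩ F).card := by
        apply Finset.sum_congr rfl
        intro H _
        rw [Real.rpow_natCast]
    _ ≤ ∑ H ∈ E.powersetCard h, t ^ (H ∩ F).card := by
        apply Finset.sum_le_sum_of_subset_of_nonneg (Finset.filter_subset _ _)
        intro H _ _
        positivity

lemma chernoff_two_sided (E : Finset α) (h : ℕ) (hh : h ≤ #E) (hm : 0 < #E)
    (F : Finset α) (hF : F ⊆ E) :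
    (#((E.powersetCard h).filter (fun H =>
        ((H ∩ F).card : ℝ) < (h : ℝ) * F.card / #E / 1.1 ∨
        1.1 * ((h : ℝ) * F.card / #E) < ((H ∩ F).card : ℝ))) : ℝ)
      ≤ 2 * ((#E).choose h) * Real.exp (-(0.002) * ((h : ℝ) * F.card / #E)) := by
  set M : ℝ := (#E : ℝ) with hM_def
  have hMpos : (0:ℝ) < M := by rw [hM_def]; exact_mod_cast hm
  set μ : ℝ := (h : ℝ) * F.card / M with hμ_def
  have hμnn : 0 ≤ μ := by positivity
  have hfμ : (F.card : ℝ) * ((h : ℝ) / M) = μ := by rw [hμ_def]; ring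
  -- upper tail
  have hupper : (#((E.powersetCard h).filter (fun H => 1.1 * μ < ((H ∩ F).card : ℝ))) : ℝ)
      ≤ ((#E).choose h) * Real.exp (-(0.002) * μ) := by
    have hmark := markov_count E h 1.1 (1.1 * μ) (by norm_num) F
      (fun H => 1.1 * μ < ((H ∩ F).card : ℝ))
      (by
        intro H _ hp
        exact Real.rpow_le_rpow_of_exponent_le (by norm_num) hp.le)
    have hmgf := mgf_bound E h hh 1.1 (by norm_num) F hF
    have hfact : ((1:ℝ) + (1.1 - 1) * h / #E) ^ F.card ≤ Real.exp (0.1 * μ) := by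
      calc ((1:ℝ) + (1.1 - 1) * h / #E) ^ F.card
          ≤ (Real.exp ((1.1 - 1) * h / #E)) ^ F.card := by
            apply pow_le_pow_left₀ (by positivity)
            have := Real.add_one_le_exp ((1.1 - 1) * (h:ℝ) / #E)
            linarith
        _ = Real.exp ((F.card : ℝ) * ((1.1 - 1) * h / #E)) := by
            rw [← Real.exp_nat_mul]
        _ = Real.exp (0.1 * μ) := by
            rw [hμ_def]
            congr 1
            rw [hM_def]
            ring
    have hexp_pos : (0:ℝ) < (1.1:ℝ) ^ (1.1 * μ) := Real.rpow_pos_of_pos (by norm_num) _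
    have key : (#((E.powersetCard h).filter (fun H => 1.1 * μ < ((H ∩ F).card : ℝ))) : ℝ)
        ≤ ((#E).choose h) * Real.exp (0.1 * μ) / (1.1:ℝ) ^ (1.1 * μ) := by
      rw [le_div_iff₀ hexp_pos]
      calc (#((E.powersetCard h).filter (fun H => 1.1 * μ < ((H ∩ F).card : ℝ))) : ℝ)
            * (1.1:ℝ) ^ (1.1 * μ)
          ≤ ∑ H ∈ E.powersetCard h, (1.1:ℝ) ^ (H ∩ F).card := hmark
        _ ≤ ((1:ℝ) + (1.1 - 1) * h / #E) ^ F.card * ((#E).choose h) := hmgf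
        _ ≤ Real.exp (0.1 * μ) * ((#E).choose h) := by
            apply mul_le_mul_of_nonneg_right hfact (by positivity)
        _ = ((#E).choose h) * Real.exp (0.1 * μ) := by ring
    calc (#((E.powersetCard h).filter (fun H => 1.1 * μ < ((H ∩ F).card : ℝ))) : ℝ)
        ≤ ((#E).choose h) * Real.exp (0.1 * μ) / (1.1:ℝ) ^ (1.1 * μ) := key
      _ ≤ ((#E).choose h) * Real.exp (-(0.002) * μ) := by
          rw [Real.rpow_def_of_pos (by norm_num : (0:ℝ) < 1.1)]
          rw [div_eq_mul_inv, ← Real.exp_neg, mul_assoc, ← Real.exp_add]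
          apply mul_le_mul_of_nonneg_left _ (by positivity)
          apply Real.exp_le_exp.2
          have h2 : (0.093:ℝ) * μ ≤ Real.log 1.1 * μ := mul_le_mul_of_nonneg_right log11_lb hμnn
          have e1 : (0.1:ℝ) * μ + -(Real.log 1.1 * (1.1 * μ)) = 0.1 * μ - (Real.log 1.1 * μ) * 1.1 := by ring
          rw [e1]
          nlinarith [h2]
  -- lower tail
  have hlower : (#((E.powersetCard h).filter (fun H => ((H ∩ F).card : ℝ) < μ / 1.1)) : ℝ)
      ≤ ((#E).choose h) * Real.exp (-(0.002) * μ) := by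
    set t : ℝ := 10/11 with ht_def
    have ht : (0:ℝ) < t := by norm_num
    have hmark := markov_count E h t (μ / 1.1) ht F
      (fun H => ((H ∩ F).card : ℝ) < μ / 1.1)
      (by
        intro H _ hp
        exact Real.rpow_le_rpow_of_exponent_ge ht (by norm_num) hp.le)
    have hmgf := mgf_bound E h hh t ht F hF
    have hhM : (h:ℝ) ≤ M := by rw [hM_def]; exact_mod_cast hh
    have hfact : ((1:ℝ) + (t - 1) * h / #E) ^ F.card ≤ Real.exp ((t - 1) * μ) := by
      have hbase_nn : (0:ℝ) ≤ 1 + (t - 1) * h / #E := by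
        have hr : (h:ℝ)/M ≤ 1 := by rw [div_le_one hMpos]; exact hhM
        have hrn : (0:ℝ) ≤ (h:ℝ)/M := by positivity
        have heq : 1 + (t - 1) * (h:ℝ) / (#E:ℝ) = 1 - (1/11)*((h:ℝ)/M) := by
          rw [ht_def, hM_def]; ring
        rw [heq]; linarith
      calc ((1:ℝ) + (t - 1) * h / #E) ^ F.card
          ≤ (Real.exp ((t - 1) * h / #E)) ^ F.card := by
            apply pow_le_pow_left₀ hbase_nn
            have := Real.add_one_le_exp ((t - 1) * (h:ℝ) / #E)
            linarith
        _ = Real.exp ((F.card : ℝ) * ((t - 1) * h / #E)) := by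
            rw [← Real.exp_nat_mul]
        _ = Real.exp ((t - 1) * μ) := by
            rw [hμ_def]
            congr 1
            rw [hM_def]
            ring
    have hexp_pos : (0:ℝ) < t ^ (μ / 1.1) := Real.rpow_pos_of_pos ht _
    have key : (#((E.powersetCard h).filter (fun H => ((H ∩ F).card : ℝ) < μ / 1.1)) : ℝ)
        ≤ ((#E).choose h) * Real.exp ((t - 1) * μ) / t ^ (μ / 1.1) := by
      rw [le_div_iff₀ hexp_pos]
      calc (#((E.powersetCard h).filter (fun H => ((H ∩ F).card : ℝ) < μ / 1.1)) : ℝ)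
            * t ^ (μ / 1.1)
          ≤ ∑ H ∈ E.powersetCard h, t ^ (H ∩ F).card := hmark
        _ ≤ ((1:ℝ) + (t - 1) * h / #E) ^ F.card * ((#E).choose h) := hmgf
        _ ≤ Real.exp ((t - 1) * μ) * ((#E).choose h) := by
            apply mul_le_mul_of_nonneg_right hfact (by positivity)
        _ = ((#E).choose h) * Real.exp ((t - 1) * μ) := by ring
    have hlogt : Real.log t = - Real.log 1.1 := by
      rw [ht_def, show (10/11 : ℝ) = (1.1)⁻¹ by norm_num, Real.log_inv]
    calc (#((E.powersetCard h).filter (fun H => ((H ∩ F).card : ℝ) < μ / 1.1)) : ℝ)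
        ≤ ((#E).choose h) * Real.exp ((t - 1) * μ) / t ^ (μ / 1.1) := key
      _ ≤ ((#E).choose h) * Real.exp (-(0.002) * μ) := by
          rw [Real.rpow_def_of_pos ht]
          rw [div_eq_mul_inv, ← Real.exp_neg, mul_assoc, ← Real.exp_add]
          apply mul_le_mul_of_nonneg_left _ (by positivity)
          apply Real.exp_le_exp.2
          rw [hlogt, ht_def]
          have h2 : Real.log 1.1 * μ ≤ (0.0969:ℝ) * μ := mul_le_mul_of_nonneg_right log11_ub hμnn
          have e1 : ((10:ℝ)/11 - 1) * μ + -(-Real.log 1.1 * (μ / 1.1)) = (10/11 - 1) * μ + (Real.log 1.1 * μ) * (10/11) := by ring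
          rw [e1]
          nlinarith [h2]
  -- combine
  have hsplit : ((E.powersetCard h).filter (fun H =>
        ((H ∩ F).card : ℝ) < μ / 1.1 ∨ 1.1 * μ < ((H ∩ F).card : ℝ)))
      ⊆ ((E.powersetCard h).filter (fun H => ((H ∩ F).card : ℝ) < μ / 1.1))
        ∪ ((E.powersetCard h).filter (fun H => 1.1 * μ < ((H ∩ F).card : ℝ))) := by
    intro H hH
    rw [Finset.mem_filter] at hH
    rcases hH.2 with h1 | h1
    · exact Finset.mem_union_left _ (Finset.mem_filter.2 ⟨hH.1, h1⟩)
    · exact Finset.mem_union_right _ (Finset.mem_filter.2 ⟨hH.1, h1⟩)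
  calc (#((E.powersetCard h).filter (fun H =>
        ((H ∩ F).card : ℝ) < μ / 1.1 ∨ 1.1 * μ < ((H ∩ F).card : ℝ))) : ℝ)
      ≤ ((#(((E.powersetCard h).filter (fun H => ((H ∩ F).card : ℝ) < μ / 1.1))
          ∪ ((E.powersetCard h).filter (fun H => 1.1 * μ < ((H ∩ F).card : ℝ))))) : ℝ) := by
        exact_mod_cast Finset.card_le_card hsplit
    _ ≤ (#((E.powersetCard h).filter (fun H => ((H ∩ F).card : ℝ) < μ / 1.1)) : ℝ)
        + (#((E.powersetCard h).filter (fun H => 1.1 * μ < ((H ∩ F).card : ℝ))) : ℝ) := by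
        exact_mod_cast Finset.card_union_le _ _
    _ ≤ 2 * ((#E).choose h) * Real.exp (-(0.002) * μ) := by
        have := add_le_add hlower hupper
        linarith
end CH


noncomputable section CC
variable {n : ℕ} (G : SimpleGraph (Fin n))

def compat (c : Fin n → Fin n) (T : Finset (Fin n)) : Prop :=
  ∀ u v : Fin n, c u = c v → (u ∈ T ↔ v ∈ T)

def goodCuts (b : ℕ) (c : Fin n → Fin n) : Finset (Finset (Fin n)) :=
  univ.filter (fun T => compat c T ∧ T.Nonempty ∧ T ≠ univ ∧ #(cutF G T) ≤ b)

def interP (c : Fin n → Fin n) : Finset (Fin n × Fin n) :=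
  univ.filter (fun p => G.Adj p.1 p.2 ∧ c p.1 ≠ c p.2)

def merge (c : Fin n → Fin n) (u v : Fin n) : Fin n → Fin n :=
  fun w => if c w = c u then c v else c w

lemma image_merge (c : Fin n → Fin n) (u v : Fin n) (huv : c u ≠ c v) :
    univ.image (merge c u v) = (univ.image c).erase (c u) := by
  ext k
  simp only [Finset.mem_image, Finset.mem_erase, Finset.mem_univ, true_and, merge]
  constructor
  · rintro ⟨w, rfl⟩
    by_cases hw : c w = c u
    · rw [if_pos hw]
      exact ⟨fun h => huv h.symm, v, rfl⟩
    · simp only [if_neg hw]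
      exact ⟨hw, w, rfl⟩
  · rintro ⟨hk, w, rfl⟩
    refine ⟨w, ?_⟩
    rw [if_neg hk]

lemma card_image_merge (c : Fin n → Fin n) (u v : Fin n) (huv : c u ≠ c v) :
    #(univ.image (merge c u v)) = #(univ.image c) - 1 := by
  rw [image_merge c u v huv, Finset.card_erase_of_mem (Finset.mem_image_of_mem c (mem_univ u))]

lemma compat_merge (c : Fin n → Fin n) (u v : Fin n) (T : Finset (Fin n))
    (hc : compat c T) (hT : u ∈ T ↔ v ∈ T) : compat (merge c u v) T := by
  intro x y hxy
  unfold merge at hxy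
  by_cases hx : c x = c u <;> by_cases hy : c y = c u
  · exact hc x y (hx.trans hy.symm)
  · rw [if_pos hx, if_neg hy] at hxy
    calc x ∈ T ↔ u ∈ T := hc x u hx
      _ ↔ v ∈ T := hT
      _ ↔ y ∈ T := hc v y hxy
  · rw [if_neg hx, if_pos hy] at hxy
    calc x ∈ T ↔ v ∈ T := hc x v hxy
      _ ↔ u ∈ T := hT.symm
      _ ↔ y ∈ T := hc u y hy.symm
  · rw [if_neg hx, if_neg hy] at hxy
    exact hc x y hxy

lemma base_count (b : ℕ) (c : Fin n → Fin n) :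
    #(goodCuts G b c) ≤ 2 ^ #(univ.image c) := by
  have : #(goodCuts G b c) ≤ #((univ.image c).powerset) := by
    apply Finset.card_le_card_of_injOn (fun T => T.image c)
    · intro T hT
      rw [Finset.mem_coe, Finset.mem_powerset]
      intro k hk
      obtain ⟨x, _, rfl⟩ := Finset.mem_image.1 hk
      exact Finset.mem_image_of_mem c (mem_univ x)
    · intro T hT T' hT' him
      have him' : T.image c = T'.image c := him
      simp only [goodCuts, Finset.coe_filter, Set.mem_setOf_eq] at hT hT'
      have hmem : ∀ (S : Finset (Fin n)), compat c S → ∀ x, x ∈ S ↔ c x ∈ S.image c := by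
        intro S hS x
        constructor
        · exact fun hx => Finset.mem_image_of_mem c hx
        · intro hx
          obtain ⟨y, hy, hyx⟩ := Finset.mem_image.1 hx
          exact (hS y x hyx).1 hy
      ext x
      rw [hmem T hT.2.1 x, hmem T' hT'.2.1 x, him']
  calc #(goodCuts G b c) ≤ #((univ.image c).powerset) := this
    _ = 2 ^ #(univ.image c) := Finset.card_powerset _
end CC

noncomputable section CC2
variable {n : ℕ} (G : SimpleGraph (Fin n))

def cutPairs (T : Finset (Fin n)) : Finset (Fin n × Fin n) :=
  univ.filter (fun p => G.Adj p.1 p.2 ∧ p.1 ∈ T ∧ p.2 ∉ T)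

lemma card_cutPairs (T : Finset (Fin n)) : #(cutPairs G T) = #(cutF G T) :=
  card_orient G T

lemma card_cutPairs_swap (T : Finset (Fin n)) :
    #(univ.filter (fun p : Fin n × Fin n => G.Adj p.1 p.2 ∧ p.2 ∈ T ∧ p.1 ∉ T))
      = #(cutPairs G T) := by
  apply Finset.card_nbij (fun p => (p.2, p.1))
  · rintro ⟨u, v⟩ hp
    simp only [mem_coe, mem_filter, mem_univ, true_and, cutPairs] at hp ⊢
    exact ⟨hp.1.symm, hp.2.1, hp.2.2⟩
  · rintro ⟨u, v⟩ _ ⟨u', v'⟩ _ he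
    simp only [Prod.mk.injEq] at he
    simp [he.1, he.2]
  · rintro ⟨u, v⟩ hp
    simp only [Set.mem_image, mem_coe, mem_filter, mem_univ, true_and, cutPairs] at hp ⊢
    exact ⟨(v, u), ⟨hp.1.symm, hp.2.1, hp.2.2⟩, rfl⟩

lemma interP_card_ge (c : Fin n → Fin n) (hR : 2 ≤ #(univ.image c)) (s : ℕ)
    (hs : ∀ T : Finset (Fin n), T.Nonempty → T ≠ univ → s ≤ #(cutF G T)) :
    #(univ.image c) * s ≤ #(interP G c) := by
  have hfib : #(interP G c) = ∑ k ∈ univ.image c,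
      #((interP G c).filter (fun p => c p.1 = k)) := by
    apply Finset.card_eq_sum_card_fiberwise
    intro p _
    exact Finset.mem_image_of_mem c (mem_univ p.1)
  have hblock : ∀ k ∈ univ.image c,
      (interP G c).filter (fun p => c p.1 = k) = cutPairs G (univ.filter (fun x => c x = k)) := by
    intro k _
    ext ⟨u, v⟩
    simp only [interP, cutPairs, mem_filter, mem_univ, true_and]
    constructor
    · rintro ⟨⟨hadj, hne⟩, hk⟩
      exact ⟨hadj, hk, fun h2 => hne (hk.trans h2.symm)⟩
    · rintro ⟨hadj, h1, h2⟩
      exact ⟨⟨hadj, fun h => h2 (h ▸ h1)⟩, h1⟩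
  have hcut : ∀ k ∈ univ.image c, s ≤ #((interP G c).filter (fun p => c p.1 = k)) := by
    intro k hk
    rw [hblock k hk, card_cutPairs]
    have hne : (univ.filter (fun x => c x = k)).Nonempty := by
      obtain ⟨x, _, rfl⟩ := Finset.mem_image.1 hk
      exact ⟨x, by simp⟩
    have hproper : (univ.filter (fun x => c x = k)) ≠ univ := by
      obtain ⟨k1, hk1, k2, hk2, hkk⟩ := Finset.one_lt_card.1 hR
      obtain ⟨x1, _, rfl⟩ := Finset.mem_image.1 hk1
      obtain ⟨x2, _, rfl⟩ := Finset.mem_image.1 hk2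
      intro habs
      rcases eq_or_ne (c x1) k with h1 | h1
      · have h2 : x2 ∈ univ.filter (fun x => c x = k) := by rw [habs]; exact mem_univ x2
        rw [Finset.mem_filter] at h2
        exact hkk (by rw [h1, h2.2])
      · have h2 : x1 ∈ univ.filter (fun x => c x = k) := by rw [habs]; exact mem_univ x1
        rw [Finset.mem_filter] at h2
        exact h1 h2.2
    exact hs _ hne hproper
  calc #(univ.image c) * s = ∑ _k ∈ univ.image c, s := by
        rw [Finset.sum_const, smul_eq_mul]
    _ ≤ ∑ k ∈ univ.image c, #((interP G c).filter (fun p => c p.1 = k)) :=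
        Finset.sum_le_sum hcut
    _ = #(interP G c) := hfib.symm

lemma noncross_ge (c : Fin n → Fin n) (T : Finset (Fin n)) (b : ℕ)
    (hT : #(cutF G T) ≤ b) :
    #(interP G c) - 2 * b ≤ #((interP G c).filter (fun p => p.1 ∈ T ↔ p.2 ∈ T)) := by
  have hsplit := Finset.card_filter_add_card_filter_not
    (s := interP G c) (p := fun p => p.1 ∈ T ↔ p.2 ∈ T)
  have hsub : (interP G c).filter (fun p => ¬(p.1 ∈ T ↔ p.2 ∈ T))
      ⊆ cutPairs G T ∪ univ.filter (fun p : Fin n × Fin n => G.Adj p.1 p.2 ∧ p.2 ∈ T ∧ p.1 ∉ T) := by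
    rintro ⟨u, v⟩ hp
    simp only [mem_filter, interP, mem_univ, true_and, cutPairs, Finset.mem_union] at hp ⊢
    obtain ⟨⟨hadj, _⟩, hns⟩ := hp
    by_cases hu : u ∈ T
    · exact Or.inl ⟨hadj, hu, fun hv => hns ⟨fun _ => hv, fun _ => hu⟩⟩
    · refine Or.inr ⟨hadj, ?_, hu⟩
      by_contra hv
      exact hns ⟨fun h => absurd h hu, fun h => absurd h hv⟩
  have hcross : #((interP G c).filter (fun p => ¬(p.1 ∈ T ↔ p.2 ∈ T))) ≤ 2 * b := by
    calc #((interP G c).filter (fun p => ¬(p.1 ∈ T ↔ p.2 ∈ T)))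
        ≤ #(cutPairs G T ∪ univ.filter (fun p : Fin n × Fin n => G.Adj p.1 p.2 ∧ p.2 ∈ T ∧ p.1 ∉ T)) :=
          Finset.card_le_card hsub
      _ ≤ #(cutPairs G T) + #(univ.filter (fun p : Fin n × Fin n => G.Adj p.1 p.2 ∧ p.2 ∈ T ∧ p.1 ∉ T)) :=
          Finset.card_union_le _ _
      _ = #(cutPairs G T) + #(cutPairs G T) := by rw [card_cutPairs_swap]
      _ = 2 * #(cutF G T) := by rw [card_cutPairs]; omega
      _ ≤ 2 * b := by omega
  omega
end CC2

section CC3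
variable {n : ℕ} (G : SimpleGraph (Fin n))

lemma swap_count (c : Fin n → Fin n) (b : ℕ) :
    ∑ p ∈ interP G c, #((goodCuts G b c).filter (fun T => p.1 ∈ T ↔ p.2 ∈ T))
      = ∑ T ∈ goodCuts G b c, #((interP G c).filter (fun p => p.1 ∈ T ↔ p.2 ∈ T)) := by
  have h1 : ∀ p ∈ interP G c, #((goodCuts G b c).filter (fun T => p.1 ∈ T ↔ p.2 ∈ T))
      = ∑ T ∈ goodCuts G b c, if p.1 ∈ T ↔ p.2 ∈ T then 1 else 0 := by
    intro p _
    rw [Finset.card_filter]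
  have h2 : ∀ T ∈ goodCuts G b c, #((interP G c).filter (fun p => p.1 ∈ T ↔ p.2 ∈ T))
      = ∑ p ∈ interP G c, if p.1 ∈ T ↔ p.2 ∈ T then 1 else 0 := by
    intro T _
    rw [Finset.card_filter]
  rw [Finset.sum_congr rfl h1, Finset.sum_congr rfl h2, Finset.sum_comm]

lemma merge_sub (c : Fin n → Fin n) (b : ℕ) (p : Fin n × Fin n) :
    (goodCuts G b c).filter (fun T => p.1 ∈ T ↔ p.2 ∈ T) ⊆ goodCuts G b (merge c p.1 p.2) := by
  intro T hT
  rw [Finset.mem_filter] at hT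
  obtain ⟨hT1, hside⟩ := hT
  simp only [goodCuts, Finset.mem_filter, mem_univ, true_and] at hT1 ⊢
  exact ⟨compat_merge c p.1 p.2 T hT1.1 hside, hT1.2⟩

lemma merge_step (a b s : ℕ) (hb : b ≤ a * s) (hs1 : 1 ≤ s) (ha : 1 ≤ a)
    (hs : ∀ T : Finset (Fin n), T.Nonempty → T ≠ univ → s ≤ #(cutF G T))
    (c : Fin n → Fin n) (hR : 2 * a + 2 ≤ #(univ.image c)) :
    ∃ p : Fin n × Fin n, c p.1 ≠ c p.2 ∧
      #(goodCuts G b c) * (#(univ.image c) - 2 * a)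
        ≤ #(univ.image c) * #(goodCuts G b (merge c p.1 p.2)) := by
  set R := #(univ.image c) with hR_def
  set M := #(interP G c) with hM_def
  set N := #(goodCuts G b c) with hN_def
  have hM_ge : R * s ≤ M := interP_card_ge G c (by omega) s hs
  have hMpos : 0 < M := by
    have : 0 < R * s := Nat.mul_pos (by omega) hs1
    omega
  have hsum : M * (N * (M - 2 * b))
      ≤ M * ∑ p ∈ interP G c, #(goodCuts G b (merge c p.1 p.2)) := by
    apply Nat.mul_le_mul_left
    calc N * (M - 2 * b) = ∑ _T ∈ goodCuts G b c, (M - 2 * b) := by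
          rw [Finset.sum_const, smul_eq_mul]
      _ ≤ ∑ T ∈ goodCuts G b c, #((interP G c).filter (fun p => p.1 ∈ T ↔ p.2 ∈ T)) := by
          apply Finset.sum_le_sum
          intro T hT
          apply noncross_ge
          simp only [goodCuts, Finset.mem_filter] at hT
          exact hT.2.2.2.2
      _ = ∑ p ∈ interP G c, #((goodCuts G b c).filter (fun T => p.1 ∈ T ↔ p.2 ∈ T)) :=
          (swap_count G c b).symm
      _ ≤ ∑ p ∈ interP G c, #(goodCuts G b (merge c p.1 p.2)) := by
          apply Finset.sum_le_sum
          intro p _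
          exact Finset.card_le_card (merge_sub G c b p)
  have hex : ∃ p ∈ interP G c, N * (M - 2 * b) ≤ M * #(goodCuts G b (merge c p.1 p.2)) := by
    apply Finset.exists_le_of_sum_le (Finset.card_pos.1 hMpos)
    rw [Finset.sum_const, smul_eq_mul, ← hM_def, ← Finset.mul_sum]
    exact hsum
  obtain ⟨p, hpmem, hp⟩ := hex
  have hpne : c p.1 ≠ c p.2 := by
    simp only [interP, Finset.mem_filter] at hpmem
    exact hpmem.2.2
  refine ⟨p, hpne, ?_⟩
  -- now: N * (R - 2a) ≤ R * N'
  set N' := #(goodCuts G b (merge c p.1 p.2)) with hN'_def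
  have h2as : 2 * a * s ≤ M := by nlinarith
  have h2b : N * (M - 2 * a * s) ≤ N * (M - 2 * b) := by
    apply Nat.mul_le_mul_left
    have hbb : 2 * b ≤ 2 * a * s := by
      calc 2 * b ≤ 2 * (a * s) := Nat.mul_le_mul_left 2 hb
        _ = 2 * a * s := (mul_assoc 2 a s).symm
    exact Nat.sub_le_sub_left hbb M
  have hkey : N * (M - 2 * a * s) ≤ M * N' := le_trans h2b hp
  -- (R - 2a) * M ≤ R * (M - 2as)  since  R*s ≤ M
  have hcomp : (R - 2 * a) * M ≤ R * (M - 2 * a * s) := by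
    have h1 : 2 * a ≤ R := by omega
    have e1 : (R - 2 * a) * M = R * M - 2 * a * M := by
      rw [Nat.sub_mul]
    have e2 : R * (M - 2 * a * s) = R * M - R * (2 * a * s) := by
      rw [Nat.mul_sub]
    rw [e1, e2]
    apply Nat.sub_le_sub_left
    calc R * (2 * a * s) = 2 * a * (R * s) := by ring
      _ ≤ 2 * a * M := Nat.mul_le_mul_left _ hM_ge
  have : (N * (R - 2 * a)) * M ≤ (R * N') * M := by
    calc (N * (R - 2 * a)) * M = N * ((R - 2 * a) * M) := by ring
      _ ≤ N * (R * (M - 2 * a * s)) := Nat.mul_le_mul_left _ hcomp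
      _ = R * (N * (M - 2 * a * s)) := by ring
      _ ≤ R * (M * N') := Nat.mul_le_mul_left _ hkey
      _ = (R * N') * M := by ring
  exact Nat.le_of_mul_le_mul_right this hMpos

end CC3

section CC4
variable {n : ℕ} (G : SimpleGraph (Fin n))

lemma choose_identity (k r : ℕ) (hk : k ≤ r) :
    (r + 1 - k) * (r + 1).choose k = (r + 1) * r.choose k := by
  have h1 : (r + 1).choose k * (k.factorial * (r + 1 - k).factorial) = (r + 1).factorial := by
    have := Nat.choose_mul_factorial_mul_factorial (le_trans hk (Nat.le_succ r))
    calc (r + 1).choose k * (k.factorial * (r + 1 - k).factorial)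
        = (r + 1).choose k * k.factorial * (r + 1 - k).factorial := by ring
      _ = (r + 1).factorial := this
  have h2 : r.choose k * (k.factorial * (r - k).factorial) = r.factorial := by
    have := Nat.choose_mul_factorial_mul_factorial hk
    calc r.choose k * (k.factorial * (r - k).factorial)
        = r.choose k * k.factorial * (r - k).factorial := by ring
      _ = r.factorial := this
  have hsub : r + 1 - k = (r - k) + 1 := by omega
  have hfac : (r + 1 - k).factorial = (r + 1 - k) * (r - k).factorial := by
    rw [hsub, Nat.factorial_succ, ← hsub]
  apply Nat.eq_of_mul_eq_mul_right (Nat.mul_pos (Nat.factorial_pos k) (Nat.factorial_pos (r - k)))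
  calc (r + 1 - k) * (r + 1).choose k * (k.factorial * (r - k).factorial)
      = (r + 1).choose k * (k.factorial * ((r + 1 - k) * (r - k).factorial)) := by ring
    _ = (r + 1).choose k * (k.factorial * (r + 1 - k).factorial) := by rw [← hfac]
    _ = (r + 1).factorial := h1
    _ = (r + 1) * r.factorial := Nat.factorial_succ r
    _ = (r + 1) * (r.choose k * (k.factorial * (r - k).factorial)) := by rw [h2]
    _ = (r + 1) * r.choose k * (k.factorial * (r - k).factorial) := by ring

lemma prod_ratio_le_choose (a : ℕ) :
    ∀ r, 2 * a + 1 ≤ r →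
      ∏ i ∈ Finset.Icc (2 * a + 2) r, ((i : ℝ) / ((i : ℝ) - 2 * a))
        ≤ (r.choose (2 * a) : ℝ) := by
  refine Nat.le_induction ?_ ?_
  · rw [show Finset.Icc (2 * a + 2) (2 * a + 1) = ∅ by
        apply Finset.Icc_eq_empty; omega]
    rw [Finset.prod_empty]
    exact_mod_cast Nat.one_le_iff_ne_zero.2 (Nat.choose_pos (by omega : 2 * a ≤ 2 * a + 1)).ne'
  · intro r hr ih
    rw [Finset.prod_Icc_succ_top (by omega : 2 * a + 2 ≤ r + 1)]
    have hfac_pos : (0:ℝ) < (r : ℝ) + 1 - 2 * a := by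
      have : 2 * a < r + 1 := by omega
      have := (Nat.cast_lt (α := ℝ)).2 this
      push_cast at this ⊢
      linarith
    have hterm_nn : (0:ℝ) ≤ ((r + 1 : ℕ) : ℝ) / (((r + 1 : ℕ) : ℝ) - 2 * a) := by
      apply div_nonneg (by positivity)
      push_cast
      linarith
    calc (∏ i ∈ Finset.Icc (2 * a + 2) r, ((i : ℝ) / ((i : ℝ) - 2 * a)))
          * (((r + 1 : ℕ) : ℝ) / (((r + 1 : ℕ) : ℝ) - 2 * a))
        ≤ (r.choose (2 * a) : ℝ) * (((r + 1 : ℕ) : ℝ) / (((r + 1 : ℕ) : ℝ) - 2 * a)) := by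
          apply mul_le_mul_of_nonneg_right ih hterm_nn
      _ ≤ ((r + 1).choose (2 * a) : ℝ) := by
          have hpos : (0:ℝ) < ((r + 1 : ℕ) : ℝ) - 2 * a := by push_cast at hfac_pos ⊢; linarith
          rw [show (r.choose (2 * a) : ℝ) * (((r + 1 : ℕ) : ℝ) / (((r + 1 : ℕ) : ℝ) - 2 * a))
              = (((r + 1 : ℕ) : ℝ) * (r.choose (2 * a) : ℝ)) * (((r + 1 : ℕ) : ℝ) - 2 * a)⁻¹ from by
            rw [div_eq_mul_inv]; ring]
          rw [mul_inv_le_iff₀ hpos]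
          have hid := choose_identity (2 * a) r (by omega)
          have hid' : (((r + 1 - 2 * a) : ℕ) : ℝ) * ((r + 1).choose (2 * a) : ℝ)
              = ((r + 1 : ℕ) : ℝ) * (r.choose (2 * a) : ℝ) := by
            exact_mod_cast congrArg (Nat.cast (R := ℝ)) hid
          have hcast : (((r + 1 - 2 * a) : ℕ) : ℝ) = ((r + 1 : ℕ) : ℝ) - 2 * a := by
            have : 2 * a ≤ r + 1 := by omega
            push_cast [this]
            ring
          rw [hcast] at hid'
          exact le_of_eq (by rw [← hid']; ring)

end CC4

section CC5
variable {n : ℕ} (G : SimpleGraph (Fin n))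

lemma prod_ratio_ge_one (a r : ℕ) :
    (1:ℝ) ≤ ∏ i ∈ Finset.Icc (2 * a + 2) r, ((i : ℝ) / ((i : ℝ) - 2 * a)) := by
  calc (1:ℝ) = ∏ _i ∈ Finset.Icc (2 * a + 2) r, (1:ℝ) := by rw [Finset.prod_const_one]
    _ ≤ _ := Finset.prod_le_prod (by intro i _; norm_num) ?_
  intro i hi
  rw [Finset.mem_Icc] at hi
  have h1 : (0:ℝ) < (i:ℝ) - 2 * a := by
    have : 2 * a + 2 ≤ i := hi.1
    have := (Nat.cast_le (α := ℝ)).2 this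
    push_cast at this
    linarith
  rw [one_le_div h1]
  linarith

lemma cut_count_aux (a b s : ℕ) (ha : 1 ≤ a) (hs1 : 1 ≤ s) (hb : b ≤ a * s)
    (hs : ∀ T : Finset (Fin n), T.Nonempty → T ≠ univ → s ≤ #(cutF G T)) :
    ∀ r : ℕ, ∀ c : Fin n → Fin n, #(univ.image c) = r →
      (#(goodCuts G b c) : ℝ)
        ≤ 2 ^ (2 * a + 1) * ∏ i ∈ Finset.Icc (2 * a + 2) r, ((i : ℝ) / ((i : ℝ) - 2 * a)) := by
  intro r
  induction r with
  | zero =>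
    intro c hc
    have h2 : #(goodCuts G b c) ≤ 1 := by
      have := base_count G b c
      rw [hc] at this
      simpa using this
    have hprod := prod_ratio_ge_one a 0
    have h2pow : (1:ℝ) ≤ 2 ^ (2 * a + 1) := one_le_pow₀ (by norm_num)
    have : (#(goodCuts G b c) : ℝ) ≤ 1 := by exact_mod_cast h2
    nlinarith
  | succ r ih =>
    intro c hc
    by_cases hsm : r + 1 ≤ 2 * a + 1
    · have h2 : #(goodCuts G b c) ≤ 2 ^ (2 * a + 1) := by
        have := base_count G b c
        rw [hc] at this
        exact le_trans this (Nat.pow_le_pow_right (by norm_num) hsm)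
      have hprod := prod_ratio_ge_one a (r + 1)
      have h2' : (#(goodCuts G b c) : ℝ) ≤ (2:ℝ) ^ (2 * a + 1) := by exact_mod_cast h2
      nlinarith [pow_pos (show (0:ℝ) < 2 by norm_num) (2 * a + 1)]
    · have hR : 2 * a + 2 ≤ #(univ.image c) := by omega
      obtain ⟨p, hpne, hstep⟩ := merge_step G a b s hb hs1 ha hs c hR
      have hc' : #(univ.image (merge c p.1 p.2)) = r := by
        rw [card_image_merge c p.1 p.2 hpne, hc]
        omega
      have ihm := ih (merge c p.1 p.2) hc'
      rw [hc] at hstep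
      set N := #(goodCuts G b c) with hN_def
      set N' := #(goodCuts G b (merge c p.1 p.2)) with hN'_def
      have hcast : (((r + 1 - 2 * a) : ℕ) : ℝ) = ((r + 1 : ℕ) : ℝ) - 2 * a := by
        have : 2 * a ≤ r + 1 := by omega
        push_cast [this]
        ring
      have hstepR : (N : ℝ) * (((r + 1 : ℕ) : ℝ) - 2 * a) ≤ ((r + 1 : ℕ) : ℝ) * (N' : ℝ) := by
        rw [← hcast]
        exact_mod_cast hstep
      have hdenpos : (0:ℝ) < ((r + 1 : ℕ) : ℝ) - 2 * a := by
        have : 2 * a + 2 ≤ r + 1 := by omega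
        have := (Nat.cast_le (α := ℝ)).2 this
        push_cast at this ⊢
        linarith
      have hNle : (N : ℝ) ≤ ((r + 1 : ℕ) : ℝ) / (((r + 1 : ℕ) : ℝ) - 2 * a) * (N' : ℝ) := by
        rw [div_mul_eq_mul_div, le_div_iff₀ hdenpos]
        exact hstepR
      have hfrac_nn : (0:ℝ) ≤ ((r + 1 : ℕ) : ℝ) / (((r + 1 : ℕ) : ℝ) - 2 * a) :=
        div_nonneg (by positivity) hdenpos.le
      calc (N : ℝ) ≤ ((r + 1 : ℕ) : ℝ) / (((r + 1 : ℕ) : ℝ) - 2 * a) * (N' : ℝ) := hNle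
        _ ≤ ((r + 1 : ℕ) : ℝ) / (((r + 1 : ℕ) : ℝ) - 2 * a)
            * (2 ^ (2 * a + 1) * ∏ i ∈ Finset.Icc (2 * a + 2) r, ((i : ℝ) / ((i : ℝ) - 2 * a))) :=
          mul_le_mul_of_nonneg_left ihm hfrac_nn
        _ = 2 ^ (2 * a + 1) * ∏ i ∈ Finset.Icc (2 * a + 2) (r + 1), ((i : ℝ) / ((i : ℝ) - 2 * a)) := by
          rw [Finset.prod_Icc_succ_top (by omega : 2 * a + 2 ≤ r + 1)]
          ring

lemma cut_count (a b s : ℕ) (ha : 1 ≤ a) (hs1 : 1 ≤ s) (hb : b ≤ a * s) (hn : 2 ≤ n)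
    (hs : ∀ T : Finset (Fin n), T.Nonempty → T ≠ univ → s ≤ #(cutF G T)) :
    (#(univ.filter (fun T : Finset (Fin n) => T.Nonempty ∧ T ≠ univ ∧ #(cutF G T) ≤ b)) : ℝ)
      ≤ (n : ℝ) ^ (7 * a) := by
  have hgood : goodCuts G b (id : Fin n → Fin n)
      = univ.filter (fun T : Finset (Fin n) => T.Nonempty ∧ T ≠ univ ∧ #(cutF G T) ≤ b) := by
    apply Finset.filter_congr
    intro T _
    constructor
    · rintro ⟨_, h⟩; exact h
    · intro h
      refine ⟨?_, h⟩
      intro u v huv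
      rw [show u = v from huv]
  rw [← hgood]
  have himid : #(univ.image (id : Fin n → Fin n)) = n := by
    rw [Finset.image_id, Finset.card_univ, Fintype.card_fin]
  have haux := cut_count_aux G a b s ha hs1 hb hs n id himid
  have h2n : (2:ℝ) ^ (2 * a + 1) ≤ (n:ℝ) ^ (3 * a) := by
    calc (2:ℝ) ^ (2 * a + 1) ≤ (2:ℝ) ^ (3 * a) := by
          apply pow_le_pow_right₀ (by norm_num)
          omega
      _ ≤ (n:ℝ) ^ (3 * a) := by
          apply pow_le_pow_left₀ (by norm_num)
          exact_mod_cast hn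
  by_cases hcase : 2 * a + 1 ≤ n
  · have hprod := prod_ratio_le_choose a n hcase
    have hchoose : (n.choose (2 * a) : ℝ) ≤ (n:ℝ) ^ (2 * a) := by
      exact_mod_cast Nat.choose_le_pow n (2 * a)
    calc (#(goodCuts G b (id : Fin n → Fin n)) : ℝ)
        ≤ 2 ^ (2 * a + 1) * ∏ i ∈ Finset.Icc (2 * a + 2) n, ((i : ℝ) / ((i : ℝ) - 2 * a)) := haux
      _ ≤ (n:ℝ) ^ (3 * a) * (n:ℝ) ^ (2 * a) := by
          apply mul_le_mul h2n (le_trans hprod hchoose)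
            (le_trans zero_le_one (prod_ratio_ge_one a n)) (by positivity)
      _ = (n:ℝ) ^ (5 * a) := by rw [← pow_add]; congr 1; omega
      _ ≤ (n:ℝ) ^ (7 * a) := by
          apply pow_le_pow_right₀ (by exact_mod_cast (by omega : 1 ≤ n))
          omega
  · have hempty : Finset.Icc (2 * a + 2) n = ∅ := by
      apply Finset.Icc_eq_empty
      omega
    rw [hempty, Finset.prod_empty, mul_one] at haux
    calc (#(goodCuts G b (id : Fin n → Fin n)) : ℝ) ≤ 2 ^ (2 * a + 1) := haux
      _ ≤ (n:ℝ) ^ (3 * a) := h2n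
      _ ≤ (n:ℝ) ^ (7 * a) := by
          apply pow_le_pow_right₀ (by exact_mod_cast (by omega : 1 ≤ n))
          omega

end CC5


section Final
open Finset

lemma tail_iff (m h f X : ℝ) (hm : 0 < m) (hh : 0 < h) :
    (f / 1.1 ≤ m / h * X ∧ m / h * X ≤ 1.1 * f) ↔
      (h * f / m / 1.1 ≤ X ∧ X ≤ 1.1 * (h * f / m)) := by
  have e1 : m / h * X = m * X / h := by ring
  have h11 : (0:ℝ) < 1.1 := by norm_num
  have ha : (f / 1.1 ≤ m / h * X) ↔ (f * h ≤ m * X * 1.1) := by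
    rw [e1]; exact div_le_div_iff₀ h11 hh
  have hb : (m / h * X ≤ 1.1 * f) ↔ (m * X ≤ 1.1 * f * h) := by
    rw [e1]; exact div_le_iff₀ hh
  have hc : (h * f / m / 1.1 ≤ X) ↔ (h * f ≤ X * (m * 1.1)) := by
    rw [div_div]; exact div_le_iff₀ (by positivity)
  have hd : (X ≤ 1.1 * (h * f / m)) ↔ (X * m ≤ 1.1 * (h * f)) := by
    rw [show (1.1:ℝ) * (h * f / m) = (1.1 * (h * f)) / m from by ring]
    exact le_div_iff₀ hm
  rw [ha, hb, hc, hd]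
  constructor <;> rintro ⟨u, v⟩ <;> constructor <;> nlinarith

set_option maxHeartbeats 3000000 in
/-- There are absolute constants `c, C > 0` such that: for every connected
simple graph `G` on `n ≥ 2` vertices with `m` edges and minimum cut value `s ≥ c·log n`,
with `h = ⌈C·m·(log n)/s⌉ ≤ m`, a uniformly random `h`-element subset `H` of the edges
satisfies, with probability at least `9/10`, simultaneously for every nonempty proper
`S ⊂ V`: `(m/h)·|H ∩ E(S, V∖S)|` lies in `[|E(S,V∖S)|/1.1, 1.1·|E(S,V∖S)|]`.
The probability is expressed as a count of good `h`-subsets over `m choose h`. -/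
theorem stmt3 :
    ∃ c C : ℝ, 0 < c ∧ 0 < C ∧
      ∀ (n : ℕ), 2 ≤ n →
      ∀ (G : SimpleGraph (Fin n)), G.Connected →
      ∀ m : ℕ, m = G.edgeSet.ncard →
      ∀ s : ℕ,
        IsLeast {k : ℕ | ∃ S : Set (Fin n), S.Nonempty ∧ Sᶜ.Nonempty ∧
          k = (cutEdges G S).ncard} s →
        c * Real.log n ≤ (s : ℝ) →
      ∀ h : ℕ, h = ⌈C * (m : ℝ) * Real.log n / (s : ℝ)⌉₊ → h ≤ m →
        (9 : ℝ) / 10 ≤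
          (({H : Finset (Sym2 (Fin n)) | ↑H ⊆ G.edgeSet ∧ H.card = h ∧
              ∀ S : Set (Fin n), S.Nonempty → Sᶜ.Nonempty →
                ((cutEdges G S).ncard : ℝ) / 1.1
                    ≤ ((m : ℝ) / (h : ℝ)) * (((H : Set (Sym2 (Fin n))) ∩ cutEdges G S).ncard : ℝ) ∧
                ((m : ℝ) / (h : ℝ)) * (((H : Set (Sym2 (Fin n))) ∩ cutEdges G S).ncard : ℝ)
                    ≤ 1.1 * ((cutEdges G S).ncard : ℝ)}.ncard : ℝ))
            / ((m.choose h : ℕ) : ℝ) := by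
  refine ⟨1, 30000, by norm_num, by norm_num, ?_⟩
  intro n hn G _hGconn m hm s hsL hslog h hhdef hhm
  have hn1 : (1:ℝ) < n := by exact_mod_cast (by omega : 1 < n)
  have hL : 0 < Real.log n := Real.log_pos hn1
  have hs_pos : 0 < s := by
    by_contra hs0
    push_neg at hs0
    have hs0' : s = 0 := by omega
    rw [hs0'] at hslog
    push_cast at hslog
    linarith
  have hsR : (0:ℝ) < s := by exact_mod_cast hs_pos
  have hmE : m = #G.edgeFinset := by
    rw [hm, ← SimpleGraph.coe_edgeFinset, Set.ncard_coe_finset]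
  have hcut_lb : ∀ T : Finset (Fin n), T.Nonempty → T ≠ univ → s ≤ #(cutF G T) := by
    intro T hT1 hT2
    have hx : ∃ x, x ∉ T := by
      by_contra hall
      push_neg at hall
      exact hT2 (Finset.eq_univ_iff_forall.2 hall)
    obtain ⟨x, hx⟩ := hx
    refine hsL.2 ⟨↑T, ?_, ⟨x, by simp [hx]⟩, ?_⟩
    · exact_mod_cast hT1
    · rw [cutEdges_coe, Set.ncard_coe_finset]
  have hm1 : 0 < m := by
    obtain ⟨S₀, hS1, hS2, hSe⟩ := hsL.1
    have hcoe : (↑S₀.toFinset : Set (Fin n)) = S₀ := Set.coe_toFinset S₀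
    have hEq : cutEdges G S₀ = ↑(cutF G S₀.toFinset) := by rw [← cutEdges_coe, hcoe]
    have : s = #(cutF G S₀.toFinset) := by
      rw [hSe, hEq, Set.ncard_coe_finset]
    have hle : #(cutF G S₀.toFinset) ≤ #G.edgeFinset :=
      Finset.card_le_card (Finset.filter_subset _ _)
    omega
  have hmR : (0:ℝ) < m := by exact_mod_cast hm1
  have hh1 : 0 < h := by
    rw [hhdef]
    exact Nat.ceil_pos.2 (by positivity)
  have hhR : (0:ℝ) < h := by exact_mod_cast hh1
  have hch : 0 < m.choose h := Nat.choose_pos hhm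
  have hchR : (0:ℝ) < m.choose h := by exact_mod_cast hch
  have hhle : (30000:ℝ) * m * Real.log n / s ≤ h := by
    rw [hhdef]
    exact Nat.le_ceil _
  have hhEm : h ≤ #G.edgeFinset := by omega
  have hEpos : 0 < #G.edgeFinset := by omega
  -- μ lower bound per cut
  have hmu_lb : ∀ T : Finset (Fin n), T.Nonempty → T ≠ univ →
      (30000:ℝ) * Real.log n * (2 ^ (Nat.log 2 (#(cutF G T) / s)) : ℕ)
        ≤ (h:ℝ) * #(cutF G T) / #G.edgeFinset := by
    intro T hT1 hT2
    have hf_lb := hcut_lb T hT1 hT2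
    have hfs1 : 1 ≤ #(cutF G T) / s := (Nat.one_le_div_iff hs_pos).2 hf_lb
    have hpow : ((2 ^ (Nat.log 2 (#(cutF G T) / s)) : ℕ) : ℝ) ≤ ((#(cutF G T) / s : ℕ) : ℝ) := by
      exact_mod_cast Nat.pow_log_le_self 2 (by omega : #(cutF G T) / s ≠ 0)
    have hdivle : ((#(cutF G T) / s : ℕ) : ℝ) ≤ (#(cutF G T) : ℝ) / s := Nat.cast_div_le
    have hfR : (0:ℝ) ≤ (#(cutF G T) : ℝ) := by positivity
    have hstep : (30000:ℝ) * Real.log n * ((#(cutF G T) : ℝ) / s)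
        ≤ (h:ℝ) * #(cutF G T) / #G.edgeFinset := by
      have hEeq : ((#G.edgeFinset : ℕ) : ℝ) = (m:ℝ) := by exact_mod_cast hmE.symm
      rw [hEeq]
      have h1 : (30000:ℝ) * m * Real.log n / s * ((#(cutF G T) : ℝ) / m)
          ≤ (h:ℝ) * ((#(cutF G T) : ℝ) / m) := by
        apply mul_le_mul_of_nonneg_right hhle (by positivity)
      calc (30000:ℝ) * Real.log n * ((#(cutF G T) : ℝ) / s)
          = (30000:ℝ) * m * Real.log n / s * ((#(cutF G T) : ℝ) / m) := by
            field_simp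
        _ ≤ (h:ℝ) * ((#(cutF G T) : ℝ) / m) := h1
        _ = (h:ℝ) * #(cutF G T) / m := by ring
    calc (30000:ℝ) * Real.log n * (2 ^ (Nat.log 2 (#(cutF G T) / s)) : ℕ)
        ≤ (30000:ℝ) * Real.log n * ((#(cutF G T) : ℝ) / s) := by
          apply mul_le_mul_of_nonneg_left (le_trans hpow hdivle) (by positivity)
      _ ≤ _ := hstep
  -- setup of counting objects
  set P := G.edgeFinset.powersetCard h with hP_def
  have hPcard : #P = m.choose h := by rw [hP_def, Finset.card_powersetCard, ← hmE]
  set Sfin := univ.filter (fun T : Finset (Fin n) => T.Nonempty ∧ T ≠ univ) with hSfin_def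
  have hcheq : (#G.edgeFinset).choose h = m.choose h := by rw [← hmE]
  have hEmR : ((#G.edgeFinset : ℕ):ℝ) = (m:ℝ) := by exact_mod_cast hmE.symm
  have hperT : ∀ T ∈ Sfin,
      (#(P.filter (fun H => ((#(H ∩ cutF G T)) : ℝ) < (h:ℝ) * #(cutF G T) / #G.edgeFinset / 1.1 ∨
          1.1 * ((h:ℝ) * #(cutF G T) / #G.edgeFinset) < ((#(H ∩ cutF G T)) : ℝ))) : ℝ)
        ≤ 2 * (m.choose h) *
            Real.exp (-(60 * Real.log n) * ((2 ^ (Nat.log 2 (#(cutF G T) / s)) : ℕ) : ℝ)) := by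
    intro T hT
    rw [hSfin_def, Finset.mem_filter] at hT
    obtain ⟨_, hT1, hT2⟩ := hT
    have hch2 := chernoff_two_sided G.edgeFinset h hhEm hEpos (cutF G T)
      (Finset.filter_subset _ _)
    rw [hcheq] at hch2
    refine le_trans hch2 ?_
    apply mul_le_mul_of_nonneg_left _ (by positivity)
    apply Real.exp_le_exp.2
    nlinarith [hmu_lb T hT1 hT2]
  have hfib_count : ∀ j : ℕ,
      (#(Sfin.filter (fun T => Nat.log 2 (#(cutF G T) / s) = j)) : ℝ)
        ≤ (n:ℝ) ^ (7 * 2 ^ (j+2)) := by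
    intro j
    have hsub : Sfin.filter (fun T => Nat.log 2 (#(cutF G T) / s) = j)
        ⊆ univ.filter (fun T : Finset (Fin n) =>
            T.Nonempty ∧ T ≠ univ ∧ #(cutF G T) ≤ 2 ^ (j+2) * s) := by
      intro T hT
      rw [Finset.mem_filter, hSfin_def, Finset.mem_filter] at hT
      obtain ⟨⟨_, hT1, hT2⟩, hj⟩ := hT
      rw [Finset.mem_filter]
      refine ⟨Finset.mem_univ T, hT1, hT2, ?_⟩
      have hlt : #(cutF G T) / s < 2 ^ (j+1) := by
        rw [← hj]
        exact Nat.lt_pow_succ_log_self (by norm_num) _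
      have hlt2 : #(cutF G T) < 2 ^ (j+1) * s := (Nat.div_lt_iff_lt_mul hs_pos).1 hlt
      calc #(cutF G T) ≤ 2 ^ (j+1) * s := le_of_lt hlt2
        _ ≤ 2 ^ (j+2) * s := Nat.mul_le_mul_right s (Nat.pow_le_pow_right (by norm_num) (by omega))
    calc (#(Sfin.filter (fun T => Nat.log 2 (#(cutF G T) / s) = j)) : ℝ)
        ≤ (#(univ.filter (fun T : Finset (Fin n) =>
            T.Nonempty ∧ T ≠ univ ∧ #(cutF G T) ≤ 2 ^ (j+2) * s)) : ℝ) := by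
          exact_mod_cast Finset.card_le_card hsub
      _ ≤ (n:ℝ) ^ (7 * 2 ^ (j+2)) :=
          cut_count G (2 ^ (j+2)) (2 ^ (j+2) * s) s Nat.one_le_two_pow hs_pos le_rfl hn hcut_lb
  -- numeric: exp(-32 L) ≤ 1/80
  have hnR : (0:ℝ) < n := by positivity
  have hexpL : Real.exp (Real.log n) = (n:ℝ) := Real.exp_log hnR
  have hq80 : Real.exp (-(32 * Real.log n)) ≤ 1/80 := by
    have hlog2 : Real.log 2 ≤ Real.log n := Real.log_le_log (by norm_num) (by exact_mod_cast hn)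
    have h1 : Real.exp (-(32 * Real.log n)) ≤ Real.exp (-(32 * Real.log 2)) := by
      apply Real.exp_le_exp.2
      nlinarith
    have h2 : (32:ℝ) * Real.log 2 = Real.log (2 ^ (32:ℕ)) := by
      rw [Real.log_pow]
      norm_num
    have h3 : Real.exp (-(32 * Real.log 2)) = ((2:ℝ) ^ (32:ℕ))⁻¹ := by
      rw [h2, Real.exp_neg, Real.exp_log (by positivity)]
    calc Real.exp (-(32 * Real.log n)) ≤ Real.exp (-(32 * Real.log 2)) := h1
      _ = ((2:ℝ) ^ (32:ℕ))⁻¹ := h3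
      _ ≤ 1/80 := by norm_num
  have hperj : ∀ j : ℕ,
      (n:ℝ) ^ (7 * 2 ^ (j+2)) * (2 * (m.choose h) * Real.exp (-(60 * Real.log n) * ((2:ℝ) ^ j)))
        ≤ 2 * (m.choose h) * (1/80) ^ (j+1) := by
    intro j
    have hpow_eq : (n:ℝ) ^ (7 * 2 ^ (j+2)) = Real.exp ((7 * 2 ^ (j+2) : ℕ) * Real.log n) := by
      rw [Real.exp_nat_mul, hexpL]
    have hcomb : (n:ℝ) ^ (7 * 2 ^ (j+2)) * Real.exp (-(60 * Real.log n) * ((2:ℝ) ^ j))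
        = Real.exp ((7 * 2 ^ (j+2) : ℕ) * Real.log n - 60 * Real.log n * 2 ^ j) := by
      rw [hpow_eq, ← Real.exp_add]
      ring_nf
    have hexp_arg : ((7 * 2 ^ (j+2) : ℕ) : ℝ) * Real.log n - 60 * Real.log n * 2 ^ j
        = -(32 * Real.log n) * 2 ^ j := by
      push_cast
      ring
    have h2j : (j+1 : ℝ) ≤ (2:ℝ) ^ j := by
      exact_mod_cast Nat.lt_two_pow_self (n := j)
    have hstep2 : Real.exp (-(32 * Real.log n) * 2 ^ j) ≤ (1/80 : ℝ) ^ (j+1) := by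
      have he : Real.exp (-(32 * Real.log n) * 2 ^ j) ≤ Real.exp (-(32 * Real.log n) * (j+1)) := by
        apply Real.exp_le_exp.2
        nlinarith [mul_le_mul_of_nonneg_left h2j (show (0:ℝ) ≤ 32 * Real.log n by positivity)]
      calc Real.exp (-(32 * Real.log n) * 2 ^ j)
          ≤ Real.exp (-(32 * Real.log n) * (j+1)) := he
        _ = (Real.exp (-(32 * Real.log n))) ^ (j+1) := by
            rw [← Real.exp_nat_mul]
            congr 1
            push_cast
            ring
        _ ≤ (1/80 : ℝ) ^ (j+1) := pow_le_pow_left₀ (Real.exp_pos _).le hq80 (j+1)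
    calc (n:ℝ) ^ (7 * 2 ^ (j+2)) * (2 * (m.choose h) * Real.exp (-(60 * Real.log n) * ((2:ℝ) ^ j)))
        = 2 * (m.choose h) * ((n:ℝ) ^ (7 * 2 ^ (j+2)) * Real.exp (-(60 * Real.log n) * ((2:ℝ) ^ j))) := by
          ring
      _ = 2 * (m.choose h) * Real.exp (-(32 * Real.log n) * 2 ^ j) := by
          rw [hcomb, hexp_arg]
      _ ≤ 2 * (m.choose h) * (1/80) ^ (j+1) := by
          apply mul_le_mul_of_nonneg_left hstep2 (by positivity)
  have hsum_bound : ∑ T ∈ Sfin,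
      (2:ℝ) * (m.choose h) *
        Real.exp (-(60 * Real.log n) * ((2 ^ (Nat.log 2 (#(cutF G T) / s)) : ℕ) : ℝ))
      ≤ (m.choose h : ℝ) / 10 := by
    have hmaps : ∀ T ∈ Sfin, Nat.log 2 (#(cutF G T) / s) ∈ Finset.range (m+1) := by
      intro T _
      rw [Finset.mem_range]
      have h1 : Nat.log 2 (#(cutF G T) / s) ≤ #(cutF G T) / s := Nat.log_le_self _ _
      have h2 : #(cutF G T) / s ≤ #(cutF G T) := Nat.div_le_self _ _
      have h3 : #(cutF G T) ≤ m := by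
        rw [hmE]
        exact Finset.card_le_card (Finset.filter_subset _ _)
      omega
    rw [← Finset.sum_fiberwise_of_maps_to hmaps]
    have hinner : ∀ j ∈ Finset.range (m+1),
        ∑ T ∈ Sfin.filter (fun T => Nat.log 2 (#(cutF G T) / s) = j),
          (2:ℝ) * (m.choose h) *
            Real.exp (-(60 * Real.log n) * ((2 ^ (Nat.log 2 (#(cutF G T) / s)) : ℕ) : ℝ))
        ≤ 2 * (m.choose h) * (1/80) ^ (j+1) := by
      intro j _
      have hcongr : ∀ T ∈ Sfin.filter (fun T => Nat.log 2 (#(cutF G T) / s) = j),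
          (2:ℝ) * (m.choose h) *
            Real.exp (-(60 * Real.log n) * ((2 ^ (Nat.log 2 (#(cutF G T) / s)) : ℕ) : ℝ))
          = 2 * (m.choose h) * Real.exp (-(60 * Real.log n) * ((2:ℝ) ^ j)) := by
        intro T hT
        rw [Finset.mem_filter] at hT
        rw [hT.2]
        norm_num
      rw [Finset.sum_congr rfl hcongr, Finset.sum_const, nsmul_eq_mul]
      calc (#(Sfin.filter (fun T => Nat.log 2 (#(cutF G T) / s) = j)) : ℝ)
            * (2 * (m.choose h) * Real.exp (-(60 * Real.log n) * ((2:ℝ) ^ j)))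
          ≤ (n:ℝ) ^ (7 * 2 ^ (j+2))
            * (2 * (m.choose h) * Real.exp (-(60 * Real.log n) * ((2:ℝ) ^ j))) := by
            apply mul_le_mul_of_nonneg_right (hfib_count j) (by positivity)
        _ ≤ 2 * (m.choose h) * (1/80) ^ (j+1) := hperj j
    calc ∑ j ∈ Finset.range (m+1), ∑ T ∈ Sfin.filter (fun T => Nat.log 2 (#(cutF G T) / s) = j),
          (2:ℝ) * (m.choose h) *
            Real.exp (-(60 * Real.log n) * ((2 ^ (Nat.log 2 (#(cutF G T) / s)) : ℕ) : ℝ))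
        ≤ ∑ j ∈ Finset.range (m+1), 2 * ((m.choose h):ℝ) * (1/80) ^ (j+1) :=
          Finset.sum_le_sum hinner
      _ = 2 * ((m.choose h):ℝ) * (1/80) * ∑ j ∈ Finset.range (m+1), (1/80 : ℝ) ^ j := by
          rw [Finset.mul_sum]
          apply Finset.sum_congr rfl
          intro j _
          rw [pow_succ]
          ring
      _ ≤ 2 * ((m.choose h):ℝ) * (1/80) * (80/79) := by
          apply mul_le_mul_of_nonneg_left _ (by positivity)
          have hgeom := geom_sum_eq (by norm_num : (1/80:ℝ) ≠ 1) (m+1)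
          rw [hgeom]
          have hp : (0:ℝ) < (1/80:ℝ) ^ (m+1) := by positivity
          rw [div_le_iff_of_neg (by norm_num : (1/80:ℝ) - 1 < 0)]
          nlinarith
      _ ≤ (m.choose h : ℝ) / 10 := by
          nlinarith [hchR]
  -- union bound over bad H
  classical
  set Bp := fun (T : Finset (Fin n)) (H : Finset (Sym2 (Fin n))) =>
      ((#(H ∩ cutF G T)) : ℝ) < (h:ℝ) * #(cutF G T) / #G.edgeFinset / 1.1 ∨
        1.1 * ((h:ℝ) * #(cutF G T) / #G.edgeFinset) < ((#(H ∩ cutF G T)) : ℝ) with hBp_def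
  set goodH := fun H : Finset (Sym2 (Fin n)) =>
      ∀ T : Finset (Fin n), T.Nonempty → T ≠ univ → ¬ Bp T H with hgoodH_def
  have hcover : P.filter (fun H => ¬ goodH H) ⊆ Sfin.biUnion (fun T => P.filter (Bp T)) := by
    intro H hH
    rw [Finset.mem_filter] at hH
    obtain ⟨hHP, hbadH⟩ := hH
    simp only [hgoodH_def] at hbadH
    push_neg at hbadH
    obtain ⟨T, hT1, hT2, hBT⟩ := hbadH
    apply Finset.mem_biUnion.2
    refine ⟨T, ?_, Finset.mem_filter.2 ⟨hHP, hBT⟩⟩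
    rw [hSfin_def, Finset.mem_filter]
    exact ⟨Finset.mem_univ T, hT1, hT2⟩
  have hbadcard : (#(P.filter (fun H => ¬ goodH H)) : ℝ) ≤ (m.choose h : ℝ) / 10 := by
    calc (#(P.filter (fun H => ¬ goodH H)) : ℝ)
        ≤ (#(Sfin.biUnion (fun T => P.filter (Bp T))) : ℝ) := by
          exact_mod_cast Finset.card_le_card hcover
      _ ≤ ∑ T ∈ Sfin, (#(P.filter (Bp T)) : ℝ) := by
          exact_mod_cast Finset.card_biUnion_le
      _ ≤ ∑ T ∈ Sfin, (2:ℝ) * (m.choose h) *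
            Real.exp (-(60 * Real.log n) * ((2 ^ (Nat.log 2 (#(cutF G T) / s)) : ℕ) : ℝ)) :=
          Finset.sum_le_sum hperT
      _ ≤ (m.choose h : ℝ) / 10 := hsum_bound
  have hgoodcard : (9:ℝ)/10 * (m.choose h) ≤ (#(P.filter goodH) : ℝ) := by
    have hsplitc := Finset.card_filter_add_card_filter_not (s := P) (p := goodH)
    rw [hPcard] at hsplitc
    have h1 : (#(P.filter goodH) : ℝ) + (#(P.filter (fun H => ¬ goodH H)) : ℝ) = (m.choose h : ℝ) := by
      exact_mod_cast hsplitc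
    linarith
  -- identify the set with the filtered finset
  have hseteq : {H : Finset (Sym2 (Fin n)) | ↑H ⊆ G.edgeSet ∧ H.card = h ∧
      ∀ S : Set (Fin n), S.Nonempty → Sᶜ.Nonempty →
        ((cutEdges G S).ncard : ℝ) / 1.1
            ≤ ((m : ℝ) / (h : ℝ)) * (((H : Set (Sym2 (Fin n))) ∩ cutEdges G S).ncard : ℝ) ∧
        ((m : ℝ) / (h : ℝ)) * (((H : Set (Sym2 (Fin n))) ∩ cutEdges G S).ncard : ℝ)
            ≤ 1.1 * ((cutEdges G S).ncard : ℝ)}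
      = ↑(P.filter goodH) := by
    ext H
    simp only [Set.mem_setOf_eq, Finset.coe_filter, Finset.mem_coe]
    constructor
    · rintro ⟨hsub, hcard, hforall⟩
      have hHP : H ∈ P := by
        rw [hP_def, Finset.mem_powersetCard]
        refine ⟨?_, hcard⟩
        rw [← Finset.coe_subset, SimpleGraph.coe_edgeFinset]
        exact hsub
      refine ⟨hHP, ?_⟩
      simp only [hgoodH_def]
      intro T hT1 hT2
      have hx : ∃ x, x ∉ T := by
        by_contra hall
        push_neg at hall
        exact hT2 (Finset.eq_univ_iff_forall.2 hall)
      obtain ⟨x, hx⟩ := hx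
      have hspec := hforall ↑T (by exact_mod_cast hT1) ⟨x, by simp [hx]⟩
      rw [cutEdges_coe, Set.ncard_coe_finset, ← Finset.coe_inter, Set.ncard_coe_finset] at hspec
      have htr := (tail_iff (m:ℝ) (h:ℝ) (#(cutF G T)) (#(H ∩ cutF G T)) hmR hhR).1 hspec
      simp only [hBp_def, hEmR]
      rintro (hlt | hgt)
      · linarith [htr.1]
      · linarith [htr.2]
    · rintro ⟨hHP, hgood⟩
      have hHP' := hHP
      rw [hP_def, Finset.mem_powersetCard] at hHP'
      refine ⟨?_, hHP'.2, ?_⟩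
      · rw [← SimpleGraph.coe_edgeFinset]
        exact Finset.coe_subset.2 hHP'.1
      · intro S hS1 hS2
        have hcoe : (↑S.toFinset : Set (Fin n)) = S := Set.coe_toFinset S
        have hT1 : S.toFinset.Nonempty := Set.toFinset_nonempty.2 hS1
        have hT2 : S.toFinset ≠ univ := by
          intro habs
          obtain ⟨y, hy⟩ := hS2
          apply hy
          rw [← hcoe, habs]
          exact Finset.mem_coe.2 (Finset.mem_univ y)
        have hb := hgood S.toFinset hT1 hT2
        simp only [hBp_def] at hb
        push_neg at hb
        simp only [hEmR] at hb
        have htr := (tail_iff (m:ℝ) (h:ℝ) (#(cutF G S.toFinset)) (#(H ∩ cutF G S.toFinset))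
          hmR hhR).2 ⟨hb.1, hb.2⟩
        have hEq : cutEdges G S = ↑(cutF G S.toFinset) := by rw [← cutEdges_coe, hcoe]
        rw [hEq, Set.ncard_coe_finset, ← Finset.coe_inter, Set.ncard_coe_finset]
        exact htr
  rw [hseteq, Set.ncard_coe_finset, le_div_iff₀ hchR]
  linarith [hgoodcard]

end Final
end

section
/- There exists an absolute constant C > 0 such that every simple undirected graph G on n ≥ 2 vertices admits a family 𝒞 of cycles of G that are pairwise edge-disjoint, each cycle having length at most C·(log n)², such that the number of edges of G not contained in any cycle of 𝒞 is at most C·n·log n. -/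
open SimpleGraph Finset

variable {V : Type*} [DecidableEq V] {G : SimpleGraph V}

/-- Build a walk from a function with adjacent consecutive values. -/
lemma walk_of_fn : ∀ (m : ℕ) (p : Fin (m+1) → V),
    (∀ i : Fin m, G.Adj (p i.castSucc) (p i.succ)) →
    ∃ w : G.Walk (p 0) (p (Fin.last m)), w.support = List.ofFn p ∧
      w.edges = List.ofFn (fun i : Fin m => s(p i.castSucc, p i.succ)) ∧ w.length = m := by
  intro m
  induction m with
  | zero =>
    intro p _
    exact ⟨SimpleGraph.Walk.nil, by simp [List.ofFn_succ], by simp, by simp⟩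
  | succ m ih =>
    intro p hp
    set q : Fin (m+1) → V := fun i => p i.succ with hq
    have hq' : ∀ i : Fin m, G.Adj (q i.castSucc) (q i.succ) := by
      intro i
      have := hp i.succ
      simpa [hq] using hp i.succ
    obtain ⟨w', hs, he, hl⟩ := ih q hq'
    have h0 : G.Adj (p 0) (q 0) := by simpa [hq] using hp 0
    refine ⟨(SimpleGraph.Walk.cons h0 w').copy rfl (congrArg p (Fin.succ_last m)), ?_, ?_, ?_⟩
    · rw [SimpleGraph.Walk.support_copy, SimpleGraph.Walk.support_cons, hs]
      exact (List.ofFn_succ (f := p)).symm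
    · rw [SimpleGraph.Walk.edges_copy, SimpleGraph.Walk.edges_cons, he, List.ofFn_succ
        (f := fun i : Fin (m+1) => s(p i.castSucc, p i.succ))]
      simp [hq]
    · rw [SimpleGraph.Walk.length_copy, SimpleGraph.Walk.length_cons, hl]

set_option maxHeartbeats 1000000

/-- A chord from the endpoint of a path back to an early vertex yields a short cycle. -/
lemma chord_cycle {i : ℕ} (p : Fin (i+1) → V) (hinj : Function.Injective p)
    (hp : ∀ t : Fin i, G.Adj (p t.castSucc) (p t.succ))
    (j : Fin (i+1)) (hj : j.val + 1 < i) (hadj : G.Adj (p (Fin.last i)) (p j)) :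
    ∃ (u : V) (c : G.Walk u u), c.IsCycle ∧ c.length ≤ i + 1 := by
  set d := i - j.val with hd
  have hdpos : 0 < d := by omega
  set q : Fin (d+1) → V := fun t => p ⟨j.val + t.val, by omega⟩ with hqdef
  have hq : ∀ t : Fin d, G.Adj (q t.castSucc) (q t.succ) := by
    intro t
    have ht : j.val + t.val < i := by omega
    have := hp ⟨j.val + t.val, ht⟩
    convert this using 2 <;> apply Fin.ext <;> simp [hqdef, Fin.castSucc, Fin.succ] <;> omega
  obtain ⟨w, hs, he, hl⟩ := walk_of_fn (G := G) d q hq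
  have hq0 : q 0 = p j := by
    simp only [hqdef]; exact congrArg p (Fin.ext (by simp))
  have hqlast : q (Fin.last d) = p (Fin.last i) := by
    simp only [hqdef]; exact congrArg p (Fin.ext (by simp only [Fin.val_last]; omega))
  have hqinj : Function.Injective q := by
    intro a b hab
    have := hinj hab
    have : j.val + a.val = j.val + b.val := congrArg Fin.val this
    exact Fin.ext (by omega)
  have hwpath : w.IsPath := by
    rw [SimpleGraph.Walk.isPath_def, hs]
    exact List.nodup_ofFn.mpr hqinj
  set w' := w.copy hq0 hqlast with hw'
  refine ⟨p (Fin.last i), SimpleGraph.Walk.cons hadj w', ?_, ?_⟩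
  · rw [SimpleGraph.Walk.cons_isCycle_iff]
    constructor
    · rw [hw', SimpleGraph.Walk.isPath_copy]; exact hwpath
    · rw [hw', SimpleGraph.Walk.edges_copy, he]
      intro hmem
      rw [List.mem_ofFn] at hmem
      obtain ⟨t, ht⟩ := hmem
      rw [Sym2.eq_iff] at ht
      rcases ht with ⟨h1, h2⟩ | ⟨h1, h2⟩
      · have := congrArg Fin.val (hinj h2)
        simp [hqdef, Fin.succ] at this
      · have e1 := congrArg Fin.val (hinj h1)
        have e2 := congrArg Fin.val (hinj h2)
        simp [hqdef, Fin.castSucc, Fin.succ, Fin.last] at e1 e2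
        omega
  · rw [SimpleGraph.Walk.length_cons, hw', SimpleGraph.Walk.length_copy, hl]
    omega

/-- Two distinct paths between the same endpoints yield a cycle of bounded length. -/
lemma two_paths_cycle {u v : V} (w w' : G.Walk u v) (hw : w.IsPath) (hw' : w'.IsPath)
    (hne : w ≠ w') :
    ∃ (a : V) (c : G.Walk a a), c.IsCycle ∧ c.length ≤ w.length + w'.length := by
  classical
  set Hs : Set (Sym2 V) := {e | e ∈ w.edges ∨ e ∈ w'.edges} with hHs
  set H : SimpleGraph V := SimpleGraph.fromEdgeSet Hs with hH
  have hsub : Hs ⊆ G.edgeSet := by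
    rintro e (he | he)
    · exact w.edges_subset_edgeSet he
    · exact w'.edges_subset_edgeSet he
  have hHG : H ≤ G := by
    intro a b hab
    rw [hH, SimpleGraph.fromEdgeSet_adj] at hab
    exact (SimpleGraph.mem_edgeSet G).mp (hsub hab.1)
  have hmem : ∀ (ww : G.Walk u v), (∀ e ∈ ww.edges, e ∈ Hs) → ∀ e ∈ ww.edges, e ∈ H.edgeSet := by
    intro ww hws e he
    rw [hH, SimpleGraph.edgeSet_fromEdgeSet]
    exact ⟨hws e he, G.not_isDiag_of_mem_edgeSet (ww.edges_subset_edgeSet he)⟩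
  have hmw : ∀ e ∈ w.edges, e ∈ H.edgeSet := hmem w (fun e he => Or.inl he)
  have hmw' : ∀ e ∈ w'.edges, e ∈ H.edgeSet := hmem w' (fun e he => Or.inr he)
  set tw := w.transfer H hmw with htw
  set tw' := w'.transfer H hmw' with htw'
  have hnacyc : ¬ H.IsAcyclic := by
    intro hacyc
    have := SimpleGraph.isAcyclic_iff_path_unique.mp hacyc
      ⟨tw, hw.transfer hmw⟩ ⟨tw', hw'.transfer hmw'⟩
    apply hne
    have h1 : tw = tw' := congrArg Subtype.val this
    have h2 := congrArg (fun (x : H.Walk u v) => x.transfer G (by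
      intro e he
      exact SimpleGraph.edgeSet_mono hHG ((SimpleGraph.Walk.edges_subset_edgeSet x) he))) h1
    simpa [htw, htw', SimpleGraph.Walk.transfer_transfer, SimpleGraph.Walk.transfer_self] using h2
  rw [SimpleGraph.IsAcyclic] at hnacyc
  push_neg at hnacyc
  obtain ⟨a, c, hc⟩ := hnacyc
  refine ⟨a, c.mapLe hHG, hc.mapLe hHG, ?_⟩
  have hlen : (c.mapLe hHG).length = c.length := SimpleGraph.Walk.length_map _ _
  rw [hlen]
  have hnodup : c.edges.Nodup := hc.isTrail.edges_nodup
  have hsub2 : c.edges.toFinset ⊆ (w.edges ++ w'.edges).toFinset := by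
    intro e he
    rw [List.mem_toFinset] at he
    have : e ∈ Hs := by
      have := c.edges_subset_edgeSet he
      rw [hH, SimpleGraph.edgeSet_fromEdgeSet] at this
      exact this.1
    rw [List.mem_toFinset, List.mem_append]
    exact this
  calc c.length = c.edges.length := (SimpleGraph.Walk.length_edges c).symm
    _ = c.edges.toFinset.card := (List.toFinset_card_of_nodup hnodup).symm
    _ ≤ (w.edges ++ w'.edges).toFinset.card := Finset.card_le_card hsub2
    _ ≤ (w.edges ++ w'.edges).length := (w.edges ++ w'.edges).toFinset_card_le
    _ = w.length + w'.length := by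
        rw [List.length_append, SimpleGraph.Walk.length_edges, SimpleGraph.Walk.length_edges]


section Count

variable {n : ℕ} {G : SimpleGraph (Fin n)} [DecidableRel G.Adj]

/-- The finset of "good paths" of length `i` starting at `v`, represented as functions. -/
private def PF (G : SimpleGraph (Fin n)) [DecidableRel G.Adj] (v : Fin n) (i : ℕ) :
    Finset (Fin (i+1) → Fin n) :=
  Finset.univ.filter (fun p => p 0 = v ∧ Function.Injective p ∧
    ∀ t : Fin i, G.Adj (p t.castSucc) (p t.succ))

lemma mem_PF {v : Fin n} {i : ℕ} {p : Fin (i+1) → Fin n} :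
    p ∈ PF G v i ↔ p 0 = v ∧ Function.Injective p ∧
      ∀ t : Fin i, G.Adj (p t.castSucc) (p t.succ) := by
  simp [PF]


lemma PF_growth {v : Fin n} {i : ℕ}
    (hnc : ∀ (u : Fin n) (c : G.Walk u u), c.IsCycle → ¬ c.length ≤ i + 1)
    (h3 : ∀ u, 0 < G.degree u → 3 ≤ G.degree u) (hv : 0 < G.degree v) :
    2 * (PF G v i).card ≤ (PF G v (i+1)).card := by
  classical
  set f : (Fin (i+1) → Fin n) → Finset (Fin (i+2) → Fin n) :=
    fun p => (G.neighborFinset (p (Fin.last i)) \ Finset.univ.image p).image (Fin.snoc p)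
    with hf
  -- the good-neighbor finsets are large
  have hcard : ∀ p ∈ PF G v i,
      2 ≤ (G.neighborFinset (p (Fin.last i)) \ Finset.univ.image p).card := by
    intro p hp
    rw [mem_PF] at hp
    obtain ⟨hp0, hpinj, hpadj⟩ := hp
    set u := p (Fin.last i) with hu
    have hdeg : 3 ≤ G.degree u := by
      apply h3
      rcases Nat.eq_zero_or_pos i with hi | hi
      · subst hi
        have : u = v := by rw [hu, ← hp0]; congr 1
        rwa [this]
      · have ht := hpadj ⟨i - 1, by omega⟩
        have : (⟨i - 1, by omega⟩ : Fin i).succ = Fin.last i := by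
          apply Fin.ext; simp; omega
        rw [this] at ht
        rw [← SimpleGraph.card_neighborFinset_eq_degree]
        refine Finset.card_pos.mpr ⟨p (⟨i - 1, by omega⟩ : Fin i).castSucc, ?_⟩
        rw [SimpleGraph.mem_neighborFinset]
        exact ht.symm
    have hinter : G.neighborFinset u ∩ Finset.univ.image p ⊆
        {p ⟨i - 1, by omega⟩} := by
      intro w hw
      rw [Finset.mem_inter, SimpleGraph.mem_neighborFinset, Finset.mem_image] at hw
      obtain ⟨hadj, j, -, hj⟩ := hw
      subst hj
      rcases Nat.lt_trichotomy (j.val + 1) i with hlt | heq | hgt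
      · exfalso
        obtain ⟨a, c, hc, hlen⟩ := chord_cycle p hpinj hpadj j hlt hadj
        exact hnc a c hc hlen
      · rw [Finset.mem_singleton]
        congr 1
        apply Fin.ext; simp; omega
      · exfalso
        have : j = Fin.last i := by apply Fin.ext; simp at hgt ⊢; omega
        rw [this] at hadj
        exact G.irrefl hadj
    have h1 : (G.neighborFinset u ∩ Finset.univ.image p).card ≤ 1 := by
      calc _ ≤ ({p ⟨i - 1, by omega⟩} : Finset (Fin n)).card := Finset.card_le_card hinter
        _ = 1 := Finset.card_singleton _
    have := Finset.card_sdiff_add_card_inter (G.neighborFinset u) (Finset.univ.image p)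
    rw [SimpleGraph.card_neighborFinset_eq_degree] at this
    omega
  -- each extension is a good path
  have hsub : (PF G v i).biUnion f ⊆ PF G v (i+1) := by
    intro q hq
    rw [Finset.mem_biUnion] at hq
    obtain ⟨p, hp, hq⟩ := hq
    rw [hf] at hq
    simp only [Finset.mem_image, Finset.mem_sdiff, SimpleGraph.mem_neighborFinset] at hq
    obtain ⟨x, ⟨hxadj, hximg⟩, rfl⟩ := hq
    rw [mem_PF] at hp ⊢
    obtain ⟨hp0, hpinj, hpadj⟩ := hp
    have hxnot : ∀ j : Fin (i+1), p j ≠ x := by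
      intro j hj
      exact hximg ⟨j, Finset.mem_univ j, hj⟩
    refine ⟨?_, ?_, ?_⟩
    · rw [show (0 : Fin (i+2)) = Fin.castSucc 0 by simp, Fin.snoc_castSucc]
      exact hp0
    · intro a b hab
      induction a using Fin.lastCases with
      | last =>
        induction b using Fin.lastCases with
        | last => rfl
        | cast b =>
          rw [Fin.snoc_last, Fin.snoc_castSucc] at hab
          exact absurd hab.symm (hxnot b)
      | cast a =>
        induction b using Fin.lastCases with
        | last =>
          rw [Fin.snoc_last, Fin.snoc_castSucc] at hab
          exact absurd hab (hxnot a)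
        | cast b =>
          rw [Fin.snoc_castSucc, Fin.snoc_castSucc] at hab
          rw [hpinj hab]
    · intro t
      induction t using Fin.lastCases with
      | last =>
        rw [Fin.succ_last, Fin.snoc_castSucc, Fin.snoc_last]
        exact hxadj
      | cast t =>
        rw [Fin.succ_castSucc, Fin.snoc_castSucc, Fin.snoc_castSucc]
        exact hpadj t
  -- counting
  have hdisj : ∀ p ∈ PF G v i, ∀ p' ∈ PF G v i, p ≠ p' → Disjoint (f p) (f p') := by
    intro p _ p' _ hne
    rw [Finset.disjoint_left]
    intro q hq hq'
    rw [hf, Finset.mem_image] at hq hq'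
    obtain ⟨x, -, rfl⟩ := hq
    obtain ⟨y, -, hy⟩ := hq'
    apply hne
    funext j
    have := congrFun hy j.castSucc
    rw [Fin.snoc_castSucc, Fin.snoc_castSucc] at this
    exact this.symm
  have himg : ∀ p : Fin (i+1) → Fin n, (f p).card =
      (G.neighborFinset (p (Fin.last i)) \ Finset.univ.image p).card := by
    intro p
    rw [hf]
    apply Finset.card_image_of_injective
    intro x y hxy
    have := congrFun hxy (Fin.last (i+1))
    rwa [Fin.snoc_last, Fin.snoc_last] at this
  calc 2 * (PF G v i).card = ∑ _p ∈ PF G v i, 2 := by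
        rw [Finset.sum_const, smul_eq_mul, mul_comm]
    _ ≤ ∑ p ∈ PF G v i, (f p).card := by
        apply Finset.sum_le_sum
        intro p hp
        rw [himg p]
        exact hcard p hp
    _ = ((PF G v i).biUnion f).card := (Finset.card_biUnion hdisj).symm
    _ ≤ (PF G v (i+1)).card := Finset.card_le_card hsub

lemma exists_short_cycle {v : Fin n} (hn : 1 ≤ n)
    (h3 : ∀ u, 0 < G.degree u → 3 ≤ G.degree u) (hv : 0 < G.degree v) :
    ∃ (u : Fin n) (c : G.Walk u u), c.IsCycle ∧ c.length ≤ 2 * (Nat.log 2 n + 1) := by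
  classical
  set k := Nat.log 2 n + 1 with hk
  by_contra hcon
  push_neg at hcon
  -- growth up to k
  have growth : ∀ i, i < k → 2 * (PF G v i).card ≤ (PF G v (i+1)).card := by
    intro i hi
    apply PF_growth _ h3 hv
    intro u c hc hlen
    exact absurd hlen (by have := hcon u c hc; omega)
  have pow : ∀ i, i ≤ k → 2 ^ i ≤ (PF G v i).card := by
    intro i
    induction i with
    | zero =>
      intro _
      rw [pow_zero]
      refine Finset.card_pos.mpr ⟨fun _ => v, ?_⟩
      rw [mem_PF]
      refine ⟨rfl, fun a b _ => Fin.ext (by omega), fun t => t.elim0⟩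
    | succ i ih =>
      intro hik
      calc 2 ^ (i+1) = 2 * 2 ^ i := by ring
        _ ≤ 2 * (PF G v i).card := by
            have := ih (by omega); omega
        _ ≤ (PF G v (i+1)).card := growth i (by omega)
  -- endpoints are injective
  have hinj : Set.InjOn (fun p : Fin (k+1) → Fin n => p (Fin.last k)) (PF G v k) := by
    intro p hp p' hp' hpe
    by_contra hne
    rw [Finset.mem_coe, mem_PF] at hp hp'
    obtain ⟨hp0, hpinj, hpadj⟩ := hp
    obtain ⟨hp0', hpinj', hpadj'⟩ := hp'
    obtain ⟨w, hws, -, hwl⟩ := walk_of_fn (G := G) k p hpadj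
    obtain ⟨w', hws', -, hwl'⟩ := walk_of_fn (G := G) k p' hpadj'
    have hwpath : w.IsPath := by
      rw [SimpleGraph.Walk.isPath_def, hws]; exact List.nodup_ofFn.mpr hpinj
    have hwpath' : w'.IsPath := by
      rw [SimpleGraph.Walk.isPath_def, hws']; exact List.nodup_ofFn.mpr hpinj'
    have hpe' : p (Fin.last k) = p' (Fin.last k) := hpe
    clear hpe
    have hcne : w.copy hp0 hpe' ≠ w'.copy hp0' rfl := by
      intro hceq
      apply hne
      have : (w.copy hp0 hpe').support = (w'.copy hp0' rfl).support := congrArg _ hceq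
      rw [SimpleGraph.Walk.support_copy, SimpleGraph.Walk.support_copy, hws, hws'] at this
      exact List.ofFn_inj.mp this
    obtain ⟨a, c, hc, hclen⟩ := two_paths_cycle (w.copy hp0 hpe') (w'.copy hp0' rfl)
      (by rw [SimpleGraph.Walk.isPath_copy]; exact hwpath)
      (by rw [SimpleGraph.Walk.isPath_copy]; exact hwpath') hcne
    rw [SimpleGraph.Walk.length_copy, SimpleGraph.Walk.length_copy, hwl, hwl'] at hclen
    have h2 := hcon a c hc
    omega
  have hle : (PF G v k).card ≤ n := by
    have := Finset.card_le_card_of_injOn _ (fun p _ => Finset.mem_univ (p (Fin.last k))) hinj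
    simpa using this
  have hgt : n < 2 ^ k := Nat.lt_pow_succ_log_self (by norm_num) n
  have := pow k le_rfl
  omega

end Count


lemma exists_min_degree_subgraph {n : ℕ} :
    ∀ (p : ℕ) (G : SimpleGraph (Fin n)) (_ : DecidableRel G.Adj),
    (Finset.univ.filter (fun u => 0 < G.degree u)).card ≤ p →
    3 * (Finset.univ.filter (fun u => 0 < G.degree u)).card < G.edgeFinset.card →
    ∃ G' : SimpleGraph (Fin n), G' ≤ G ∧ G'.edgeSet.Nonempty ∧
      ∀ u : Fin n, 0 < (G'.neighborSet u).ncard → 3 ≤ (G'.neighborSet u).ncard := by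
  intro p
  induction p with
  | zero =>
    intro G hdec hple hcount
    exfalso
    rw [Nat.le_zero, Finset.card_eq_zero, Finset.filter_eq_empty_iff] at hple
    have : G.edgeFinset = ∅ := by
      rw [Finset.eq_empty_iff_forall_notMem]
      intro e he
      induction e with
      | h a b =>
        rw [SimpleGraph.mem_edgeFinset, SimpleGraph.mem_edgeSet] at he
        refine hple (Finset.mem_univ a) ?_
        rw [← SimpleGraph.card_neighborFinset_eq_degree]
        exact Finset.card_pos.mpr ⟨b, (SimpleGraph.mem_neighborFinset _ _ _).mpr he⟩
    rw [this] at hcount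
    simp at hcount
  | succ p ih =>
    intro G hdec hple hcount
    by_cases hall : ∀ u : Fin n, 0 < G.degree u → 3 ≤ G.degree u
    · refine ⟨G, le_rfl, ?_, ?_⟩
      · have : 0 < G.edgeFinset.card := by omega
        obtain ⟨e, he⟩ := Finset.card_pos.mp this
        exact ⟨e, SimpleGraph.mem_edgeFinset.mp he⟩
      · intro u
        have hdeg : (G.neighborSet u).ncard = G.degree u := by
          rw [Set.ncard_eq_toFinset_card', ← SimpleGraph.neighborFinset_def,
            SimpleGraph.card_neighborFinset_eq_degree]
        rw [hdeg]
        exact hall u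
    · push_neg at hall
      obtain ⟨u, hu1, hu2⟩ := hall
      set G'' := G.deleteEdges (G.incidenceSet u) with hG''
      letI : DecidableRel G''.Adj := Classical.decRel _
      have hle : G'' ≤ G := SimpleGraph.deleteEdges_le _
      have hef : G''.edgeFinset = G.edgeFinset \ G.incidenceFinset u := by
        ext e
        simp only [SimpleGraph.mem_edgeFinset, Finset.mem_sdiff,
          SimpleGraph.mem_incidenceFinset, hG'', SimpleGraph.edgeSet_deleteEdges,
          Set.mem_diff]
      have huinc : G.incidenceFinset u ⊆ G.edgeFinset := by
        intro e he
        rw [SimpleGraph.mem_incidenceFinset] at he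
        exact SimpleGraph.mem_edgeFinset.mpr he.1
      have hcard'' : G''.edgeFinset.card = G.edgeFinset.card - G.degree u := by
        rw [hef, Finset.card_sdiff_of_subset huinc, SimpleGraph.card_incidenceFinset_eq_degree]
      -- u is isolated in G''
      have hu0 : G''.degree u = 0 := by
        rw [← SimpleGraph.card_neighborFinset_eq_degree, Finset.card_eq_zero,
          Finset.eq_empty_iff_forall_notMem]
        intro w hw
        rw [SimpleGraph.mem_neighborFinset, hG'', SimpleGraph.deleteEdges_adj] at hw
        exact hw.2 ⟨(SimpleGraph.mem_edgeSet G).mpr hw.1, Sym2.mem_mk_left u w⟩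
      have hmono : ∀ w, 0 < G''.degree w → 0 < G.degree w := by
        intro w hw
        rw [← SimpleGraph.card_neighborFinset_eq_degree] at hw ⊢
        obtain ⟨x, hx⟩ := Finset.card_pos.mp hw
        refine Finset.card_pos.mpr ⟨x, ?_⟩
        rw [SimpleGraph.mem_neighborFinset] at hx ⊢
        exact hle hx
      have hsubset : Finset.univ.filter (fun w => 0 < G''.degree w) ⊆
          (Finset.univ.filter (fun w => 0 < G.degree w)).erase u := by
        intro w hw
        rw [Finset.mem_filter] at hw
        rw [Finset.mem_erase, Finset.mem_filter]
        refine ⟨?_, Finset.mem_univ w, hmono w hw.2⟩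
        rintro rfl
        omega
      have humem : u ∈ Finset.univ.filter (fun w => 0 < G.degree w) :=
        Finset.mem_filter.mpr ⟨Finset.mem_univ u, hu1⟩
      have hcard2 : (Finset.univ.filter (fun w => 0 < G''.degree w)).card ≤
          (Finset.univ.filter (fun w => 0 < G.degree w)).card - 1 := by
        calc _ ≤ ((Finset.univ.filter (fun w => 0 < G.degree w)).erase u).card :=
              Finset.card_le_card hsubset
          _ = _ := by rw [Finset.card_erase_of_mem humem]
      have hc1 : 1 ≤ (Finset.univ.filter (fun w => 0 < G.degree w)).card :=
        Finset.card_pos.mpr ⟨u, humem⟩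
      obtain ⟨G', h1, h2, h3⟩ := ih G'' (Classical.decRel _) (by omega) (by omega)
      exact ⟨G', h1.trans hle, h2, h3⟩


lemma edges_mapLe {G G' : SimpleGraph V} (h : G ≤ G') {u v : V} (p : G.Walk u v) :
    (p.mapLe h).edges = p.edges := by
  have h1 : Sym2.map ⇑(SimpleGraph.Hom.ofLE h) = id := by
    funext e
    induction e with
    | h x y => simp [SimpleGraph.Hom.ofLE_apply]
  show (p.map _).edges = p.edges
  rw [SimpleGraph.Walk.edges_map, h1, List.map_id]

lemma decomp {n : ℕ} (hn : 1 ≤ n) :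
    ∀ (m : ℕ) (G : SimpleGraph (Fin n)) (_ : DecidableRel G.Adj), G.edgeFinset.card ≤ m →
    ∃ L : List ((v : Fin n) × G.Walk v v),
      (∀ c ∈ L, c.2.IsCycle ∧ c.2.length ≤ 2 * (Nat.log 2 n + 1)) ∧
      List.Pairwise (fun c c' => ∀ e ∈ c.2.edges, e ∉ c'.2.edges) L ∧
      (G.edgeFinset.filter (fun e => ∀ c ∈ L, e ∉ c.2.edges)).card ≤ 3 * n := by
  intro m
  induction m with
  | zero =>
    intro G hdec hm
    refine ⟨[], by simp, by simp, ?_⟩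
    calc (G.edgeFinset.filter _).card ≤ G.edgeFinset.card := Finset.card_filter_le _ _
      _ ≤ 3 * n := by omega
  | succ m ih =>
    intro G hdec hm
    by_cases hsmall : G.edgeFinset.card ≤ 3 * n
    · refine ⟨[], by simp, by simp, ?_⟩
      calc (G.edgeFinset.filter _).card ≤ G.edgeFinset.card := Finset.card_filter_le _ _
        _ ≤ 3 * n := hsmall
    · push_neg at hsmall
      have hposcard : (Finset.univ.filter (fun u => 0 < G.degree u)).card ≤ n := by
        calc _ ≤ (Finset.univ : Finset (Fin n)).card := Finset.card_filter_le _ _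
          _ = n := by simp
      obtain ⟨G', hG'le, ⟨e0, he0⟩, hmin⟩ := exists_min_degree_subgraph
        (Finset.univ.filter (fun u => 0 < G.degree u)).card G hdec le_rfl (by omega)
      letI : DecidableRel G'.Adj := Classical.decRel _
      have hncard : ∀ u : Fin n, (G'.neighborSet u).ncard = G'.degree u := by
        intro u
        rw [Set.ncard_eq_toFinset_card', ← SimpleGraph.neighborFinset_def,
          SimpleGraph.card_neighborFinset_eq_degree]
      have hdeg : ∀ u, 0 < G'.degree u → 3 ≤ G'.degree u := by
        intro u
        rw [← hncard u]
        exact hmin u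
      obtain ⟨a, b, hab⟩ : ∃ a b, G'.Adj a b := by
        induction e0 with
        | h a b => exact ⟨a, b, he0⟩
      have hv : 0 < G'.degree a := by
        rw [← SimpleGraph.card_neighborFinset_eq_degree]
        exact Finset.card_pos.mpr ⟨b, (SimpleGraph.mem_neighborFinset _ _ _).mpr hab⟩
      obtain ⟨u, c', hc', hlen'⟩ := exists_short_cycle hn hdeg hv
      set c : G.Walk u u := c'.mapLe hG'le with hcdef
      have hc : c.IsCycle := hc'.mapLe hG'le
      have hlc : c.length = c'.length := SimpleGraph.Walk.length_map _ _
      have hec : c.edges = c'.edges := edges_mapLe hG'le c'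
      set G'' := G.deleteEdges {e | e ∈ c.edges} with hG''def
      letI : DecidableRel G''.Adj := Classical.decRel _
      have hG''le : G'' ≤ G := SimpleGraph.deleteEdges_le _
      have hsubE : G''.edgeFinset ⊆ G.edgeFinset := by
        intro e he
        rw [SimpleGraph.mem_edgeFinset] at he ⊢
        rw [hG''def, SimpleGraph.edgeSet_deleteEdges] at he
        exact he.1
      have hcedne : c.edges ≠ [] := by
        intro hnil
        have h3 := hc.three_le_length
        have := SimpleGraph.Walk.length_edges c
        rw [hnil] at this
        simp at this
        omega
      obtain ⟨efst, hefst⟩ : ∃ e, e ∈ c.edges := List.exists_mem_of_ne_nil _ hcedne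
      have hcard'' : G''.edgeFinset.card < G.edgeFinset.card := by
        apply Finset.card_lt_card
        rw [Finset.ssubset_iff_of_subset hsubE]
        refine ⟨efst, SimpleGraph.mem_edgeFinset.mpr (c.edges_subset_edgeSet hefst), ?_⟩
        rw [SimpleGraph.mem_edgeFinset, hG''def, SimpleGraph.edgeSet_deleteEdges]
        exact fun hmem => hmem.2 hefst
      obtain ⟨L'', hL1, hL2, hL3⟩ := ih G'' (Classical.decRel _) (by omega)
      refine ⟨⟨u, c⟩ :: L''.map (fun d => ⟨d.1, d.2.mapLe hG''le⟩), ?_, ?_, ?_⟩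
      · intro d hd
        rcases List.mem_cons.mp hd with rfl | hd
        · exact ⟨hc, by rw [hlc]; exact hlen'⟩
        · rw [List.mem_map] at hd
          obtain ⟨d'', hd'', rfl⟩ := hd
          obtain ⟨h1, h2⟩ := hL1 d'' hd''
          exact ⟨h1.mapLe hG''le, by rw [SimpleGraph.Walk.length_map]; exact h2⟩
      · rw [List.pairwise_cons]
        constructor
        · intro d hd e he
          rw [List.mem_map] at hd
          obtain ⟨d'', hd'', rfl⟩ := hd
          rw [edges_mapLe]
          intro hmem
          have := d''.2.edges_subset_edgeSet hmem
          rw [hG''def, SimpleGraph.edgeSet_deleteEdges] at this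
          exact this.2 he
        · refine List.Pairwise.map _ ?_ hL2
          intro d1 d2 h12 e he
          rw [edges_mapLe] at he ⊢
          exact h12 e he
      · refine le_trans (Finset.card_le_card ?_) hL3
        intro e he
        rw [Finset.mem_filter] at he
        obtain ⟨heG, hall⟩ := he
        have h1 : e ∉ c.edges := hall ⟨u, c⟩ List.mem_cons_self
        rw [Finset.mem_filter]
        refine ⟨?_, ?_⟩
        · rw [SimpleGraph.mem_edgeFinset, hG''def, SimpleGraph.edgeSet_deleteEdges]
          exact ⟨SimpleGraph.mem_edgeFinset.mp heG, h1⟩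
        · intro d hd
          have := hall ⟨d.1, d.2.mapLe hG''le⟩
            (List.mem_cons_of_mem _ (List.mem_map_of_mem hd))
          rwa [edges_mapLe] at this

/-- There is an absolute constant `C > 0` such that every simple graph `G`
on `n ≥ 2` vertices admits a family of pairwise edge-disjoint cycles, each of length at
most `C·(log n)²`, covering all but at most `C·n·log n` edges of `G`. -/
theorem stmt7 :
    ∃ C : ℝ, 0 < C ∧
      ∀ (n : ℕ), 2 ≤ n → ∀ G : SimpleGraph (Fin n),
        ∃ L : List ((v : Fin n) × G.Walk v v),
          (∀ c ∈ L, c.2.IsCycle ∧ (c.2.length : ℝ) ≤ C * (Real.log n) ^ 2) ∧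
          List.Pairwise (fun c c' => ∀ e ∈ c.2.edges, e ∉ c'.2.edges) L ∧
          (({e : Sym2 (Fin n) | e ∈ G.edgeSet ∧ ∀ c ∈ L, e ∉ c.2.edges}.ncard : ℝ))
            ≤ C * (n : ℝ) * Real.log n := by
  refine ⟨100, by norm_num, ?_⟩
  intro n hn G
  classical
  letI : DecidableRel G.Adj := Classical.decRel _
  obtain ⟨L, hL1, hL2, hL3⟩ := decomp (by omega) G.edgeFinset.card G (Classical.decRel _) le_rfl
  have hlog2 : (0.6931 : ℝ) ≤ Real.log 2 := le_of_lt (by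
    have := Real.log_two_gt_d9
    linarith)
  have hn2 : (2 : ℝ) ≤ (n : ℝ) := by exact_mod_cast hn
  have hlogn : Real.log 2 ≤ Real.log n := Real.log_le_log (by norm_num) hn2
  have hlognpos : (0 : ℝ) < Real.log n := by linarith
  refine ⟨L, ?_, hL2, ?_⟩
  · intro c hc
    obtain ⟨h1, h2⟩ := hL1 c hc
    refine ⟨h1, ?_⟩
    set Ln := Nat.log 2 n with hLn
    have hLpos : 1 ≤ Ln := Nat.log_pos (by norm_num) hn
    have hlen4 : c.2.length ≤ 4 * Ln := by omega
    have hpow : (2 : ℝ) ^ Ln ≤ (n : ℝ) := by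
      have := Nat.pow_log_le_self 2 (show n ≠ 0 by omega)
      exact_mod_cast this
    have hLlog : (Ln : ℝ) * Real.log 2 ≤ Real.log n := by
      have := Real.log_le_log (by positivity) hpow
      rwa [Real.log_pow] at this
    have hcast : (c.2.length : ℝ) ≤ 4 * (Ln : ℝ) := by exact_mod_cast hlen4
    nlinarith [sq_nonneg (Real.log n), sq_nonneg ((Ln : ℝ) * Real.log 2 - Real.log n),
      mul_pos hlognpos hlognpos]
  · have hset : {e : Sym2 (Fin n) | e ∈ G.edgeSet ∧ ∀ c ∈ L, e ∉ c.2.edges} =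
        ↑(G.edgeFinset.filter (fun e => ∀ c ∈ L, e ∉ c.2.edges)) := by
      ext e
      simp [SimpleGraph.mem_edgeFinset]
    rw [hset, Set.ncard_coe_finset]
    have hcard : (G.edgeFinset.filter (fun e => ∀ c ∈ L, e ∉ c.2.edges)).card ≤ 3 * n := by
      convert hL3 using 2
    have hcast : ((G.edgeFinset.filter (fun e => ∀ c ∈ L, e ∉ c.2.edges)).card : ℝ) ≤
        3 * (n : ℝ) := by exact_mod_cast hcard
    nlinarith
end
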